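/- arXiv:2008.00215 — 5 statements merged into one kernel-verified Lean document; each statement's English description precedes it below -/
import Mathlib

section
/- Let F be a field, let A be a γ×γ lower triangular Toeplitz matrix over F with first column (a_1, a_2, ..., a_γ), and let α be a nonzero element of F. If A is LT-superregular, then the lower triangular Toeplitz matrix with first column (a_1, α·a_2, α²·a_3, ..., α^{γ-1}·a_γ) is also LT-superregular. -/
/-- A matrix is LT-superregular if every square submatrix (given by strictly
increasing row and column indices) whose diagonal entries all lie in the lower
triangular part (row index ≥ column index) has nonzero determinant. -/
def LTSuperregular {n : ℕ} {R : Type*} [CommRing R] (A : Matrix (Fin n) (Fin n) R) : Prop :=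
  ∀ (k : ℕ) (r c : Fin k → Fin n), StrictMono r → StrictMono c →
    (∀ i, (c i : ℕ) ≤ (r i : ℕ)) → (A.submatrix r c).det ≠ 0

/-- The n×n lower triangular Toeplitz matrix whose first column is a 0, a 1, ... ;
its (i,j) entry is `a (i - j)` when i ≥ j and 0 otherwise. -/
def ltToeplitz (n : ℕ) {R : Type*} [CommRing R] (a : ℕ → R) : Matrix (Fin n) (Fin n) R :=
  Matrix.of fun i j => if (j : ℕ) ≤ (i : ℕ) then a ((i : ℕ) - (j : ℕ)) else 0

theorem stmt_1 {F : Type*} [Field F] (γ : ℕ) (a : ℕ → F) (α : F) (hα : α ≠ 0)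
    (h : LTSuperregular (ltToeplitz γ a)) :
    LTSuperregular (ltToeplitz γ (fun k => α ^ k * a k)) := by
  intro k r c hr hc hrc
  have key : (ltToeplitz γ (fun k => α ^ k * a k)).submatrix r c =
      Matrix.of (fun i j => α ^ (r i : ℕ) *
        ((α⁻¹) ^ (c j : ℕ) * ((ltToeplitz γ a).submatrix r c) i j)) := by
    ext i j
    simp only [Matrix.submatrix_apply, ltToeplitz, Matrix.of_apply]
    by_cases hij : (c j : ℕ) ≤ (r i : ℕ)
    · simp only [hij, if_true]
      rw [pow_sub₀ α hα hij]
      field_simp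
      rw [one_div, inv_pow, mul_comm (α ^ _), mul_assoc, mul_inv_cancel₀ (pow_ne_zero _ hα), mul_one]
    · simp [hij]
  rw [key]
  have h1 : Matrix.det (Matrix.of (fun i j => α ^ (r i : ℕ) *
      ((α⁻¹) ^ (c j : ℕ) * ((ltToeplitz γ a).submatrix r c) i j))) =
      (∏ i, α ^ (r i : ℕ)) *
        Matrix.det (Matrix.of (fun i j => (α⁻¹) ^ (c j : ℕ) *
          ((ltToeplitz γ a).submatrix r c) i j)) := by
    exact Matrix.det_mul_column (fun i => α ^ (r i : ℕ)) _
  have h2 : Matrix.det (Matrix.of (fun i j => (α⁻¹) ^ (c j : ℕ) *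
      ((ltToeplitz γ a).submatrix r c) i j)) =
      (∏ j, (α⁻¹) ^ (c j : ℕ)) * Matrix.det ((ltToeplitz γ a).submatrix r c) := by
    exact Matrix.det_mul_row (fun j => (α⁻¹) ^ (c j : ℕ)) _
  rw [h1, h2]
  have := h k r c hr hc hrc
  exact mul_ne_zero (Finset.prod_ne_zero_iff.2 fun i _ => pow_ne_zero _ hα)
    (mul_ne_zero (Finset.prod_ne_zero_iff.2 fun j _ => pow_ne_zero _ (inv_ne_zero hα)) this)
end

section
/- Let p be a prime with p ≥ 5. The 4×4 lower triangular Toeplitz matrix over F_p with first column (1, 1, a_3, a_4) is LT-superregular if and only if a_3 ∉ {0,1}, and a_4 ∉ {0, a_3, a_3², 2a_3 − 1}. -/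
theorem stmt_5 (p : ℕ) (hp : p.Prime) (h5 : 5 ≤ p) (a3 a4 : ZMod p) :
    LTSuperregular (ltToeplitz 4 (fun k => [1, 1, a3, a4].getD k 0)) ↔
      (a3 ∉ ({0, 1} : Set (ZMod p)) ∧
       a4 ∉ ({0, a3, a3 ^ 2, 2 * a3 - 1} : Set (ZMod p))) := by
  haveI : Fact p.Prime := ⟨hp⟩
  constructor
  · intro H
    have m30 := H 1 ![2] ![0] (by decide) (by decide) (by decide)
    have m40 := H 1 ![3] ![0] (by decide) (by decide) (by decide)
    have m31 := H 2 ![1,2] ![0,1] (by decide) (by decide) (by decide)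
    have m41 := H 2 ![1,3] ![0,1] (by decide) (by decide) (by decide)
    have m42 := H 2 ![2,3] ![0,1] (by decide) (by decide) (by decide)
    have m43 := H 3 ![1,2,3] ![0,1,2] (by decide) (by decide) (by decide)
    simp only [Matrix.det_fin_one, Matrix.det_fin_two, Matrix.det_fin_three,
      Matrix.submatrix_apply, ltToeplitz, Matrix.of_apply] at m30 m40 m31 m41 m42 m43
    norm_num [List.getD, show ((3:Fin 4):ℕ)=3 from rfl, show ((2:Fin 4):ℕ)=2 from rfl, show ((1:Fin 4):ℕ)=1 from rfl, Matrix.cons_val_two, Matrix.tail_cons, Matrix.head_cons] at m30 m40 m31 m41 m42 m43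
    constructor
    · simp only [Set.mem_insert_iff, Set.mem_singleton_iff]
      push_neg
      exact ⟨m30, fun h => m31 (by rw [h]; ring)⟩
    · simp only [Set.mem_insert_iff, Set.mem_singleton_iff]
      push_neg
      refine ⟨m40, fun h => m41 (by rw [h]; ring), fun h => m42 (by rw [h]; ring),
        fun h => m43 (by rw [h]; ring)⟩
  · rintro ⟨h3, h4⟩ k r c hr hc hcr
    simp only [Set.mem_insert_iff, Set.mem_singleton_iff] at h3 h4
    push_neg at h3 h4
    obtain ⟨h30, h31'⟩ := h3
    obtain ⟨h40, h41', h42', h43'⟩ := h4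
    have h31 : a3 - 1 ≠ 0 := sub_ne_zero.mpr h31'
    have h41 : a4 - a3 ≠ 0 := sub_ne_zero.mpr h41'
    have h42 : a4 - a3 ^ 2 ≠ 0 := sub_ne_zero.mpr h42'
    have h43 : a4 - (2 * a3 - 1) ≠ 0 := sub_ne_zero.mpr h43'
    have hk : k ≤ 4 := by
      have := Fintype.card_le_of_injective r hr.injective
      simpa using this
    interval_cases k
    · simp [Matrix.det_fin_zero]
    · -- k = 1
      have l0 := hcr 0
      have b0 := (r 0).isLt
      rw [Matrix.det_fin_one]
      simp only [Matrix.submatrix_apply, ltToeplitz, Matrix.of_apply]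
      obtain ⟨x0, hx0⟩ : ∃ m, m = (r 0 : ℕ) := ⟨_, rfl⟩
      obtain ⟨y0, hy0⟩ : ∃ m, m = (c 0 : ℕ) := ⟨_, rfl⟩
      simp only [← hx0, ← hy0] at l0 b0 ⊢
      interval_cases x0 <;> interval_cases y0 <;>
        norm_num [List.getD] <;>
        (intro hEq; first
          | exact h30 (by linear_combination hEq)
          | exact h31 (by linear_combination hEq)
          | exact h40 (by linear_combination hEq)
          | exact h41 (by linear_combination hEq)
          | exact h42 (by linear_combination hEq)
          | exact h43 (by linear_combination hEq)
          | exact h30 (by linear_combination -hEq)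
          | exact h31 (by linear_combination -hEq)
          | exact h40 (by linear_combination -hEq)
          | exact h41 (by linear_combination -hEq)
          | exact h42 (by linear_combination -hEq)
          | exact h43 (by linear_combination -hEq))
    · -- k = 2
      have e0 : (r 0 : ℕ) < (r 1 : ℕ) := hr (show (0:Fin 2) < 1 by decide)
      have e1 : (c 0 : ℕ) < (c 1 : ℕ) := hc (show (0:Fin 2) < 1 by decide)
      have l0 := hcr 0; have l1 := hcr 1
      have b0 := (r 1).isLt
      rw [Matrix.det_fin_two]
      simp only [Matrix.submatrix_apply, ltToeplitz, Matrix.of_apply]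
      obtain ⟨x0, hx0⟩ : ∃ m, m = (r 0 : ℕ) := ⟨_, rfl⟩
      obtain ⟨x1, hx1⟩ : ∃ m, m = (r 1 : ℕ) := ⟨_, rfl⟩
      obtain ⟨y0, hy0⟩ : ∃ m, m = (c 0 : ℕ) := ⟨_, rfl⟩
      obtain ⟨y1, hy1⟩ : ∃ m, m = (c 1 : ℕ) := ⟨_, rfl⟩
      simp only [← hx0, ← hx1, ← hy0, ← hy1] at e0 e1 l0 l1 b0 ⊢
      interval_cases x1 <;> interval_cases x0 <;> interval_cases y1 <;> interval_cases y0 <;>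
        norm_num [List.getD] <;>
        (intro hEq; first
          | exact h30 (by linear_combination hEq)
          | exact h31 (by linear_combination hEq)
          | exact h40 (by linear_combination hEq)
          | exact h41 (by linear_combination hEq)
          | exact h42 (by linear_combination hEq)
          | exact h43 (by linear_combination hEq)
          | exact h30 (by linear_combination -hEq)
          | exact h31 (by linear_combination -hEq)
          | exact h40 (by linear_combination -hEq)
          | exact h41 (by linear_combination -hEq)
          | exact h42 (by linear_combination -hEq)
          | exact h43 (by linear_combination -hEq))
    · -- k = 3
      have e0 : (r 0 : ℕ) < (r 1 : ℕ) := hr (show (0:Fin 3) < 1 by decide)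
      have e1 : (r 1 : ℕ) < (r 2 : ℕ) := hr (show (1:Fin 3) < 2 by decide)
      have f0 : (c 0 : ℕ) < (c 1 : ℕ) := hc (show (0:Fin 3) < 1 by decide)
      have f1 : (c 1 : ℕ) < (c 2 : ℕ) := hc (show (1:Fin 3) < 2 by decide)
      have l0 := hcr 0; have l1 := hcr 1; have l2 := hcr 2
      have b0 := (r 2).isLt
      rw [Matrix.det_fin_three]
      simp only [Matrix.submatrix_apply, ltToeplitz, Matrix.of_apply]
      obtain ⟨x0, hx0⟩ : ∃ m, m = (r 0 : ℕ) := ⟨_, rfl⟩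
      obtain ⟨x1, hx1⟩ : ∃ m, m = (r 1 : ℕ) := ⟨_, rfl⟩
      obtain ⟨x2, hx2⟩ : ∃ m, m = (r 2 : ℕ) := ⟨_, rfl⟩
      obtain ⟨y0, hy0⟩ : ∃ m, m = (c 0 : ℕ) := ⟨_, rfl⟩
      obtain ⟨y1, hy1⟩ : ∃ m, m = (c 1 : ℕ) := ⟨_, rfl⟩
      obtain ⟨y2, hy2⟩ : ∃ m, m = (c 2 : ℕ) := ⟨_, rfl⟩
      simp only [← hx0, ← hx1, ← hx2, ← hy0, ← hy1, ← hy2] at e0 e1 f0 f1 l0 l1 l2 b0 ⊢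
      interval_cases x2 <;> interval_cases x1 <;> interval_cases x0 <;>
        interval_cases y2 <;> interval_cases y1 <;> interval_cases y0 <;>
        norm_num [List.getD] <;>
        (intro hEq; first
          | exact h30 (by linear_combination hEq)
          | exact h31 (by linear_combination hEq)
          | exact h40 (by linear_combination hEq)
          | exact h41 (by linear_combination hEq)
          | exact h42 (by linear_combination hEq)
          | exact h43 (by linear_combination hEq)
          | exact h30 (by linear_combination -hEq)
          | exact h31 (by linear_combination -hEq)
          | exact h40 (by linear_combination -hEq)
          | exact h41 (by linear_combination -hEq)
          | exact h42 (by linear_combination -hEq)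
          | exact h43 (by linear_combination -hEq))
    · -- k = 4
      have hre : ∀ i : Fin 4, (r i : ℕ) = (i : ℕ) := by
        have e0 : (r 0 : ℕ) < (r 1 : ℕ) := hr (show (0:Fin 4) < 1 by decide)
        have e1 : (r 1 : ℕ) < (r 2 : ℕ) := hr (show (1:Fin 4) < 2 by decide)
        have e2 : (r 2 : ℕ) < (r 3 : ℕ) := hr (show (2:Fin 4) < 3 by decide)
        have b0 := (r 3).isLt
        intro i; fin_cases i <;> simp <;> omega
      have hce : ∀ i : Fin 4, (c i : ℕ) = (i : ℕ) := by
        have e0 : (c 0 : ℕ) < (c 1 : ℕ) := hc (show (0:Fin 4) < 1 by decide)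
        have e1 : (c 1 : ℕ) < (c 2 : ℕ) := hc (show (1:Fin 4) < 2 by decide)
        have e2 : (c 2 : ℕ) < (c 3 : ℕ) := hc (show (2:Fin 4) < 3 by decide)
        have b0 := (c 3).isLt
        intro i; fin_cases i <;> simp <;> omega
      have hrid : r = id := funext fun i => Fin.ext (by rw [hre i]; rfl)
      have hcid : c = id := funext fun i => Fin.ext (by rw [hce i]; rfl)
      rw [hrid, hcid, Matrix.submatrix_id_id]
      rw [Matrix.det_of_lowerTriangular _ (by
        intro i j hij
        simp only [ltToeplitz, Matrix.of_apply]
        rw [if_neg (by exact Nat.not_le.mpr hij)])]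
      rw [Fin.prod_univ_four]
      norm_num [ltToeplitz, List.getD]
end

section
/- Let p be a prime with p ≥ 11. The 5×5 lower triangular Toeplitz matrix over F_p with first column (1, 1, 1/2, 1, −1/2) is LT-superregular. -/
/-- The doubled (integral) matrix. -/
def Bmat : Matrix (Fin 5) (Fin 5) ℤ := ltToeplitz 5 (fun k => [2, 2, 1, 2, -1].getD k 0)

/-- Laplace-expansion determinant, kernel-computable. -/
def detAux : (n : ℕ) → Matrix (Fin n) (Fin n) ℤ → ℤ
  | 0, _ => 1
  | n+1, M => ∑ j : Fin (n+1), (-1)^(j:ℕ) * M 0 j * detAux n (M.submatrix Fin.succ j.succAbove)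

lemma detAux_eq : ∀ n (M : Matrix (Fin n) (Fin n) ℤ), detAux n M = M.det
  | 0, _ => by simp [detAux, Matrix.det_fin_zero]
  | n+1, M => by
      rw [Matrix.det_succ_row_zero]
      simp [detAux, detAux_eq n]

abbrev P (d : ℤ) : Prop := d ≠ 0 ∧ d ∣ (210:ℤ)^6

lemma check1 : ∀ a a' : Fin 5, (a':ℕ) ≤ a →
    P (detAux 1 (Bmat.submatrix ![a] ![a'])) := by decide

lemma check2 : ∀ a b : Fin 5, a < b → ∀ a' b' : Fin 5, a' < b' →
    (a':ℕ) ≤ a → (b':ℕ) ≤ b →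
    P (detAux 2 (Bmat.submatrix ![a,b] ![a',b'])) := by decide

set_option maxRecDepth 40000 in
lemma check3 : ∀ a b : Fin 5, a < b → ∀ c, b < c →
    ∀ a' b' : Fin 5, a' < b' → ∀ c' : Fin 5, b' < c' →
    (a':ℕ) ≤ a → (b':ℕ) ≤ b → (c':ℕ) ≤ c →
    P (detAux 3 (Bmat.submatrix ![a,b,c] ![a',b',c'])) := by decide

set_option maxRecDepth 40000 in
lemma check4 : ∀ a b : Fin 5, a < b → ∀ c, b < c → ∀ d, c < d →
    ∀ a' b' : Fin 5, a' < b' → ∀ c' : Fin 5, b' < c' → ∀ d' : Fin 5, c' < d' →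
    (a':ℕ) ≤ a → (b':ℕ) ≤ b → (c':ℕ) ≤ c → (d':ℕ) ≤ d →
    P (detAux 4 (Bmat.submatrix ![a,b,c,d] ![a',b',c',d'])) := by decide

set_option maxRecDepth 40000 in
lemma check5 : ∀ a b : Fin 5, a < b → ∀ c, b < c → ∀ d, c < d → ∀ e, d < e →
    ∀ a' b' : Fin 5, a' < b' → ∀ c' : Fin 5, b' < c' → ∀ d' : Fin 5, c' < d' → ∀ e' : Fin 5, d' < e' →
    (a':ℕ) ≤ a → (b':ℕ) ≤ b → (c':ℕ) ≤ c → (d':ℕ) ≤ d → (e':ℕ) ≤ e →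
    P (detAux 5 (Bmat.submatrix ![a,b,c,d,e] ![a',b',c',d',e'])) := by decide

lemma key (p : ℕ) (hp : p.Prime) (h11 : 11 ≤ p) (D : ℤ) (h : P D) :
    ((D : ZMod p) ≠ 0) := by
  haveI : NeZero p := ⟨hp.ne_zero⟩
  intro h0
  rw [ZMod.intCast_zmod_eq_zero_iff_dvd] at h0
  have hdvd : (p : ℤ) ∣ (210:ℤ)^6 := h0.trans h.2
  have hdvd' : p ∣ 210^6 := by exact_mod_cast hdvd
  have h210 : p ∣ 210 := hp.dvd_of_dvd_pow hdvd'
  have : (210 : ℕ) = 2 * (3 * (5 * 7)) := by norm_num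
  rw [this] at h210
  rcases (hp.dvd_mul.mp h210) with h' | h'
  · exact absurd (Nat.le_of_dvd (by norm_num) h') (by omega)
  rcases (hp.dvd_mul.mp h') with h'' | h''
  · exact absurd (Nat.le_of_dvd (by norm_num) h'') (by omega)
  rcases (hp.dvd_mul.mp h'') with h3 | h3
  · exact absurd (Nat.le_of_dvd (by norm_num) h3) (by omega)
  · exact absurd (Nat.le_of_dvd (by norm_num) h3) (by omega)

theorem stmt_9 (p : ℕ) (hp : p.Prime) (h11 : 11 ≤ p) :
    LTSuperregular (ltToeplitz 5 (fun k => [1, 1, 2⁻¹, 1, -2⁻¹].getD k (0 : ZMod p))) := by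
  haveI : Fact p.Prime := ⟨hp⟩
  have hp2 : (2 : ZMod p) ≠ 0 := by
    have : ((2:ℕ) : ZMod p) ≠ 0 := by
      rw [Ne, ZMod.natCast_eq_zero_iff]
      intro h
      exact absurd (Nat.le_of_dvd (by norm_num) h) (by omega)
    exact_mod_cast this
  have h2 : (2:ZMod p)⁻¹ * 2 = 1 := inv_mul_cancel₀ hp2
  have hA : (ltToeplitz 5 (fun k => [1, 1, 2⁻¹, 1, -2⁻¹].getD k (0 : ZMod p)))
      = (2:ZMod p)⁻¹ • (Bmat.map (Int.cast : ℤ → ZMod p)) := by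
    funext i j
    fin_cases i <;> fin_cases j <;>
      simp [ltToeplitz, Bmat, Matrix.smul_apply, h2, mul_neg, mul_one, List.getD,
        show ((0:Fin 5):ℕ) = 0 from rfl, show ((1:Fin 5):ℕ) = 1 from rfl,
        show ((2:Fin 5):ℕ) = 2 from rfl, show ((3:Fin 5):ℕ) = 3 from rfl,
        show ((4:Fin 5):ℕ) = 4 from rfl]
  intro k r c hr hc hle
  rw [hA]
  have hk5 : k ≤ 5 := by
    have := Fintype.card_le_of_injective r hr.injective
    simpa using this
  have hsub : ((2:ZMod p)⁻¹ • Bmat.map (Int.cast : ℤ → ZMod p)).submatrix r c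
      = (2:ZMod p)⁻¹ • ((Bmat.submatrix r c).map (Int.cast : ℤ → ZMod p)) := by
    funext i j
    simp [Matrix.submatrix_apply, Matrix.smul_apply, Matrix.map_apply]
  rw [hsub, Matrix.det_smul]
  apply mul_ne_zero
  · exact pow_ne_zero _ (inv_ne_zero hp2)
  have hdet : ((Bmat.submatrix r c).map (Int.cast : ℤ → ZMod p)).det
      = (((Bmat.submatrix r c).det : ℤ) : ZMod p) := by
    rw [show ((Bmat.submatrix r c).map (Int.cast : ℤ → ZMod p))
        = (Int.castRingHom (ZMod p)).mapMatrix (Bmat.submatrix r c) from rfl,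
      ← RingHom.map_det]
    rfl
  rw [hdet, ← detAux_eq]
  apply key p hp h11
  interval_cases k
  · exact ⟨one_ne_zero, one_dvd _⟩
  · have hr' : r = ![r 0] := by funext i; fin_cases i <;> simp
    have hc' : c = ![c 0] := by funext i; fin_cases i <;> simp
    rw [hr', hc']
    exact check1 _ _ (hle 0)
  · have hr' : r = ![r 0, r 1] := by funext i; fin_cases i <;> simp
    have hc' : c = ![c 0, c 1] := by funext i; fin_cases i <;> simp
    rw [hr', hc']
    exact check2 _ _ (hr (by decide)) _ _ (hc (by decide)) (hle 0) (hle 1)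
  · have hr' : r = ![r 0, r 1, r 2] := by funext i; fin_cases i <;> simp
    have hc' : c = ![c 0, c 1, c 2] := by funext i; fin_cases i <;> simp
    rw [hr', hc']
    exact check3 _ _ (hr (by decide)) _ (hr (by decide)) _ _ (hc (by decide)) _
      (hc (by decide)) (hle 0) (hle 1) (hle 2)
  · have hr' : r = ![r 0, r 1, r 2, r 3] := by funext i; fin_cases i <;> simp
    have hc' : c = ![c 0, c 1, c 2, c 3] := by funext i; fin_cases i <;> simp
    rw [hr', hc']
    exact check4 _ _ (hr (by decide)) _ (hr (by decide)) _ (hr (by decide)) _ _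
      (hc (by decide)) _ (hc (by decide)) _ (hc (by decide))
      (hle 0) (hle 1) (hle 2) (hle 3)
  · have hr' : r = ![r 0, r 1, r 2, r 3, r 4] := by funext i; fin_cases i <;> simp
    have hc' : c = ![c 0, c 1, c 2, c 3, c 4] := by funext i; fin_cases i <;> simp
    rw [hr', hc']
    exact check5 _ _ (hr (by decide)) _ (hr (by decide)) _ (hr (by decide)) _ (hr (by decide)) _ _
      (hc (by decide)) _ (hc (by decide)) _ (hc (by decide)) _ (hc (by decide))
      (hle 0) (hle 1) (hle 2) (hle 3) (hle 4)
end

section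
/- Let p be a prime with p ≥ 7. The 5×5 lower triangular Toeplitz matrix over F_p with first column (1, 1, 3/4, 3/8, 1/4) is LT-superregular. -/
def Bz : Matrix (Fin 5) (Fin 5) ℤ :=
  Matrix.of fun i j => if (j : ℕ) ≤ (i : ℕ) then [8,8,6,3,2].getD ((i:ℕ)-(j:ℕ)) 0 else 0

def selFun (s : Finset (Fin 5)) (k : ℕ) : Fin k → Fin 5 :=
  fun i => ((List.finRange 5).filter (· ∈ s)).getD i 0

set_option maxHeartbeats 4000000 in
set_option maxRecDepth 10000 in
lemma key_s11 : ∀ (k : Fin 6) (s t : Finset (Fin 5)), s.card = (k:ℕ) → t.card = (k:ℕ) →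
    (∀ i : Fin (k:ℕ), ((selFun t k i : Fin 5):ℕ) ≤ ((selFun s k i : Fin 5):ℕ)) →
    (Bz.submatrix (selFun s k) (selFun t k)).det ≠ 0 ∧
    (Bz.submatrix (selFun s k) (selFun t k)).det ∣ 491520 := by decide

set_option maxHeartbeats 4000000 in
set_option maxRecDepth 10000 in
lemma selFun_spec : ∀ (k : Fin 6) (s : Finset (Fin 5)), s.card = (k:ℕ) →
    (∀ i : Fin (k:ℕ), selFun s k i ∈ s) ∧ StrictMono (selFun s (k:ℕ)) := by decide

theorem stmt_11 (p : ℕ) (hp : p.Prime) (h7 : 7 ≤ p) :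
    LTSuperregular (ltToeplitz 5 (fun k => [1, 1, 3 * 4⁻¹, 3 * 8⁻¹, 4⁻¹].getD k (0 : ZMod p))) := by
  haveI : Fact p.Prime := ⟨hp⟩
  intro k r c hr hc hrc
  have hk : k ≤ 5 := by
    have := Fintype.card_le_of_injective r hr.injective
    simpa using this
  set kf : Fin 6 := ⟨k, by omega⟩ with hkf
  set s : Finset (Fin 5) := Finset.univ.image r with hsdef
  set t : Finset (Fin 5) := Finset.univ.image c with htdef
  have hs : s.card = (kf : ℕ) := by
    rw [hsdef, Finset.card_image_of_injective _ hr.injective, Finset.card_univ, Fintype.card_fin]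
  have ht : t.card = (kf : ℕ) := by
    rw [htdef, Finset.card_image_of_injective _ hc.injective, Finset.card_univ, Fintype.card_fin]
  obtain ⟨hsmem, hsmono⟩ := selFun_spec kf s hs
  obtain ⟨htmem, htmono⟩ := selFun_spec kf t ht
  have hrs : r = selFun s k :=
    (Finset.orderEmbOfFin_unique hs (fun x => Finset.mem_image_of_mem r (Finset.mem_univ x))
      hr).trans (Finset.orderEmbOfFin_unique hs hsmem hsmono).symm
  have hct : c = selFun t k :=
    (Finset.orderEmbOfFin_unique ht (fun x => Finset.mem_image_of_mem c (Finset.mem_univ x))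
      hc).trans (Finset.orderEmbOfFin_unique ht htmem htmono).symm
  obtain ⟨hne, hdvd⟩ := key_s11 kf s t hs ht (by
    intro i
    have := hrc i
    rwa [hrs, hct] at this)
  -- the matrix over ZMod p is 8⁻¹ • (Bz cast)
  have h2 : (2 : ZMod p) ≠ 0 := by
    have : ((2:ℕ) : ZMod p) ≠ 0 := by
      rw [Ne, ZMod.natCast_eq_zero_iff]
      intro h
      have := Nat.le_of_dvd (by norm_num) h
      omega
    simpa using this
  have h4 : (4 : ZMod p) ≠ 0 := by
    have : (4 : ZMod p) = 2 * 2 := by norm_num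
    rw [this]; exact mul_ne_zero h2 h2
  have h8 : (8 : ZMod p) ≠ 0 := by
    have : (8 : ZMod p) = 2 * 4 := by norm_num
    rw [this]; exact mul_ne_zero h2 h4
  have hA : (ltToeplitz 5 (fun k => [1, 1, 3 * 4⁻¹, 3 * 8⁻¹, 4⁻¹].getD k (0 : ZMod p)))
      = (8⁻¹ : ZMod p) • (Bz.map (Int.cast : ℤ → ZMod p)) := by
    ext ⟨i, hi⟩ ⟨j, hj⟩
    interval_cases i <;> interval_cases j <;>
      simp only [ltToeplitz, Bz, Matrix.smul_apply, Matrix.map_apply, Matrix.of_apply,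
        List.getD, Fin.mk_le_mk, Nat.reduceLeDiff] <;>
      norm_num <;> field_simp <;> norm_num
  rw [hA]
  have hsub : ((8⁻¹ : ZMod p) • (Bz.map (Int.cast : ℤ → ZMod p))).submatrix r c
      = (8⁻¹ : ZMod p) • ((Bz.submatrix r c).map (Int.cast : ℤ → ZMod p)) := by
    ext i j
    simp [Matrix.submatrix_apply, Matrix.smul_apply, Matrix.map_apply]
  rw [hsub, Matrix.det_smul]
  apply mul_ne_zero (pow_ne_zero _ (inv_ne_zero h8))
  have hdet : ((Bz.submatrix r c).map (Int.cast : ℤ → ZMod p)).det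
      = (((Bz.submatrix r c).det : ℤ) : ZMod p) := by
    exact (RingHom.map_det (Int.castRingHom (ZMod p)) (Bz.submatrix r c)).symm
  rw [hdet, Ne, ZMod.intCast_zmod_eq_zero_iff_dvd]
  rw [hrs, hct]
  intro hpd
  have hpd2 : (p:ℤ) ∣ 491520 := dvd_trans hpd hdvd
  have hpn : p ∣ 491520 := by exact_mod_cast hpd2
  have : p ∣ 2^15 * 15 := by norm_num at hpn ⊢; exact hpn
  rcases (Nat.Prime.dvd_mul hp).1 this with h | h
  · have := hp.dvd_of_dvd_pow h
    have := Nat.le_of_dvd (by norm_num) this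
    omega
  · have h15 : p ∣ 3 * 5 := by norm_num at h ⊢; exact h
    rcases (Nat.Prime.dvd_mul hp).1 h15 with h' | h' <;>
      have := Nat.le_of_dvd (by norm_num) h' <;> omega
end

section
/- Over F_17, the 7×7 lower triangular Toeplitz matrix with first column (1, 1, 9, 3, 5, 1, 3) is LT-superregular. -/
set_option maxHeartbeats 4000000

abbrev M7 : Matrix (Fin 7) (Fin 7) (ZMod 17) :=
  ltToeplitz 7 (fun k => [1, 1, 9, 3, 5, 1, 3].getD k (0 : ZMod 17))

def eN (p q : Fin 7) : ℕ := if (q:ℕ) ≤ (p:ℕ) then [1,1,9,3,5,1,3].getD ((p:ℕ)-(q:ℕ)) 0 else 0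

def verif (rl cl : List (Fin 7)) (B : List (List ℕ)) : Bool :=
  (List.range rl.length).all fun i => (List.range rl.length).all fun j =>
    ((List.range rl.length).map fun t =>
      eN (rl.getD i 0) (cl.getD t 0) * (B.getD t []).getD j 0).sum % 17
      == (if i = j then 1 else 0)

def pcond (rl cl : List (Fin 7)) : Bool :=
  cl.length == rl.length &&
    (List.range rl.length).all fun i => decide (((cl.getD i 0 : Fin 7):ℕ) ≤ ((rl.getD i 0 : Fin 7):ℕ))

def tbl0 : List (List (List Nat)) := [[],[],[],[],[],[],[],[],[],[],[],[],[],[],[],[],[],[],[],[],[],[],[],[],[],[],[],[],[],[],[],[],[],[],[],[],[],[],[],[],[],[],[],[],[],[],[],[],[],[],[],[],[],[],[],[],[],[],[],[],[],[],[],[],[],[],[],[],[],[],[],[],[],[],[],[],[],[],[],[],[],[],[],[],[],[],[],[],[],[],[],[],[],[],[],[],[],[],[],[],[],[],[],[],[],[],[],[],[],[],[],[],[],[],[],[],[],[],[],[],[],[],[],[],[],[],[],[]]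
def tbl1 : List (List (List Nat)) := [[],[[1]],[],[],[],[],[],[],[],[],[],[],[],[],[],[],[],[],[],[],[],[],[],[],[],[],[],[],[],[],[],[],[],[],[],[],[],[],[],[],[],[],[],[],[],[],[],[],[],[],[],[],[],[],[],[],[],[],[],[],[],[],[],[],[],[],[],[],[],[],[],[],[],[],[],[],[],[],[],[],[],[],[],[],[],[],[],[],[],[],[],[],[],[],[],[],[],[],[],[],[],[],[],[],[],[],[],[],[],[],[],[],[],[],[],[],[],[],[],[],[],[],[],[],[],[],[],[]]
def tbl2 : List (List (List Nat)) := [[],[[1]],[[1]],[],[],[],[],[],[],[],[],[],[],[],[],[],[],[],[],[],[],[],[],[],[],[],[],[],[],[],[],[],[],[],[],[],[],[],[],[],[],[],[],[],[],[],[],[],[],[],[],[],[],[],[],[],[],[],[],[],[],[],[],[],[],[],[],[],[],[],[],[],[],[],[],[],[],[],[],[],[],[],[],[],[],[],[],[],[],[],[],[],[],[],[],[],[],[],[],[],[],[],[],[],[],[],[],[],[],[],[],[],[],[],[],[],[],[],[],[],[],[],[],[],[],[],[],[]]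
def tbl3 : List (List (List Nat)) := [[],[],[],[[1,0],[16,1]],[],[],[],[],[],[],[],[],[],[],[],[],[],[],[],[],[],[],[],[],[],[],[],[],[],[],[],[],[],[],[],[],[],[],[],[],[],[],[],[],[],[],[],[],[],[],[],[],[],[],[],[],[],[],[],[],[],[],[],[],[],[],[],[],[],[],[],[],[],[],[],[],[],[],[],[],[],[],[],[],[],[],[],[],[],[],[],[],[],[],[],[],[],[],[],[],[],[],[],[],[],[],[],[],[],[],[],[],[],[],[],[],[],[],[],[],[],[],[],[],[],[],[],[]]
def tbl4 : List (List (List Nat)) := [[],[[2]],[[1]],[],[[1]],[],[],[],[],[],[],[],[],[],[],[],[],[],[],[],[],[],[],[],[],[],[],[],[],[],[],[],[],[],[],[],[],[],[],[],[],[],[],[],[],[],[],[],[],[],[],[],[],[],[],[],[],[],[],[],[],[],[],[],[],[],[],[],[],[],[],[],[],[],[],[],[],[],[],[],[],[],[],[],[],[],[],[],[],[],[],[],[],[],[],[],[],[],[],[],[],[],[],[],[],[],[],[],[],[],[],[],[],[],[],[],[],[],[],[],[],[],[],[],[],[],[],[]]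
def tbl5 : List (List (List Nat)) := [[],[],[],[[1,0],[8,1]],[],[[1,0],[8,1]],[],[],[],[],[],[],[],[],[],[],[],[],[],[],[],[],[],[],[],[],[],[],[],[],[],[],[],[],[],[],[],[],[],[],[],[],[],[],[],[],[],[],[],[],[],[],[],[],[],[],[],[],[],[],[],[],[],[],[],[],[],[],[],[],[],[],[],[],[],[],[],[],[],[],[],[],[],[],[],[],[],[],[],[],[],[],[],[],[],[],[],[],[],[],[],[],[],[],[],[],[],[],[],[],[],[],[],[],[],[],[],[],[],[],[],[],[],[],[],[],[],[]]
def tbl6 : List (List (List Nat)) := [[],[],[],[[2,15],[16,2]],[],[[1,0],[8,1]],[[1,0],[16,1]],[],[],[],[],[],[],[],[],[],[],[],[],[],[],[],[],[],[],[],[],[],[],[],[],[],[],[],[],[],[],[],[],[],[],[],[],[],[],[],[],[],[],[],[],[],[],[],[],[],[],[],[],[],[],[],[],[],[],[],[],[],[],[],[],[],[],[],[],[],[],[],[],[],[],[],[],[],[],[],[],[],[],[],[],[],[],[],[],[],[],[],[],[],[],[],[],[],[],[],[],[],[],[],[],[],[],[],[],[],[],[],[],[],[],[],[],[],[],[],[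],[]]
def tbl7 : List (List (List Nat)) := [[],[],[],[],[],[],[],[[1,0,0],[16,1,0],[9,16,1]],[],[],[],[],[],[],[],[],[],[],[],[],[],[],[],[],[],[],[],[],[],[],[],[],[],[],[],[],[],[],[],[],[],[],[],[],[],[],[],[],[],[],[],[],[],[],[],[],[],[],[],[],[],[],[],[],[],[],[],[],[],[],[],[],[],[],[],[],[],[],[],[],[],[],[],[],[],[],[],[],[],[],[],[],[],[],[],[],[],[],[],[],[],[],[],[],[],[],[],[],[],[],[],[],[],[],[],[],[],[],[],[],[],[],[],[],[],[],[],[]]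
def tbl8 : List (List (List Nat)) := [[],[[6]],[[2]],[],[[1]],[],[],[],[[1]],[],[],[],[],[],[],[],[],[],[],[],[],[],[],[],[],[],[],[],[],[],[],[],[],[],[],[],[],[],[],[],[],[],[],[],[],[],[],[],[],[],[],[],[],[],[],[],[],[],[],[],[],[],[],[],[],[],[],[],[],[],[],[],[],[],[],[],[],[],[],[],[],[],[],[],[],[],[],[],[],[],[],[],[],[],[],[],[],[],[],[],[],[],[],[],[],[],[],[],[],[],[],[],[],[],[],[],[],[],[],[],[],[],[],[],[],[],[],[]]
def tbl9 : List (List (List Nat)) := [[],[],[],[[1,0],[11,2]],[],[[1,0],[14,1]],[],[],[],[[1,0],[14,1]],[],[],[],[],[],[],[],[],[],[],[],[],[],[],[],[],[],[],[],[],[],[],[],[],[],[],[],[],[],[],[],[],[],[],[],[],[],[],[],[],[],[],[],[],[],[],[],[],[],[],[],[],[],[],[],[],[],[],[],[],[],[],[],[],[],[],[],[],[],[],[],[],[],[],[],[],[],[],[],[],[],[],[],[],[],[],[],[],[],[],[],[],[],[],[],[],[],[],[],[],[],[],[],[],[],[],[],[],[],[],[],[],[],[],[],[],[],[]]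
def tbl10 : List (List (List Nat)) := [[],[],[],[[10,14],[8,3]],[],[[1,0],[14,1]],[[1,0],[8,1]],[],[],[[1,0],[14,1]],[[1,0],[8,1]],[],[],[],[],[],[],[],[],[],[],[],[],[],[],[],[],[],[],[],[],[],[],[],[],[],[],[],[],[],[],[],[],[],[],[],[],[],[],[],[],[],[],[],[],[],[],[],[],[],[],[],[],[],[],[],[],[],[],[],[],[],[],[],[],[],[],[],[],[],[],[],[],[],[],[],[],[],[],[],[],[],[],[],[],[],[],[],[],[],[],[],[],[],[],[],[],[],[],[],[],[],[],[],[],[],[],[],[],[],[],[],[],[],[],[],[],[]]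
def tbl11 : List (List (List Nat)) := [[],[],[],[],[],[],[],[[1,0,0],[16,1,0],[6,8,1]],[],[],[],[[1,0,0],[16,1,0],[6,8,1]],[],[],[],[],[],[],[],[],[],[],[],[],[],[],[],[],[],[],[],[],[],[],[],[],[],[],[],[],[],[],[],[],[],[],[],[],[],[],[],[],[],[],[],[],[],[],[],[],[],[],[],[],[],[],[],[],[],[],[],[],[],[],[],[],[],[],[],[],[],[],[],[],[],[],[],[],[],[],[],[],[],[],[],[],[],[],[],[],[],[],[],[],[],[],[],[],[],[],[],[],[],[],[],[],[],[],[],[],[],[],[],[],[],[],[],[]]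
def tbl12 : List (List (List Nat)) := [[],[],[],[[6,5],[15,6]],[],[[3,14],[8,10]],[[2,15],[16,2]],[],[],[[2,0],[11,1]],[[1,0],[8,1]],[],[[1,0],[16,1]],[],[],[],[],[],[],[],[],[],[],[],[],[],[],[],[],[],[],[],[],[],[],[],[],[],[],[],[],[],[],[],[],[],[],[],[],[],[],[],[],[],[],[],[],[],[],[],[],[],[],[],[],[],[],[],[],[],[],[],[],[],[],[],[],[],[],[],[],[],[],[],[],[],[],[],[],[],[],[],[],[],[],[],[],[],[],[],[],[],[],[],[],[],[],[],[],[],[],[],[],[],[],[],[],[],[],[],[],[],[],[],[],[],[],[]]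
def tbl13 : List (List (List Nat)) := [[],[],[],[],[],[],[],[[1,0,0],[5,2,15],[3,16,2]],[],[],[],[[1,0,0],[8,1,0],[10,8,1]],[],[[1,0,0],[8,1,0],[6,16,1]],[],[],[],[],[],[],[],[],[],[],[],[],[],[],[],[],[],[],[],[],[],[],[],[],[],[],[],[],[],[],[],[],[],[],[],[],[],[],[],[],[],[],[],[],[],[],[],[],[],[],[],[],[],[],[],[],[],[],[],[],[],[],[],[],[],[],[],[],[],[],[],[],[],[],[],[],[],[],[],[],[],[],[],[],[],[],[],[],[],[],[],[],[],[],[],[],[],[],[],[],[],[],[],[],[],[],[],[],[],[],[],[],[],[]]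
def tbl14 : List (List (List Nat)) := [[],[],[],[],[],[],[],[[3,11,6],[15,6,11],[9,15,3]],[],[],[],[[2,15,0],[16,2,0],[3,5,1]],[],[[1,0,0],[8,1,0],[6,16,1]],[[1,0,0],[16,1,0],[9,16,1]],[],[],[],[],[],[],[],[],[],[],[],[],[],[],[],[],[],[],[],[],[],[],[],[],[],[],[],[],[],[],[],[],[],[],[],[],[],[],[],[],[],[],[],[],[],[],[],[],[],[],[],[],[],[],[],[],[],[],[],[],[],[],[],[],[],[],[],[],[],[],[],[],[],[],[],[],[],[],[],[],[],[],[],[],[],[],[],[],[],[],[],[],[],[],[],[],[],[],[],[],[],[],[],[],[],[],[],[],[],[],[],[],[]]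
def tbl15 : List (List (List Nat)) := [[],[],[],[],[],[],[],[],[],[],[],[],[],[],[],[[1,0,0,0],[16,1,0,0],[9,16,1,0],[14,9,16,1]],[],[],[],[],[],[],[],[],[],[],[],[],[],[],[],[],[],[],[],[],[],[],[],[],[],[],[],[],[],[],[],[],[],[],[],[],[],[],[],[],[],[],[],[],[],[],[],[],[],[],[],[],[],[],[],[],[],[],[],[],[],[],[],[],[],[],[],[],[],[],[],[],[],[],[],[],[],[],[],[],[],[],[],[],[],[],[],[],[],[],[],[],[],[],[],[],[],[],[],[],[],[],[],[],[],[],[],[],[],[],[],[]]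
def tbl16 : List (List (List Nat)) := [[],[[7]],[[6]],[],[[2]],[],[],[],[[1]],[],[],[],[],[],[],[],[[1]],[],[],[],[],[],[],[],[],[],[],[],[],[],[],[],[],[],[],[],[],[],[],[],[],[],[],[],[],[],[],[],[],[],[],[],[],[],[],[],[],[],[],[],[],[],[],[],[],[],[],[],[],[],[],[],[],[],[],[],[],[],[],[],[],[],[],[],[],[],[],[],[],[],[],[],[],[],[],[],[],[],[],[],[],[],[],[],[],[],[],[],[],[],[],[],[],[],[],[],[],[],[],[],[],[],[],[],[],[],[],[]]
def tbl17 : List (List (List Nat)) := [[],[],[],[[1,0],[4,6]],[],[[1,0],[7,2]],[],[],[],[[1,0],[12,1]],[],[],[],[],[],[],[],[[1,0],[12,1]],[],[],[],[],[],[],[],[],[],[],[],[],[],[],[],[],[],[],[],[],[],[],[],[],[],[],[],[],[],[],[],[],[],[],[],[],[],[],[],[],[],[],[],[],[],[],[],[],[],[],[],[],[],[],[],[],[],[],[],[],[],[],[],[],[],[],[],[],[],[],[],[],[],[],[],[],[],[],[],[],[],[],[],[],[],[],[],[],[],[],[],[],[],[],[],[],[],[],[],[],[],[],[],[],[],[]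,[],[],[],[]]
def tbl18 : List (List (List Nat)) := [[],[],[],[[7,9],[11,8]],[],[[1,0],[7,2]],[[1,0],[11,2]],[],[],[[1,0],[12,1]],[[1,0],[14,1]],[],[],[],[],[],[],[[1,0],[12,1]],[[1,0],[14,1]],[],[],[],[],[],[],[],[],[],[],[],[],[],[],[],[],[],[],[],[],[],[],[],[],[],[],[],[],[],[],[],[],[],[],[],[],[],[],[],[],[],[],[],[],[],[],[],[],[],[],[],[],[],[],[],[],[],[],[],[],[],[],[],[],[],[],[],[],[],[],[],[],[],[],[],[],[],[],[],[],[],[],[],[],[],[],[],[],[],[],[],[],[],[],[],[],[],[],[],[],[],[],[],[],[],[],[],[],[]]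
def tbl19 : List (List (List Nat)) := [[],[],[],[],[],[],[],[[1,0,0],[16,1,0],[13,11,2]],[],[],[],[[1,0,0],[16,1,0],[15,14,1]],[],[],[],[],[],[],[],[[1,0,0],[16,1,0],[15,14,1]],[],[],[],[],[],[],[],[],[],[],[],[],[],[],[],[],[],[],[],[],[],[],[],[],[],[],[],[],[],[],[],[],[],[],[],[],[],[],[],[],[],[],[],[],[],[],[],[],[],[],[],[],[],[],[],[],[],[],[],[],[],[],[],[],[],[],[],[],[],[],[],[],[],[],[],[],[],[],[],[],[],[],[],[],[],[],[],[],[],[],[],[],[],[],[],[],[],[],[],[],[],[],[],[],[],[],[],[]]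
def tbl20 : List (List (List Nat)) := [[],[],[],[[4,10],[16,12]],[],[[16,2],[10,16]],[[10,14],[8,3]],[],[],[[2,0],[7,1]],[[1,0],[14,1]],[],[[1,0],[8,1]],[],[],[],[],[[2,0],[7,1]],[[1,0],[14,1]],[],[[1,0],[8,1]],[],[],[],[],[],[],[],[],[],[],[],[],[],[],[],[],[],[],[],[],[],[],[],[],[],[],[],[],[],[],[],[],[],[],[],[],[],[],[],[],[],[],[],[],[],[],[],[],[],[],[],[],[],[],[],[],[],[],[],[],[],[],[],[],[],[],[],[],[],[],[],[],[],[],[],[],[],[],[],[],[],[],[],[],[],[],[],[],[],[],[],[],[],[],[],[],[],[],[],[],[],[],[],[],[],[],[]]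
def tbl21 : List (List (List Nat)) := [[],[],[],[],[],[],[],[[1,0,0],[10,10,14],[15,8,3]],[],[],[],[[1,0,0],[8,1,0],[5,14,1]],[],[[1,0,0],[8,1,0],[8,8,1]],[],[],[],[],[],[[1,0,0],[8,1,0],[5,14,1]],[],[[1,0,0],[8,1,0],[8,8,1]],[],[],[],[],[],[],[],[],[],[],[],[],[],[],[],[],[],[],[],[],[],[],[],[],[],[],[],[],[],[],[],[],[],[],[],[],[],[],[],[],[],[],[],[],[],[],[],[],[],[],[],[],[],[],[],[],[],[],[],[],[],[],[],[],[],[],[],[],[],[],[],[],[],[],[],[],[],[],[],[],[],[],[],[],[],[],[],[],[],[],[],[],[],[],[],[],[],[],[],[],[],[],[],[],[],[]]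
def tbl22 : List (List (List Nat)) := [[],[],[],[],[],[],[],[[14,13,8],[4,4,9],[6,16,4]],[],[],[],[[2,15,0],[16,2,0],[10,4,1]],[],[[1,0,0],[8,1,0],[8,8,1]],[[1,0,0],[16,1,0],[6,8,1]],[],[],[],[],[[2,15,0],[16,2,0],[10,4,1]],[],[[1,0,0],[8,1,0],[8,8,1]],[[1,0,0],[16,1,0],[6,8,1]],[],[],[],[],[],[],[],[],[],[],[],[],[],[],[],[],[],[],[],[],[],[],[],[],[],[],[],[],[],[],[],[],[],[],[],[],[],[],[],[],[],[],[],[],[],[],[],[],[],[],[],[],[],[],[],[],[],[],[],[],[],[],[],[],[],[],[],[],[],[],[],[],[],[],[],[],[],[],[],[],[],[],[],[],[],[],[],[],[],[],[],[],[],[],[],[],[],[],[],[],[],[],[],[],[]]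
def tbl23 : List (List (List Nat)) := [[],[],[],[],[],[],[],[],[],[],[],[],[],[],[],[[1,0,0,0],[16,1,0,0],[9,16,1,0],[2,6,8,1]],[],[],[],[],[],[],[],[[1,0,0,0],[16,1,0,0],[9,16,1,0],[2,6,8,1]],[],[],[],[],[],[],[],[],[],[],[],[],[],[],[],[],[],[],[],[],[],[],[],[],[],[],[],[],[],[],[],[],[],[],[],[],[],[],[],[],[],[],[],[],[],[],[],[],[],[],[],[],[],[],[],[],[],[],[],[],[],[],[],[],[],[],[],[],[],[],[],[],[],[],[],[],[],[],[],[],[],[],[],[],[],[],[],[],[],[],[],[],[],[],[],[],[],[],[],[],[],[],[],[]]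
def tbl24 : List (List (List Nat)) := [[],[],[],[[7,13],[11,7]],[],[[12,10],[16,4]],[[6,5],[15,6]],[],[],[[8,9],[11,7]],[[3,14],[8,10]],[],[[2,15],[16,2]],[],[],[],[],[[6,0],[4,1]],[[2,0],[11,1]],[],[[1,0],[8,1]],[],[],[],[[1,0],[16,1]],[],[],[],[],[],[],[],[],[],[],[],[],[],[],[],[],[],[],[],[],[],[],[],[],[],[],[],[],[],[],[],[],[],[],[],[],[],[],[],[],[],[],[],[],[],[],[],[],[],[],[],[],[],[],[],[],[],[],[],[],[],[],[],[],[],[],[],[],[],[],[],[],[],[],[],[],[],[],[],[],[],[],[],[],[],[],[],[],[],[],[],[],[],[],[],[],[],[],[],[],[],[],[]]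
def tbl25 : List (List (List Nat)) := [[],[],[],[],[],[],[],[[1,0,0],[8,6,5],[10,15,6]],[],[],[],[[1,0,0],[6,3,14],[11,8,10]],[],[[1,0,0],[4,2,15],[10,16,2]],[],[],[],[],[],[[1,0,0],[11,2,0],[13,11,1]],[],[[1,0,0],[14,1,0],[5,8,1]],[],[],[],[[1,0,0],[14,1,0],[15,16,1]],[],[],[],[],[],[],[],[],[],[],[],[],[],[],[],[],[],[],[],[],[],[],[],[],[],[],[],[],[],[],[],[],[],[],[],[],[],[],[],[],[],[],[],[],[],[],[],[],[],[],[],[],[],[],[],[],[],[],[],[],[],[],[],[],[],[],[],[],[],[],[],[],[],[],[],[],[],[],[],[],[],[],[],[],[],[],[],[],[],[],[],[],[],[],[],[],[],[],[],[],[],[]]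
def tbl26 : List (List (List Nat)) := [[],[],[],[],[],[],[],[[2,5,7],[16,12,10],[3,14,8]],[],[],[],[[5,2,15],[13,15,2],[4,13,5]],[],[[1,0,0],[4,2,15],[10,16,2]],[[1,0,0],[5,2,15],[3,16,2]],[],[],[],[],[[10,14,0],[8,3,0],[11,6,1]],[],[[1,0,0],[14,1,0],[5,8,1]],[[1,0,0],[8,1,0],[10,8,1]],[],[],[[1,0,0],[14,1,0],[15,16,1]],[[1,0,0],[8,1,0],[6,16,1]],[],[],[],[],[],[],[],[],[],[],[],[],[],[],[],[],[],[],[],[],[],[],[],[],[],[],[],[],[],[],[],[],[],[],[],[],[],[],[],[],[],[],[],[],[],[],[],[],[],[],[],[],[],[],[],[],[],[],[],[],[],[],[],[],[],[],[],[],[],[],[],[],[],[],[],[],[],[],[],[],[],[],[],[],[],[],[],[],[],[],[],[],[],[],[],[],[],[],[],[],[]]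
def tbl27 : List (List (List Nat)) := [[],[],[],[],[],[],[],[],[],[],[],[],[],[],[],[[1,0,0,0],[16,1,0,0],[16,5,2,15],[7,3,16,2]],[],[],[],[],[],[],[],[[1,0,0,0],[16,1,0,0],[6,8,1,0],[12,10,8,1]],[],[],[],[[1,0,0,0],[16,1,0,0],[6,8,1,0],[9,6,16,1]],[],[],[],[],[],[],[],[],[],[],[],[],[],[],[],[],[],[],[],[],[],[],[],[],[],[],[],[],[],[],[],[],[],[],[],[],[],[],[],[],[],[],[],[],[],[],[],[],[],[],[],[],[],[],[],[],[],[],[],[],[],[],[],[],[],[],[],[],[],[],[],[],[],[],[],[],[],[],[],[],[],[],[],[],[],[],[],[],[],[],[],[],[],[],[],[],[],[],[],[]]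
def tbl28 : List (List (List Nat)) := [[],[],[],[],[],[],[],[[12,3,4],[11,13,3],[1,11,12]],[],[],[],[[8,10,7],[14,12,5],[3,16,2]],[],[[4,9,8],[16,4,13],[6,4,14]],[[3,11,6],[15,6,11],[9,15,3]],[],[],[],[],[[6,5,0],[15,6,0],[10,8,1]],[],[[3,14,0],[8,10,0],[15,10,1]],[[2,15,0],[16,2,0],[3,5,1]],[],[],[[2,0,0],[11,1,0],[13,16,1]],[[1,0,0],[8,1,0],[6,16,1]],[],[[1,0,0],[16,1,0],[9,16,1]],[],[],[],[],[],[],[],[],[],[],[],[],[],[],[],[],[],[],[],[],[],[],[],[],[],[],[],[],[],[],[],[],[],[],[],[],[],[],[],[],[],[],[],[],[],[],[],[],[],[],[],[],[],[],[],[],[],[],[],[],[],[],[],[],[],[],[],[],[],[],[],[],[],[],[],[],[],[],[],[],[],[],[],[],[],[],[],[],[],[],[],[],[],[],[],[],[],[],[]]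
def tbl29 : List (List (List Nat)) := [[],[],[],[],[],[],[],[],[],[],[],[],[],[],[],[[1,0,0,0],[12,3,11,6],[13,15,6,11],[12,9,15,3]],[],[],[],[],[],[],[],[[1,0,0,0],[5,2,15,0],[3,16,2,0],[4,3,5,1]],[],[],[],[[1,0,0,0],[8,1,0,0],[10,8,1,0],[12,6,16,1]],[],[[1,0,0,0],[8,1,0,0],[6,16,1,0],[2,9,16,1]],[],[],[],[],[],[],[],[],[],[],[],[],[],[],[],[],[],[],[],[],[],[],[],[],[],[],[],[],[],[],[],[],[],[],[],[],[],[],[],[],[],[],[],[],[],[],[],[],[],[],[],[],[],[],[],[],[],[],[],[],[],[],[],[],[],[],[],[],[],[],[],[],[],[],[],[],[],[],[],[],[],[],[],[],[],[],[],[],[],[],[],[],[],[],[],[],[],[]]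
def tbl30 : List (List (List Nat)) := [[],[],[],[],[],[],[],[],[],[],[],[],[],[],[],[[4,5,7,10],[14,12,10,7],[1,12,12,5],[14,1,14,4]],[],[],[],[],[],[],[],[[3,11,6,0],[15,6,11,0],[9,15,3,0],[12,13,12,1]],[],[],[],[[2,15,0,0],[16,2,0,0],[3,5,1,0],[7,16,16,1]],[],[[1,0,0,0],[8,1,0,0],[6,16,1,0],[2,9,16,1]],[[1,0,0,0],[16,1,0,0],[9,16,1,0],[14,9,16,1]],[],[],[],[],[],[],[],[],[],[],[],[],[],[],[],[],[],[],[],[],[],[],[],[],[],[],[],[],[],[],[],[],[],[],[],[],[],[],[],[],[],[],[],[],[],[],[],[],[],[],[],[],[],[],[],[],[],[],[],[],[],[],[],[],[],[],[],[],[],[],[],[],[],[],[],[],[],[],[],[],[],[],[],[],[],[],[],[],[],[],[],[],[],[],[],[],[]]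
def tbl31 : List (List (List Nat)) := [[],[],[],[],[],[],[],[],[],[],[],[],[],[],[],[],[],[],[],[],[],[],[],[],[],[],[],[],[],[],[],[[1,0,0,0,0],[16,1,0,0,0],[9,16,1,0,0],[14,9,16,1,0],[5,14,9,16,1]],[],[],[],[],[],[],[],[],[],[],[],[],[],[],[],[],[],[],[],[],[],[],[],[],[],[],[],[],[],[],[],[],[],[],[],[],[],[],[],[],[],[],[],[],[],[],[],[],[],[],[],[],[],[],[],[],[],[],[],[],[],[],[],[],[],[],[],[],[],[],[],[],[],[],[],[],[],[],[],[],[],[],[],[],[],[],[],[],[],[],[],[],[],[],[],[]]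
def tbl32 : List (List (List Nat)) := [[],[[1]],[[7]],[],[[6]],[],[],[],[[2]],[],[],[],[],[],[],[],[[1]],[],[],[],[],[],[],[],[],[],[],[],[],[],[],[],[[1]],[],[],[],[],[],[],[],[],[],[],[],[],[],[],[],[],[],[],[],[],[],[],[],[],[],[],[],[],[],[],[],[],[],[],[],[],[],[],[],[],[],[],[],[],[],[],[],[],[],[],[],[],[],[],[],[],[],[],[],[],[],[],[],[],[],[],[],[],[],[],[],[],[],[],[],[],[],[],[],[],[],[],[],[],[],[],[],[],[],[],[],[],[],[],[]]
def tbl33 : List (List (List Nat)) := [[],[],[],[[1,0],[10,7]],[],[[1,0],[11,6]],[],[],[],[[1,0],[15,2]],[],[],[],[],[],[],[],[[1,0],[16,1]],[],[],[],[],[],[],[],[],[],[],[],[],[],[],[],[[1,0],[16,1]],[],[],[],[],[],[],[],[],[],[],[],[],[],[],[],[],[],[],[],[],[],[],[],[],[],[],[],[],[],[],[],[],[],[],[],[],[],[],[],[],[],[],[],[],[],[],[],[],[],[],[],[],[],[],[],[],[],[],[],[],[],[],[],[],[],[],[],[],[],[],[],[],[],[],[],[],[],[],[],[],[],[],[],[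],[],[],[],[],[],[],[],[],[],[]]
def tbl34 : List (List (List Nat)) := [[],[],[],[[14,4],[4,13]],[],[[1,0],[11,6]],[[1,0],[4,6]],[],[],[[1,0],[15,2]],[[1,0],[7,2]],[],[],[],[],[],[],[[1,0],[16,1]],[[1,0],[12,1]],[],[],[],[],[],[],[],[],[],[],[],[],[],[],[[1,0],[16,1]],[[1,0],[12,1]],[],[],[],[],[],[],[],[],[],[],[],[],[],[],[],[],[],[],[],[],[],[],[],[],[],[],[],[],[],[],[],[],[],[],[],[],[],[],[],[],[],[],[],[],[],[],[],[],[],[],[],[],[],[],[],[],[],[],[],[],[],[],[],[],[],[],[],[],[],[],[],[],[],[],[],[],[],[],[],[],[],[],[],[],[],[],[],[],[],[],[],[],[]]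
def tbl35 : List (List (List Nat)) := [[],[],[],[],[],[],[],[[1,0,0],[16,1,0],[7,4,6]],[],[],[],[[1,0,0],[16,1,0],[8,7,2]],[],[],[],[],[],[],[],[[1,0,0],[16,1,0],[4,12,1]],[],[],[],[],[],[],[],[],[],[],[],[],[],[],[],[[1,0,0],[16,1,0],[4,12,1]],[],[],[],[],[],[],[],[],[],[],[],[],[],[],[],[],[],[],[],[],[],[],[],[],[],[],[],[],[],[],[],[],[],[],[],[],[],[],[],[],[],[],[],[],[],[],[],[],[],[],[],[],[],[],[],[],[],[],[],[],[],[],[],[],[],[],[],[],[],[],[],[],[],[],[],[],[],[],[],[],[],[],[],[],[],[],[],[],[],[],[],[]]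
def tbl36 : List (List (List Nat)) := [[],[],[],[[9,5],[5,6]],[],[[6,15],[15,1]],[[7,9],[11,8]],[],[],[[2,0],[13,2]],[[1,0],[7,2]],[],[[1,0],[11,2]],[],[],[],[],[[2,0],[15,1]],[[1,0],[12,1]],[],[[1,0],[14,1]],[],[],[],[],[],[],[],[],[],[],[],[],[[2,0],[15,1]],[[1,0],[12,1]],[],[[1,0],[14,1]],[],[],[],[],[],[],[],[],[],[],[],[],[],[],[],[],[],[],[],[],[],[],[],[],[],[],[],[],[],[],[],[],[],[],[],[],[],[],[],[],[],[],[],[],[],[],[],[],[],[],[],[],[],[],[],[],[],[],[],[],[],[],[],[],[],[],[],[],[],[],[],[],[],[],[],[],[],[],[],[],[],[],[],[],[],[],[],[],[],[],[]]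
def tbl37 : List (List (List Nat)) := [[],[],[],[],[],[],[],[[1,0,0],[13,7,9],[12,11,8]],[],[],[],[[1,0,0],[8,1,0],[3,7,2]],[],[[1,0,0],[8,1,0],[1,11,2]],[],[],[],[],[],[[1,0,0],[8,1,0],[10,12,1]],[],[[1,0,0],[8,1,0],[9,14,1]],[],[],[],[],[],[],[],[],[],[],[],[],[],[[1,0,0],[8,1,0],[10,12,1]],[],[[1,0,0],[8,1,0],[9,14,1]],[],[],[],[],[],[],[],[],[],[],[],[],[],[],[],[],[],[],[],[],[],[],[],[],[],[],[],[],[],[],[],[],[],[],[],[],[],[],[],[],[],[],[],[],[],[],[],[],[],[],[],[],[],[],[],[],[],[],[],[],[],[],[],[],[],[],[],[],[],[],[],[],[],[],[],[],[],[],[],[],[],[],[],[],[],[],[],[],[],[]]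
def tbl38 : List (List (List Nat)) := [[],[],[],[],[],[],[],[[11,8,3],[7,9,14],[13,5,10]],[],[],[],[[2,15,0],[16,2,0],[6,1,2]],[],[[1,0,0],[8,1,0],[1,11,2]],[[1,0,0],[16,1,0],[13,11,2]],[],[],[],[],[[2,15,0],[16,2,0],[3,9,1]],[],[[1,0,0],[8,1,0],[9,14,1]],[[1,0,0],[16,1,0],[15,14,1]],[],[],[],[],[],[],[],[],[],[],[],[],[[2,15,0],[16,2,0],[3,9,1]],[],[[1,0,0],[8,1,0],[9,14,1]],[[1,0,0],[16,1,0],[15,14,1]],[],[],[],[],[],[],[],[],[],[],[],[],[],[],[],[],[],[],[],[],[],[],[],[],[],[],[],[],[],[],[],[],[],[],[],[],[],[],[],[],[],[],[],[],[],[],[],[],[],[],[],[],[],[],[],[],[],[],[],[],[],[],[],[],[],[],[],[],[],[],[],[],[],[],[],[],[],[],[],[],[],[],[],[],[],[],[],[],[]]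
def tbl39 : List (List (List Nat)) := [[],[],[],[],[],[],[],[],[],[],[],[],[],[],[],[[1,0,0,0],[16,1,0,0],[9,16,1,0],[5,13,11,2]],[],[],[],[],[],[],[],[[1,0,0,0],[16,1,0,0],[9,16,1,0],[11,15,14,1]],[],[],[],[],[],[],[],[],[],[],[],[],[],[],[],[[1,0,0,0],[16,1,0,0],[9,16,1,0],[11,15,14,1]],[],[],[],[],[],[],[],[],[],[],[],[],[],[],[],[],[],[],[],[],[],[],[],[],[],[],[],[],[],[],[],[],[],[],[],[],[],[],[],[],[],[],[],[],[],[],[],[],[],[],[],[],[],[],[],[],[],[],[],[],[],[],[],[],[],[],[],[],[],[],[],[],[],[],[],[],[],[],[],[],[],[],[],[],[],[],[],[]]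
def tbl40 : List (List (List Nat)) := [[],[],[],[[15,7],[14,9]],[],[[11,2],[2,11]],[[4,10],[16,12]],[],[],[[1,15],[15,6]],[[16,2],[10,16]],[],[[10,14],[8,3]],[],[],[],[],[[6,0],[11,1]],[[2,0],[7,1]],[],[[1,0],[14,1]],[],[],[],[[1,0],[8,1]],[],[],[],[],[],[],[],[],[[6,0],[11,1]],[[2,0],[7,1]],[],[[1,0],[14,1]],[],[],[],[[1,0],[8,1]],[],[],[],[],[],[],[],[],[],[],[],[],[],[],[],[],[],[],[],[],[],[],[],[],[],[],[],[],[],[],[],[],[],[],[],[],[],[],[],[],[],[],[],[],[],[],[],[],[],[],[],[],[],[],[],[],[],[],[],[],[],[],[],[],[],[],[],[],[],[],[],[],[],[],[],[],[],[],[],[],[],[],[],[],[],[],[]]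
def tbl41 : List (List (List Nat)) := [[],[],[],[],[],[],[],[[1,0,0],[12,4,10],[8,16,12]],[],[],[],[[1,0,0],[1,16,2],[5,10,16]],[],[[1,0,0],[7,10,14],[7,8,3]],[],[],[],[],[],[[1,0,0],[11,2,0],[12,7,1]],[],[[1,0,0],[14,1,0],[8,14,1]],[],[],[],[[1,0,0],[14,1,0],[9,8,1]],[],[],[],[],[],[],[],[],[],[[1,0,0],[11,2,0],[12,7,1]],[],[[1,0,0],[14,1,0],[8,14,1]],[],[],[],[[1,0,0],[14,1,0],[9,8,1]],[],[],[],[],[],[],[],[],[],[],[],[],[],[],[],[],[],[],[],[],[],[],[],[],[],[],[],[],[],[],[],[],[],[],[],[],[],[],[],[],[],[],[],[],[],[],[],[],[],[],[],[],[],[],[],[],[],[],[],[],[],[],[],[],[],[],[],[],[],[],[],[],[],[],[],[],[],[],[],[],[],[],[],[],[],[]]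
def tbl42 : List (List (List Nat)) := [[],[],[],[],[],[],[],[[4,1,11],[14,16,6],[15,7,15]],[],[],[],[[9,9,16],[9,8,1],[11,4,11]],[],[[1,0,0],[7,10,14],[7,8,3]],[[1,0,0],[10,10,14],[15,8,3]],[],[],[],[],[[10,14,0],[8,3,0],[1,5,1]],[],[[1,0,0],[14,1,0],[8,14,1]],[[1,0,0],[8,1,0],[5,14,1]],[],[],[[1,0,0],[14,1,0],[9,8,1]],[[1,0,0],[8,1,0],[8,8,1]],[],[],[],[],[],[],[],[],[[10,14,0],[8,3,0],[1,5,1]],[],[[1,0,0],[14,1,0],[8,14,1]],[[1,0,0],[8,1,0],[5,14,1]],[],[],[[1,0,0],[14,1,0],[9,8,1]],[[1,0,0],[8,1,0],[8,8,1]],[],[],[],[],[],[],[],[],[],[],[],[],[],[],[],[],[],[],[],[],[],[],[],[],[],[],[],[],[],[],[],[],[],[],[],[],[],[],[],[],[],[],[],[],[],[],[],[],[],[],[],[],[],[],[],[],[],[],[],[],[],[],[],[],[],[],[],[],[],[],[],[],[],[],[],[],[],[],[],[],[],[],[],[],[]]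
def tbl43 : List (List (List Nat)) := [[],[],[],[],[],[],[],[],[],[],[],[],[],[],[],[[1,0,0,0],[16,1,0,0],[14,10,10,14],[9,15,8,3]],[],[],[],[],[],[],[],[[1,0,0,0],[16,1,0,0],[6,8,1,0],[3,5,14,1]],[],[],[],[[1,0,0,0],[16,1,0,0],[6,8,1,0],[1,8,8,1]],[],[],[],[],[],[],[],[],[],[],[],[[1,0,0,0],[16,1,0,0],[6,8,1,0],[3,5,14,1]],[],[],[],[[1,0,0,0],[16,1,0,0],[6,8,1,0],[1,8,8,1]],[],[],[],[],[],[],[],[],[],[],[],[],[],[],[],[],[],[],[],[],[],[],[],[],[],[],[],[],[],[],[],[],[],[],[],[],[],[],[],[],[],[],[],[],[],[],[],[],[],[],[],[],[],[],[],[],[],[],[],[],[],[],[],[],[],[],[],[],[],[],[],[],[],[],[],[],[],[],[],[],[],[],[],[]]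
def tbl44 : List (List (List Nat)) := [[],[],[],[],[],[],[],[[10,4,1],[1,1,5],[12,14,3]],[],[],[],[[12,12,10],[12,11,12],[9,2,15]],[],[[16,10,14],[10,12,10],[10,10,16]],[[14,13,8],[4,4,9],[6,16,4]],[],[],[],[],[[6,5,0],[15,6,0],[4,16,1]],[],[[3,14,0],[8,10,0],[7,7,1]],[[2,15,0],[16,2,0],[10,4,1]],[],[],[[2,0,0],[11,1,0],[1,8,1]],[[1,0,0],[8,1,0],[8,8,1]],[],[[1,0,0],[16,1,0],[6,8,1]],[],[],[],[],[],[],[[6,5,0],[15,6,0],[4,16,1]],[],[[3,14,0],[8,10,0],[7,7,1]],[[2,15,0],[16,2,0],[10,4,1]],[],[],[[2,0,0],[11,1,0],[1,8,1]],[[1,0,0],[8,1,0],[8,8,1]],[],[[1,0,0],[16,1,0],[6,8,1]],[],[],[],[],[],[],[],[],[],[],[],[],[],[],[],[],[],[],[],[],[],[],[],[],[],[],[],[],[],[],[],[],[],[],[],[],[],[],[],[],[],[],[],[],[],[],[],[],[],[],[],[],[],[],[],[],[],[],[],[],[],[],[],[],[],[],[],[],[],[],[],[],[],[],[],[],[]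,[],[],[],[],[],[]]
def tbl45 : List (List (List Nat)) := [[],[],[],[],[],[],[],[],[],[],[],[],[],[],[],[[1,0,0,0],[14,14,13,8],[11,4,4,9],[13,6,16,4]],[],[],[],[],[],[],[],[[1,0,0,0],[5,2,15,0],[3,16,2,0],[16,10,4,1]],[],[],[],[[1,0,0,0],[8,1,0,0],[10,8,1,0],[5,8,8,1]],[],[[1,0,0,0],[8,1,0,0],[6,16,1,0],[6,6,8,1]],[],[],[],[],[],[],[],[],[],[[1,0,0,0],[5,2,15,0],[3,16,2,0],[16,10,4,1]],[],[],[],[[1,0,0,0],[8,1,0,0],[10,8,1,0],[5,8,8,1]],[],[[1,0,0,0],[8,1,0,0],[6,16,1,0],[6,6,8,1]],[],[],[],[],[],[],[],[],[],[],[],[],[],[],[],[],[],[],[],[],[],[],[],[],[],[],[],[],[],[],[],[],[],[],[],[],[],[],[],[],[],[],[],[],[],[],[],[],[],[],[],[],[],[],[],[],[],[],[],[],[],[],[],[],[],[],[],[],[],[],[],[],[],[],[],[],[],[],[],[],[],[]]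
def tbl46 : List (List (List Nat)) := [[],[],[],[],[],[],[],[],[],[],[],[],[],[],[],[[8,7,15,4],[10,10,2,13],[3,13,16,2],[2,12,7,5]],[],[],[],[],[],[],[],[[3,11,6,0],[15,6,11,0],[9,15,3,0],[14,16,15,1]],[],[],[],[[2,15,0,0],[16,2,0,0],[3,5,1,0],[10,15,8,1]],[],[[1,0,0,0],[8,1,0,0],[6,16,1,0],[6,6,8,1]],[[1,0,0,0],[16,1,0,0],[9,16,1,0],[2,6,8,1]],[],[],[],[],[],[],[],[],[[3,11,6,0],[15,6,11,0],[9,15,3,0],[14,16,15,1]],[],[],[],[[2,15,0,0],[16,2,0,0],[3,5,1,0],[10,15,8,1]],[],[[1,0,0,0],[8,1,0,0],[6,16,1,0],[6,6,8,1]],[[1,0,0,0],[16,1,0,0],[9,16,1,0],[2,6,8,1]],[],[],[],[],[],[],[],[],[],[],[],[],[],[],[],[],[],[],[],[],[],[],[],[],[],[],[],[],[],[],[],[],[],[],[],[],[],[],[],[],[],[],[],[],[],[],[],[],[],[],[],[],[],[],[],[],[],[],[],[],[],[],[],[],[],[],[],[],[],[],[],[],[],[],[],[],[],[],[],[],[]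]
def tbl47 : List (List (List Nat)) := [[],[],[],[],[],[],[],[],[],[],[],[],[],[],[],[],[],[],[],[],[],[],[],[],[],[],[],[],[],[],[],[[1,0,0,0,0],[16,1,0,0,0],[9,16,1,0,0],[14,9,16,1,0],[4,2,6,8,1]],[],[],[],[],[],[],[],[],[],[],[],[],[],[],[],[[1,0,0,0,0],[16,1,0,0,0],[9,16,1,0,0],[14,9,16,1,0],[4,2,6,8,1]],[],[],[],[],[],[],[],[],[],[],[],[],[],[],[],[],[],[],[],[],[],[],[],[],[],[],[],[],[],[],[],[],[],[],[],[],[],[],[],[],[],[],[],[],[],[],[],[],[],[],[],[],[],[],[],[],[],[],[],[],[],[],[],[],[],[],[],[],[],[],[],[],[],[],[],[],[],[],[],[]]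
def tbl48 : List (List (List Nat)) := [[],[],[],[[1,13],[10,1]],[],[[9,7],[14,15]],[[7,13],[11,7]],[],[],[[6,5],[5,9]],[[12,10],[16,4]],[],[[6,5],[15,6]],[],[],[],[],[[13,4],[4,14]],[[8,9],[11,7]],[],[[3,14],[8,10]],[],[],[],[[2,15],[16,2]],[],[],[],[],[],[],[],[],[[7,0],[10,1]],[[6,0],[4,1]],[],[[2,0],[11,1]],[],[],[],[[1,0],[8,1]],[],[],[],[],[],[],[],[[1,0],[16,1]],[],[],[],[],[],[],[],[],[],[],[],[],[],[],[],[],[],[],[],[],[],[],[],[],[],[],[],[],[],[],[],[],[],[],[],[],[],[],[],[],[],[],[],[],[],[],[],[],[],[],[],[],[],[],[],[],[],[],[],[],[],[],[],[],[],[],[],[],[],[],[],[],[],[],[],[],[],[],[]]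
def tbl49 : List (List (List Nat)) := [[],[],[],[],[],[],[],[[1,0,0],[3,7,13],[6,11,7]],[],[],[],[[1,0,0],[15,12,10],[1,16,4]],[],[[1,0,0],[16,6,5],[4,15,6]],[],[],[],[],[],[[1,0,0],[2,8,9],[6,11,7]],[],[[1,0,0],[5,3,14],[1,8,10]],[],[],[],[[1,0,0],[9,2,15],[3,16,2]],[],[],[],[],[],[],[],[],[],[[1,0,0],[4,6,0],[13,4,1]],[],[[1,0,0],[7,2,0],[12,11,1]],[],[],[],[[1,0,0],[12,1,0],[10,8,1]],[],[],[],[],[],[],[],[[1,0,0],[12,1,0],[4,16,1]],[],[],[],[],[],[],[],[],[],[],[],[],[],[],[],[],[],[],[],[],[],[],[],[],[],[],[],[],[],[],[],[],[],[],[],[],[],[],[],[],[],[],[],[],[],[],[],[],[],[],[],[],[],[],[],[],[],[],[],[],[],[],[],[],[],[],[],[],[],[],[],[],[],[],[],[],[],[]]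
def tbl50 : List (List (List Nat)) := [[],[],[],[],[],[],[],[[13,11,1],[5,6,16],[10,9,13]],[],[],[],[[16,12,10],[2,5,7],[16,11,14]],[],[[1,0,0],[16,6,5],[4,15,6]],[[1,0,0],[8,6,5],[10,15,6]],[],[],[],[],[[6,3,14],[12,14,3],[2,12,6]],[],[[1,0,0],[5,3,14],[1,8,10]],[[1,0,0],[6,3,14],[11,8,10]],[],[],[[1,0,0],[9,2,15],[3,16,2]],[[1,0,0],[4,2,15],[10,16,2]],[],[],[],[],[],[],[],[],[[7,9,0],[11,8,0],[6,2,1]],[],[[1,0,0],[7,2,0],[12,11,1]],[[1,0,0],[11,2,0],[13,11,1]],[],[],[[1,0,0],[12,1,0],[10,8,1]],[[1,0,0],[14,1,0],[5,8,1]],[],[],[],[],[],[],[[1,0,0],[12,1,0],[4,16,1]],[[1,0,0],[14,1,0],[15,16,1]],[],[],[],[],[],[],[],[],[],[],[],[],[],[],[],[],[],[],[],[],[],[],[],[],[],[],[],[],[],[],[],[],[],[],[],[],[],[],[],[],[],[],[],[],[],[],[],[],[],[],[],[],[],[],[],[],[],[],[],[],[],[],[],[],[],[],[],[],[],[],[]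,[],[],[],[],[],[]]
def tbl51 : List (List (List Nat)) := [[],[],[],[],[],[],[],[],[],[],[],[],[],[],[],[[1,0,0,0],[16,1,0,0],[8,8,6,5],[11,10,15,6]],[],[],[],[],[],[],[],[[1,0,0,0],[16,1,0,0],[16,6,3,14],[7,11,8,10]],[],[],[],[[1,0,0,0],[16,1,0,0],[5,4,2,15],[10,10,16,2]],[],[],[],[],[],[],[],[],[],[],[],[[1,0,0,0],[16,1,0,0],[13,11,2,0],[16,13,11,1]],[],[],[],[[1,0,0,0],[16,1,0,0],[15,14,1,0],[5,5,8,1]],[],[],[],[],[],[],[],[[1,0,0,0],[16,1,0,0],[15,14,1,0],[6,15,16,1]],[],[],[],[],[],[],[],[],[],[],[],[],[],[],[],[],[],[],[],[],[],[],[],[],[],[],[],[],[],[],[],[],[],[],[],[],[],[],[],[],[],[],[],[],[],[],[],[],[],[],[],[],[],[],[],[],[],[],[],[],[],[],[],[],[],[],[],[],[],[],[],[],[],[],[],[]]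
def tbl52 : List (List (List Nat)) := [[],[],[],[],[],[],[],[[1,16,14],[3,4,4],[6,5,6]],[],[],[],[[5,8,1],[7,13,8],[5,7,5]],[],[[15,12,10],[2,11,12],[9,12,12]],[[2,5,7],[16,12,10],[3,14,8]],[],[],[],[],[[14,7,10],[11,5,12],[16,2,16]],[],[[11,1,16],[4,8,9],[11,9,9]],[[5,2,15],[13,15,2],[4,13,5]],[],[],[[2,0,0],[1,2,15],[6,16,2]],[[1,0,0],[4,2,15],[10,16,2]],[],[[1,0,0],[5,2,15],[3,16,2]],[],[],[],[],[],[],[[4,10,0],[16,12,0],[1,15,1]],[],[[16,2,0],[10,16,0],[5,1,1]],[[10,14,0],[8,3,0],[11,6,1]],[],[],[[2,0,0],[7,1,0],[3,8,1]],[[1,0,0],[14,1,0],[5,8,1]],[],[[1,0,0],[8,1,0],[10,8,1]],[],[],[],[],[[2,0,0],[7,1,0],[8,16,1]],[[1,0,0],[14,1,0],[15,16,1]],[],[[1,0,0],[8,1,0],[6,16,1]],[],[],[],[],[],[],[],[],[],[],[],[],[],[],[],[],[],[],[],[],[],[],[],[],[],[],[],[],[],[],[],[],[],[],[],[],[],[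],[],[],[],[],[],[],[],[],[],[],[],[],[],[],[],[],[],[],[],[],[],[],[],[],[],[],[],[],[],[],[],[],[],[],[],[],[]]
def tbl53 : List (List (List Nat)) := [[],[],[],[],[],[],[],[],[],[],[],[],[],[],[],[[1,0,0,0],[1,2,5,7],[7,16,12,10],[14,3,14,8]],[],[],[],[],[],[],[],[[1,0,0,0],[15,5,2,15],[10,13,15,2],[13,4,13,5]],[],[],[],[[1,0,0,0],[8,1,0,0],[7,4,2,15],[15,10,16,2]],[],[[1,0,0,0],[8,1,0,0],[15,5,2,15],[10,3,16,2]],[],[],[],[],[],[],[],[],[],[[1,0,0,0],[10,10,14,0],[15,8,3,0],[6,11,6,1]],[],[],[],[[1,0,0,0],[8,1,0,0],[5,14,1,0],[16,5,8,1]],[],[[1,0,0,0],[8,1,0,0],[8,8,1,0],[5,10,8,1]],[],[],[],[],[],[[1,0,0,0],[8,1,0,0],[5,14,1,0],[5,15,16,1]],[],[[1,0,0,0],[8,1,0,0],[8,8,1,0],[1,6,16,1]],[],[],[],[],[],[],[],[],[],[],[],[],[],[],[],[],[],[],[],[],[],[],[],[],[],[],[],[],[],[],[],[],[],[],[],[]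,[],[],[],[],[],[],[],[],[],[],[],[],[],[],[],[],[],[],[],[],[],[],[],[],[],[],[],[],[],[],[],[],[],[],[],[],[],[]]
def tbl54 : List (List (List Nat)) := [[],[],[],[],[],[],[],[],[],[],[],[],[],[],[],[[9,16,6,5],[9,1,11,12],[12,9,3,11],[7,6,13,10]],[],[],[],[],[],[],[],[[16,5,2,15],[2,12,15,2],[7,12,1,16],[4,1,5,13]],[],[],[],[[2,15,0,0],[16,2,0,0],[14,7,2,15],[13,14,16,2]],[],[[1,0,0,0],[8,1,0,0],[15,5,2,15],[10,3,16,2]],[[1,0,0,0],[16,1,0,0],[16,5,2,15],[7,3,16,2]],[],[],[],[],[],[],[],[],[[14,13,8,0],[4,4,9,0],[6,16,4,0],[16,4,3,1]],[],[],[],[[2,15,0,0],[16,2,0,0],[10,4,1,0],[15,7,8,1]],[],[[1,0,0,0],[8,1,0,0],[8,8,1,0],[5,10,8,1]],[[1,0,0,0],[16,1,0,0],[6,8,1,0],[12,10,8,1]],[],[],[],[],[[2,15,0,0],[16,2,0,0],[10,4,1,0],[10,5,16,1]],[],[[1,0,0,0],[8,1,0,0],[8,8,1,0],[1,6,16,1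]],[[1,0,0,0],[16,1,0,0],[6,8,1,0],[9,6,16,1]],[],[],[],[],[],[],[],[],[],[],[],[],[],[],[],[],[],[],[],[],[],[],[],[],[],[],[],[],[],[],[],[],[],[],[],[],[],[],[],[],[],[],[],[],[],[],[],[],[],[],[],[],[],[],[],[],[],[],[],[],[],[],[],[],[],[],[],[],[],[],[],[],[]]
def tbl55 : List (List (List Nat)) := [[],[],[],[],[],[],[],[],[],[],[],[],[],[],[],[],[],[],[],[],[],[],[],[],[],[],[],[],[],[],[],[[1,0,0,0,0],[16,1,0,0,0],[9,16,1,0,0],[16,16,5,2,15],[3,7,3,16,2]],[],[],[],[],[],[],[],[],[],[],[],[],[],[],[],[[1,0,0,0,0],[16,1,0,0,0],[9,16,1,0,0],[2,6,8,1,0],[10,12,10,8,1]],[],[],[],[],[],[],[],[[1,0,0,0,0],[16,1,0,0,0],[9,16,1,0,0],[2,6,8,1,0],[9,9,6,16,1]],[],[],[],[],[],[],[],[],[],[],[],[],[],[],[],[],[],[],[],[],[],[],[],[],[],[],[],[],[],[],[],[],[],[],[],[],[],[],[],[],[],[],[],[],[],[],[],[],[],[],[],[],[],[],[],[],[],[]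,[],[],[],[],[],[],[],[],[],[],[],[],[],[]]
def tbl56 : List (List (List Nat)) := [[],[],[],[],[],[],[],[[9,14,6],[10,15,14],[3,10,9]],[],[],[],[[6,4,14],[5,4,16],[6,3,1]],[],[[3,5,1],[14,1,4],[12,1,10]],[[12,3,4],[11,13,3],[1,11,12]],[],[],[],[],[[13,16,1],[9,6,11],[10,5,13]],[],[[15,6,11],[7,16,1],[15,14,4]],[[8,10,7],[14,12,5],[3,16,2]],[],[],[[10,14,3],[5,9,8],[13,7,11]],[[4,9,8],[16,4,13],[6,4,14]],[],[[3,11,6],[15,6,11],[9,15,3]],[],[],[],[],[],[],[[7,13,0],[11,7,0],[6,3,1]],[],[[12,10,0],[16,4,0],[8,12,1]],[[6,5,0],[15,6,0],[10,8,1]],[],[],[[8,9,0],[11,7,0],[12,13,1]],[[3,14,0],[8,10,0],[15,10,1]],[],[[2,15,0],[16,2,0],[3,5,1]],[],[],[],[],[[6,0,0],[4,1,0],[7,16,1]],[[2,0,0],[11,1,0],[13,16,1]],[],[[1,0,0],[8,1,0],[6,16,1]],[],[],[],[[1,0,0],[16,1,0],[9,16,1]],[],[],[],[],[],[],[],[]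,[],[],[],[],[],[],[],[],[],[],[],[],[],[],[],[],[],[],[],[],[],[],[],[],[],[],[],[],[],[],[],[],[],[],[],[],[],[],[],[],[],[],[],[],[],[],[],[],[],[],[],[],[],[],[],[],[],[],[],[],[],[],[]]
def tbl57 : List (List (List Nat)) := [[],[],[],[],[],[],[],[],[],[],[],[],[],[],[],[[1,0,0,0],[13,12,3,4],[1,11,13,3],[15,1,11,12]],[],[],[],[],[],[],[],[[1,0,0,0],[4,8,10,7],[12,14,12,5],[11,3,16,2]],[],[],[],[[1,0,0,0],[3,4,9,8],[4,16,4,13],[16,6,4,14]],[],[[1,0,0,0],[15,3,11,6],[16,15,6,11],[14,9,15,3]],[],[],[],[],[],[],[],[],[],[[1,0,0,0],[8,6,5,0],[10,15,6,0],[14,10,8,1]],[],[],[],[[1,0,0,0],[6,3,14,0],[11,8,10,0],[6,15,10,1]],[],[[1,0,0,0],[4,2,15,0],[10,16,2,0],[16,3,5,1]],[],[],[],[],[],[[1,0,0,0],[11,2,0,0],[13,11,1,0],[16,13,16,1]],[],[[1,0,0,0],[14,1,0,0],[5,8,1,0],[3,6,16,1]],[],[],[],[[1,0,0,0],[14,1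,0,0],[15,16,1,0],[11,9,16,1]],[],[],[],[],[],[],[],[],[],[],[],[],[],[],[],[],[],[],[],[],[],[],[],[],[],[],[],[],[],[],[],[],[],[],[],[],[],[],[],[],[],[],[],[],[],[],[],[],[],[],[],[],[],[],[],[],[],[],[],[],[],[],[],[],[],[],[],[],[],[]]
def tbl58 : List (List (List Nat)) := [[],[],[],[],[],[],[],[],[],[],[],[],[],[],[],[[11,4,1,7],[7,13,16,10],[11,15,14,10],[12,10,9,15]],[],[],[],[],[],[],[],[[7,12,15,2],[11,5,2,15],[16,5,5,12],[9,16,11,7]],[],[],[],[[13,16,2,15],[5,1,15,2],[1,12,12,5],[4,7,2,16]],[],[[1,0,0,0],[15,3,11,6],[16,15,6,11],[14,9,15,3]],[[1,0,0,0],[12,3,11,6],[13,15,6,11],[12,9,15,3]],[],[],[],[],[],[],[],[],[[2,5,7,0],[16,12,10,0],[3,14,8,0],[11,12,4,1]],[],[],[],[[5,2,15,0],[13,15,2,0],[4,13,5,0],[13,10,15,1]],[],[[1,0,0,0],[4,2,15,0],[10,16,2,0],[16,3,5,1]],[[1,0,0,0],[5,2,15,0],[3,16,2,0],[4,3,5,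1]],[],[],[],[],[[10,14,0,0],[8,3,0,0],[11,6,1,0],[7,16,16,1]],[],[[1,0,0,0],[14,1,0,0],[5,8,1,0],[3,6,16,1]],[[1,0,0,0],[8,1,0,0],[10,8,1,0],[12,6,16,1]],[],[],[[1,0,0,0],[14,1,0,0],[15,16,1,0],[11,9,16,1]],[[1,0,0,0],[8,1,0,0],[6,16,1,0],[2,9,16,1]],[],[],[],[],[],[],[],[],[],[],[],[],[],[],[],[],[],[],[],[],[],[],[],[],[],[],[],[],[],[],[],[],[],[],[],[],[],[],[],[],[],[],[],[],[],[],[],[],[],[],[],[],[],[],[],[],[],[],[],[],[],[],[],[],[],[],[],[],[]]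
def tbl59 : List (List (List Nat)) := [[],[],[],[],[],[],[],[],[],[],[],[],[],[],[],[],[],[],[],[],[],[],[],[],[],[],[],[],[],[],[],[[1,0,0,0,0],[16,1,0,0,0],[3,12,3,11,6],[3,13,15,6,11],[2,12,9,15,3]],[],[],[],[],[],[],[],[],[],[],[],[],[],[],[],[[1,0,0,0,0],[16,1,0,0,0],[16,5,2,15,0],[7,3,16,2,0],[12,4,3,5,1]],[],[],[],[],[],[],[],[[1,0,0,0,0],[16,1,0,0,0],[6,8,1,0,0],[12,10,8,1,0],[8,12,6,16,1]],[],[],[],[[1,0,0,0,0],[16,1,0,0,0],[6,8,1,0,0],[9,6,16,1,0],[9,2,9,16,1]],[],[],[],[],[],[],[],[],[],[],[],[],[],[],[],[],[],[],[],[],[],[],[],[],[],[],[],[],[],[],[],[],[],[],[],[],[],[],[],[],[],[],[],[],[],[],[],[],[],[],[],[],[],[],[],[],[],[],[],[],[],[],[],[],[],[],[],[]]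
def tbl60 : List (List (List Nat)) := [[],[],[],[],[],[],[],[],[],[],[],[],[],[],[],[[3,16,3,13],[5,16,8,3],[3,10,16,16],[11,3,5,3]],[],[],[],[],[],[],[],[[15,10,10,7],[9,14,16,1],[10,15,13,4],[12,11,7,11]],[],[],[],[[10,11,12,5],[13,3,11,6],[6,9,1,16],[7,12,9,9]],[],[[5,2,13,4],[7,16,2,15],[12,13,10,7],[2,3,10,8]],[[4,5,7,10],[14,12,10,7],[1,12,12,5],[14,1,14,4]],[],[],[],[],[],[],[],[],[[12,3,4,0],[11,13,3,0],[1,11,12,0],[15,1,13,1]],[],[],[],[[8,10,7,0],[14,12,5,0],[3,16,2,0],[14,7,1,1]],[],[[4,9,8,0],[16,4,13,0],[6,4,14,0],[13,11,14,1]],[[3,11,6,0],[15,6,11,0],[9,15,3,0],[12,13,12,1]],[],[],[],[],[[6,5,0,0],[15,6,0,0],[10,8,1,0],[11,8,16,1]],[],[[3,14,0,0],[8,10,0,0],[15,10,1,0],[9,14,16,1]],[[2,15,0,0],[16,2,0,0],[3,5,1,0],[7,16,16,1]],[],[],[[2,0,0,0],[11,1,0,0],[13,16,1,0],[5,9,1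6,1]],[[1,0,0,0],[8,1,0,0],[6,16,1,0],[2,9,16,1]],[],[[1,0,0,0],[16,1,0,0],[9,16,1,0],[14,9,16,1]],[],[],[],[],[],[],[],[],[],[],[],[],[],[],[],[],[],[],[],[],[],[],[],[],[],[],[],[],[],[],[],[],[],[],[],[],[],[],[],[],[],[],[],[],[],[],[],[],[],[],[],[],[],[],[],[],[],[],[],[],[],[],[],[],[],[],[]]
def tbl61 : List (List (List Nat)) := [[],[],[],[],[],[],[],[],[],[],[],[],[],[],[],[],[],[],[],[],[],[],[],[],[],[],[],[],[],[],[],[[1,0,0,0,0],[6,4,5,7,10],[2,14,12,10,7],[9,1,12,12,5],[1,14,1,14,4]],[],[],[],[],[],[],[],[],[],[],[],[],[],[],[],[[1,0,0,0,0],[12,3,11,6,0],[13,15,6,11,0],[12,9,15,3,0],[13,12,13,12,1]],[],[],[],[],[],[],[],[[1,0,0,0,0],[5,2,15,0,0],[3,16,2,0,0],[4,3,5,1,0],[12,7,16,16,1]],[],[],[],[[1,0,0,0,0],[8,1,0,0,0],[10,8,1,0,0],[12,6,16,1,0],[10,2,9,16,1]],[],[[1,0,0,0,0],[8,1,0,0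,0],[6,16,1,0,0],[2,9,16,1,0],[4,14,9,16,1]],[],[],[],[],[],[],[],[],[],[],[],[],[],[],[],[],[],[],[],[],[],[],[],[],[],[],[],[],[],[],[],[],[],[],[],[],[],[],[],[],[],[],[],[],[],[],[],[],[],[],[],[],[],[],[],[],[],[],[],[],[],[],[],[],[],[]]
def tbl62 : List (List (List Nat)) := [[],[],[],[],[],[],[],[],[],[],[],[],[],[],[],[],[],[],[],[],[],[],[],[],[],[],[],[],[],[],[],[[5,14,9,16,1],[13,3,8,1,16],[10,8,13,8,9],[11,8,8,3,14],[5,11,10,13,5]],[],[],[],[],[],[],[],[],[],[],[],[],[],[],[],[[4,5,7,10,0],[14,12,10,7,0],[1,12,12,5,0],[14,1,14,4,0],[1,9,2,6,1]],[],[],[],[],[],[],[],[[3,11,6,0,0],[15,6,11,0,0],[9,15,3,0,0],[12,13,12,1,0],[2,3,3,16,1]],[],[],[],[[2,15,0,0,0],[16,2,0,0,0],[3,5,1,0,0],[7,16,16,1,0],[3,16,9,16,1]],[],[[1,0,0,0,0],[8,1,0,0,0],[6,16,1,0,0],[2,9,16,1,0],[4,14,9,16,1]],[[1,0,0,0,0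],[16,1,0,0,0],[9,16,1,0,0],[14,9,16,1,0],[5,14,9,16,1]],[],[],[],[],[],[],[],[],[],[],[],[],[],[],[],[],[],[],[],[],[],[],[],[],[],[],[],[],[],[],[],[],[],[],[],[],[],[],[],[],[],[],[],[],[],[],[],[],[],[],[],[],[],[],[],[],[],[],[],[],[],[],[],[],[]]
def tbl63 : List (List (List Nat)) := [[],[],[],[],[],[],[],[],[],[],[],[],[],[],[],[],[],[],[],[],[],[],[],[],[],[],[],[],[],[],[],[],[],[],[],[],[],[],[],[],[],[],[],[],[],[],[],[],[],[],[],[],[],[],[],[],[],[],[],[],[],[],[],[[1,0,0,0,0,0],[16,1,0,0,0,0],[9,16,1,0,0,0],[14,9,16,1,0,0],[5,14,9,16,1,0],[16,5,14,9,16,1]],[],[],[],[],[],[],[],[],[],[],[],[],[],[],[],[],[],[],[],[],[],[],[],[],[],[],[],[],[],[],[],[],[],[],[],[],[],[],[],[],[],[],[],[],[],[],[],[],[],[],[],[],[],[],[],[],[],[],[],[],[],[],[],[]]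
def tbl64 : List (List (List Nat)) := [[],[[6]],[[1]],[],[[7]],[],[],[],[[6]],[],[],[],[],[],[],[],[[2]],[],[],[],[],[],[],[],[],[],[],[],[],[],[],[],[[1]],[],[],[],[],[],[],[],[],[],[],[],[],[],[],[],[],[],[],[],[],[],[],[],[],[],[],[],[],[],[],[],[[1]],[],[],[],[],[],[],[],[],[],[],[],[],[],[],[],[],[],[],[],[],[],[],[],[],[],[],[],[],[],[],[],[],[],[],[],[],[],[],[],[],[],[],[],[],[],[],[],[],[],[],[],[],[],[],[],[],[],[],[],[],[],[],[]]
def tbl65 : List (List (List Nat)) := [[],[],[],[[1,0],[14,1]],[],[[1,0],[13,7]],[],[],[],[[1,0],[16,6]],[],[],[],[],[],[],[],[[1,0],[11,2]],[],[],[],[],[],[],[],[],[],[],[],[],[],[],[],[[1,0],[14,1]],[],[],[],[],[],[],[],[],[],[],[],[],[],[],[],[],[],[],[],[],[],[],[],[],[],[],[],[],[],[],[],[[1,0],[14,1]],[],[],[],[],[],[],[],[],[],[],[],[],[],[],[],[],[],[],[],[],[],[],[],[],[],[],[],[],[],[],[],[],[],[],[],[],[],[],[],[],[],[],[],[],[]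,[],[],[],[],[],[],[],[],[],[],[],[],[],[],[],[],[]]
def tbl66 : List (List (List Nat)) := [[],[],[],[[8,9],[10,8]],[],[[1,0],[13,7]],[[1,0],[10,7]],[],[],[[1,0],[16,6]],[[1,0],[11,6]],[],[],[],[],[],[],[[1,0],[11,2]],[[1,0],[15,2]],[],[],[],[],[],[],[],[],[],[],[],[],[],[],[[1,0],[14,1]],[[1,0],[16,1]],[],[],[],[],[],[],[],[],[],[],[],[],[],[],[],[],[],[],[],[],[],[],[],[],[],[],[],[],[],[],[[1,0],[14,1]],[[1,0],[16,1]],[],[],[],[],[],[],[],[],[],[],[],[],[],[],[],[],[],[],[],[],[],[],[],[],[],[],[],[],[],[],[],[],[],[],[],[],[],[],[],[],[],[],[],[],[],[],[],[],[],[],[],[],[],[],[],[],[],[],[],[],[]]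
def tbl67 : List (List (List Nat)) := [[],[],[],[],[],[],[],[[1,0,0],[16,1,0],[3,10,7]],[],[],[],[[1,0,0],[16,1,0],[5,11,6]],[],[],[],[],[],[],[],[[1,0,0],[16,1,0],[13,15,2]],[],[],[],[],[],[],[],[],[],[],[],[],[],[],[],[[1,0,0],[16,1,0],[15,16,1]],[],[],[],[],[],[],[],[],[],[],[],[],[],[],[],[],[],[],[],[],[],[],[],[],[],[],[],[],[],[],[],[[1,0,0],[16,1,0],[15,16,1]],[],[],[],[],[],[],[],[],[],[],[],[],[],[],[],[],[],[],[],[],[],[],[],[],[],[],[],[],[],[],[],[],[],[],[],[],[],[],[],[],[],[],[],[],[],[],[],[],[],[],[],[],[],[],[],[],[],[],[],[]]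
def tbl68 : List (List (List Nat)) := [[],[],[],[[3,14],[8,10]],[],[[7,2],[6,16]],[[14,4],[4,13]],[],[],[[2,0],[15,6]],[[1,0],[11,6]],[],[[1,0],[4,6]],[],[],[],[],[[2,0],[5,2]],[[1,0],[15,2]],[],[[1,0],[7,2]],[],[],[],[],[],[],[],[],[],[],[],[],[[2,0],[11,1]],[[1,0],[16,1]],[],[[1,0],[12,1]],[],[],[],[],[],[],[],[],[],[],[],[],[],[],[],[],[],[],[],[],[],[],[],[],[],[],[],[],[[2,0],[11,1]],[[1,0],[16,1]],[],[[1,0],[12,1]],[],[],[],[],[],[],[],[],[],[],[],[],[],[],[],[],[],[],[],[],[],[],[],[],[],[],[],[],[],[],[],[],[],[],[],[],[],[],[],[],[],[],[],[],[],[],[],[],[],[],[],[],[],[],[],[],[],[],[]]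
def tbl69 : List (List (List Nat)) := [[],[],[],[],[],[],[],[[1,0,0],[15,14,4],[10,4,13]],[],[],[],[[1,0,0],[8,1,0],[2,11,6]],[],[[1,0,0],[8,1,0],[14,4,6]],[],[],[],[],[],[[1,0,0],[8,1,0],[12,15,2]],[],[[1,0,0],[8,1,0],[16,7,2]],[],[],[],[],[],[],[],[],[],[],[],[],[],[[1,0,0],[8,1,0],[6,16,1]],[],[[1,0,0],[8,1,0],[8,12,1]],[],[],[],[],[],[],[],[],[],[],[],[],[],[],[],[],[],[],[],[],[],[],[],[],[],[],[],[],[],[[1,0,0],[8,1,0],[6,16,1]],[],[[1,0,0],[8,1,0],[8,12,1]],[],[],[],[],[],[],[],[],[],[],[],[],[],[],[],[],[],[],[],[],[],[],[],[],[],[],[],[],[],[],[],[],[],[],[],[],[],[],[],[],[],[],[],[],[],[],[],[],[],[],[],[],[],[],[],[],[],[]]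
def tbl70 : List (List (List Nat)) := [[],[],[],[],[],[],[],[[16,14,4],[2,3,13],[7,8,2]],[],[],[],[[2,15,0],[16,2,0],[4,7,6]],[],[[1,0,0],[8,1,0],[14,4,6]],[[1,0,0],[16,1,0],[7,4,6]],[],[],[],[],[[2,15,0],[16,2,0],[7,8,2]],[],[[1,0,0],[8,1,0],[16,7,2]],[[1,0,0],[16,1,0],[8,7,2]],[],[],[],[],[],[],[],[],[],[],[],[],[[2,15,0],[16,2,0],[12,4,1]],[],[[1,0,0],[8,1,0],[8,12,1]],[[1,0,0],[16,1,0],[4,12,1]],[],[],[],[],[],[],[],[],[],[],[],[],[],[],[],[],[],[],[],[],[],[],[],[],[],[],[],[],[[2,15,0],[16,2,0],[12,4,1]],[],[[1,0,0],[8,1,0],[8,12,1]],[[1,0,0],[16,1,0],[4,12,1]],[],[],[],[],[],[],[],[],[],[],[],[],[],[],[],[],[],[],[],[],[],[],[],[],[],[],[],[],[],[],[],[],[],[],[],[],[],[],[],[],[],[],[],[],[],[],[],[],[],[],[],[],[],[],[],[],[]]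
def tbl71 : List (List (List Nat)) := [[],[],[],[],[],[],[],[],[],[],[],[],[],[],[],[[1,0,0,0],[16,1,0,0],[9,16,1,0],[7,7,4,6]],[],[],[],[],[],[],[],[[1,0,0,0],[16,1,0,0],[9,16,1,0],[8,8,7,2]],[],[],[],[],[],[],[],[],[],[],[],[],[],[],[],[[1,0,0,0],[16,1,0,0],[9,16,1,0],[4,4,12,1]],[],[],[],[],[],[],[],[],[],[],[],[],[],[],[],[],[],[],[],[],[],[],[],[],[],[],[],[],[],[],[],[[1,0,0,0],[16,1,0,0],[9,16,1,0],[4,4,12,1]],[],[],[],[],[],[],[],[],[],[],[],[],[],[],[],[],[],[],[],[],[],[],[],[],[],[],[],[],[],[],[],[],[],[],[],[],[],[],[],[],[],[],[],[],[],[],[],[],[],[],[],[],[],[],[],[]]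
def tbl72 : List (List (List Nat)) := [[],[],[],[[12,11],[15,2]],[],[[16,7],[4,13]],[[9,5],[5,6]],[],[],[[9,14],[8,9]],[[6,15],[15,1]],[],[[7,9],[11,8]],[],[],[],[],[[6,0],[15,2]],[[2,0],[13,2]],[],[[1,0],[7,2]],[],[],[],[[1,0],[11,2]],[],[],[],[],[],[],[],[],[[6,0],[16,1]],[[2,0],[15,1]],[],[[1,0],[12,1]],[],[],[],[[1,0],[14,1]],[],[],[],[],[],[],[],[],[],[],[],[],[],[],[],[],[],[],[],[],[],[],[],[],[[6,0],[16,1]],[[2,0],[15,1]],[],[[1,0],[12,1]],[],[],[],[[1,0],[14,1]],[],[],[],[],[],[],[],[],[],[],[],[],[],[],[],[],[],[],[],[],[],[],[],[],[],[],[],[],[],[],[],[],[],[],[],[],[],[],[],[],[],[],[],[],[],[],[],[],[],[],[],[],[],[],[]]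
def tbl73 : List (List (List Nat)) := [[],[],[],[],[],[],[],[[1,0,0],[9,9,5],[1,5,6]],[],[],[],[[1,0,0],[5,6,15],[3,15,1]],[],[[1,0,0],[3,7,9],[11,11,8]],[],[],[],[],[],[[1,0,0],[11,2,0],[6,13,2]],[],[[1,0,0],[14,1,0],[7,7,2]],[],[],[],[[1,0,0],[14,1,0],[12,11,2]],[],[],[],[],[],[],[],[],[],[[1,0,0],[11,2,0],[3,15,1]],[],[[1,0,0],[14,1,0],[12,12,1]],[],[],[],[[1,0,0],[14,1,0],[6,14,1]],[],[],[],[],[],[],[],[],[],[],[],[],[],[],[],[],[],[],[],[],[],[],[],[],[],[[1,0,0],[11,2,0],[3,15,1]],[],[[1,0,0],[14,1,0],[12,12,1]],[],[],[],[[1,0,0],[14,1,0],[6,14,1]],[],[],[],[],[],[],[],[],[],[],[],[],[],[],[],[],[],[],[],[],[],[],[],[],[],[],[],[],[],[],[],[],[],[],[],[],[],[],[],[],[],[],[],[],[],[],[],[],[],[],[],[],[],[]]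
def tbl74 : List (List (List Nat)) := [[],[],[],[],[],[],[],[[12,11,8],[6,6,9],[12,16,14]],[],[],[],[[3,16,6],[15,1,11],[9,12,2]],[],[[1,0,0],[3,7,9],[11,11,8]],[[1,0,0],[13,7,9],[12,11,8]],[],[],[],[],[[10,14,0],[8,3,0],[9,12,2]],[],[[1,0,0],[14,1,0],[7,7,2]],[[1,0,0],[8,1,0],[3,7,2]],[],[],[[1,0,0],[14,1,0],[12,11,2]],[[1,0,0],[8,1,0],[1,11,2]],[],[],[],[],[],[],[],[],[[10,14,0],[8,3,0],[13,6,1]],[],[[1,0,0],[14,1,0],[12,12,1]],[[1,0,0],[8,1,0],[10,12,1]],[],[],[[1,0,0],[14,1,0],[6,14,1]],[[1,0,0],[8,1,0],[9,14,1]],[],[],[],[],[],[],[],[],[],[],[],[],[],[],[],[],[],[],[],[],[],[],[],[],[[10,14,0],[8,3,0],[13,6,1]],[],[[1,0,0],[14,1,0],[12,12,1]],[[1,0,0],[8,1,0],[10,12,1]],[],[],[[1,0,0],[14,1,0],[6,14,1]],[[1,0,0],[8,1,0],[9,14,1]],[],[],[],[],[],[],[],[],[],[],[],[],[],[],[],[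],[],[],[],[],[],[],[],[],[],[],[],[],[],[],[],[],[],[],[],[],[],[],[],[],[],[],[],[],[],[],[],[],[],[],[],[],[]]
def tbl75 : List (List (List Nat)) := [[],[],[],[],[],[],[],[],[],[],[],[],[],[],[],[[1,0,0,0],[16,1,0,0],[7,13,7,9],[16,12,11,8]],[],[],[],[],[],[],[],[[1,0,0,0],[16,1,0,0],[6,8,1,0],[4,3,7,2]],[],[],[],[[1,0,0,0],[16,1,0,0],[6,8,1,0],[11,1,11,2]],[],[],[],[],[],[],[],[],[],[],[],[[1,0,0,0],[16,1,0,0],[6,8,1,0],[2,10,12,1]],[],[],[],[[1,0,0,0],[16,1,0,0],[6,8,1,0],[14,9,14,1]],[],[],[],[],[],[],[],[],[],[],[],[],[],[],[],[],[],[],[],[],[],[],[],[],[],[],[],[[1,0,0,0],[16,1,0,0],[6,8,1,0],[2,10,12,1]],[],[],[],[[1,0,0,0],[16,1,0,0],[6,8,1,0],[14,9,14,1]],[],[],[],[],[],[],[],[],[],[],[],[],[],[],[],[],[],[],[],[],[],[],[],[],[],[],[],[],[],[],[],[],[],[],[],[],[],[],[],[],[],[],[],[],[],[],[],[],[],[]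,[],[]]
def tbl76 : List (List (List Nat)) := [[],[],[],[],[],[],[],[[9,10,3],[13,14,15],[9,15,9]],[],[],[],[[11,2,5],[4,16,6],[16,4,16]],[],[[10,15,12],[13,1,11],[8,6,4]],[[11,8,3],[7,9,14],[13,5,10]],[],[],[],[],[[6,5,0],[15,6,0],[2,9,2]],[],[[3,14,0],[8,10,0],[4,3,2]],[[2,15,0],[16,2,0],[6,1,2]],[],[],[[2,0,0],[11,1,0],[7,11,2]],[[1,0,0],[8,1,0],[1,11,2]],[],[[1,0,0],[16,1,0],[13,11,2]],[],[],[],[],[],[],[[6,5,0],[15,6,0],[1,13,1]],[],[[3,14,0],[8,10,0],[2,10,1]],[[2,15,0],[16,2,0],[3,9,1]],[],[],[[2,0,0],[11,1,0],[12,14,1]],[[1,0,0],[8,1,0],[9,14,1]],[],[[1,0,0],[16,1,0],[15,14,1]],[],[],[],[],[],[],[],[],[],[],[],[],[],[],[],[],[],[],[],[],[],[],[[6,5,0],[15,6,0],[1,13,1]],[],[[3,14,0],[8,10,0],[2,10,1]],[[2,15,0],[16,2,0],[3,9,1]],[],[],[[2,0,0],[11,1,0],[12,14,1]],[[1,0,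0],[8,1,0],[9,14,1]],[],[[1,0,0],[16,1,0],[15,14,1]],[],[],[],[],[],[],[],[],[],[],[],[],[],[],[],[],[],[],[],[],[],[],[],[],[],[],[],[],[],[],[],[],[],[],[],[],[],[],[],[],[],[],[],[],[],[],[],[],[],[],[]]
def tbl77 : List (List (List Nat)) := [[],[],[],[],[],[],[],[],[],[],[],[],[],[],[],[[1,0,0,0],[4,11,8,3],[4,7,9,14],[8,13,5,10]],[],[],[],[],[],[],[],[[1,0,0,0],[5,2,15,0],[3,16,2,0],[5,6,1,2]],[],[],[],[[1,0,0,0],[8,1,0,0],[10,8,1,0],[3,1,11,2]],[],[[1,0,0,0],[8,1,0,0],[6,16,1,0],[14,13,11,2]],[],[],[],[],[],[],[],[],[],[[1,0,0,0],[5,2,15,0],[3,16,2,0],[11,3,9,1]],[],[],[],[[1,0,0,0],[8,1,0,0],[10,8,1,0],[10,9,14,1]],[],[[1,0,0,0],[8,1,0,0],[6,16,1,0],[7,15,14,1]],[],[],[],[],[],[],[],[],[],[],[],[],[],[],[],[],[],[],[],[],[],[],[],[],[],[[1,0,0,0],[5,2,15,0],[3,16,2,0],[11,3,9,1]],[],[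],[],[[1,0,0,0],[8,1,0,0],[10,8,1,0],[10,9,14,1]],[],[[1,0,0,0],[8,1,0,0],[6,16,1,0],[7,15,14,1]],[],[],[],[],[],[],[],[],[],[],[],[],[],[],[],[],[],[],[],[],[],[],[],[],[],[],[],[],[],[],[],[],[],[],[],[],[],[],[],[],[],[],[],[],[],[],[],[],[],[]]
def tbl78 : List (List (List Nat)) := [[],[],[],[],[],[],[],[],[],[],[],[],[],[],[],[[7,8,12,13],[11,9,5,4],[11,5,6,15],[5,9,16,12]],[],[],[],[],[],[],[],[[3,11,6,0],[15,6,11,0],[9,15,3,0],[15,10,14,2]],[],[],[],[[2,15,0,0],[16,2,0,0],[3,5,1,0],[6,12,11,2]],[],[[1,0,0,0],[8,1,0,0],[6,16,1,0],[14,13,11,2]],[[1,0,0,0],[16,1,0,0],[9,16,1,0],[5,13,11,2]],[],[],[],[],[],[],[],[],[[3,11,6,0],[15,6,11,0],[9,15,3,0],[16,5,7,1]],[],[],[],[[2,15,0,0],[16,2,0,0],[3,5,1,0],[3,6,14,1]],[],[[1,0,0,0],[8,1,0,0],[6,16,1,0],[7,15,14,1]],[[1,0,0,0],[16,1,0,0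],[9,16,1,0],[11,15,14,1]],[],[],[],[],[],[],[],[],[],[],[],[],[],[],[],[],[],[],[],[],[],[],[],[],[[3,11,6,0],[15,6,11,0],[9,15,3,0],[16,5,7,1]],[],[],[],[[2,15,0,0],[16,2,0,0],[3,5,1,0],[3,6,14,1]],[],[[1,0,0,0],[8,1,0,0],[6,16,1,0],[7,15,14,1]],[[1,0,0,0],[16,1,0,0],[9,16,1,0],[11,15,14,1]],[],[],[],[],[],[],[],[],[],[],[],[],[],[],[],[],[],[],[],[],[],[],[],[],[],[],[],[],[],[],[],[],[],[],[],[],[],[],[],[],[],[],[],[],[],[],[],[],[]]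
def tbl79 : List (List (List Nat)) := [[],[],[],[],[],[],[],[],[],[],[],[],[],[],[],[],[],[],[],[],[],[],[],[],[],[],[],[],[],[],[],[[1,0,0,0,0],[16,1,0,0,0],[9,16,1,0,0],[14,9,16,1,0],[9,5,13,11,2]],[],[],[],[],[],[],[],[],[],[],[],[],[],[],[],[[1,0,0,0,0],[16,1,0,0,0],[9,16,1,0,0],[14,9,16,1,0],[13,11,15,14,1]],[],[],[],[],[],[],[],[],[],[],[],[],[],[],[],[],[],[],[],[],[],[],[],[],[],[],[],[],[],[],[],[[1,0,0,0,0],[16,1,0,0,0],[9,16,1,0,0],[14,9,16,1,0],[13,11,15,14,1]],[],[],[],[],[],[],[],[],[],[],[],[],[],[],[],[],[],[],[],[],[],[],[],[],[],[],[],[],[],[],[],[],[],[],[],[],[],[],[],[],[],[],[],[],[],[],[],[]]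
def tbl80 : List (List (List Nat)) := [[],[],[],[[4,5],[5,3]],[],[[6,13],[10,6]],[[15,7],[14,9]],[],[],[[13,7],[4,16]],[[11,2],[2,11]],[],[[4,10],[16,12]],[],[],[],[],[[16,2],[6,7]],[[1,15],[15,6]],[],[[16,2],[10,16]],[],[],[],[[10,14],[8,3]],[],[],[],[],[],[],[],[],[[7,0],[13,1]],[[6,0],[11,1]],[],[[2,0],[7,1]],[],[],[],[[1,0],[14,1]],[],[],[],[],[],[],[],[[1,0],[8,1]],[],[],[],[],[],[],[],[],[],[],[],[],[],[],[],[],[[7,0],[13,1]],[[6,0],[11,1]],[],[[2,0],[7,1]],[],[],[],[[1,0],[14,1]],[],[],[],[],[],[],[],[[1,0],[8,1]],[],[],[],[],[],[],[],[],[],[],[],[],[],[],[],[],[],[],[],[],[],[],[],[],[],[],[],[],[],[],[],[],[],[],[],[],[],[],[],[],[],[],[],[],[],[],[]]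
def tbl81 : List (List (List Nat)) := [[],[],[],[],[],[],[],[[1,0,0],[6,15,7],[5,14,9]],[],[],[],[[1,0,0],[7,11,2],[8,2,11]],[],[[1,0,0],[1,4,10],[3,16,12]],[],[],[],[],[],[[1,0,0],[1,1,15],[9,15,6]],[],[[1,0,0],[16,16,2],[4,10,16]],[],[],[],[[1,0,0],[10,10,14],[2,8,3]],[],[],[],[],[],[],[],[],[],[[1,0,0],[4,6,0],[10,11,1]],[],[[1,0,0],[7,2,0],[13,7,1]],[],[],[],[[1,0,0],[12,1,0],[12,14,1]],[],[],[],[],[],[],[],[[1,0,0],[12,1,0],[8,8,1]],[],[],[],[],[],[],[],[],[],[],[],[],[],[],[],[],[],[[1,0,0],[4,6,0],[10,11,1]],[],[[1,0,0],[7,2,0],[13,7,1]],[],[],[],[[1,0,0],[12,1,0],[12,14,1]],[],[],[],[],[],[],[],[[1,0,0],[12,1,0],[8,8,1]],[],[],[],[],[],[],[],[],[],[],[],[],[],[],[],[],[],[],[],[],[],[],[],[],[],[],[],[],[],[],[],[],[],[],[],[],[],[],[],[],[],[],[],[],[],[]]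
def tbl82 : List (List (List Nat)) := [[],[],[],[],[],[],[],[[5,10,16],[13,7,1],[8,13,4]],[],[],[],[[15,5,4],[3,12,13],[1,8,9]],[],[[1,0,0],[1,4,10],[3,16,12]],[[1,0,0],[12,4,10],[8,16,12]],[],[],[],[],[[9,8,1],[9,9,16],[13,2,15]],[],[[1,0,0],[16,16,2],[4,10,16]],[[1,0,0],[1,16,2],[5,10,16]],[],[],[[1,0,0],[10,10,14],[2,8,3]],[[1,0,0],[7,10,14],[7,8,3]],[],[],[],[],[],[],[],[],[[7,9,0],[11,8,0],[2,16,1]],[],[[1,0,0],[7,2,0],[13,7,1]],[[1,0,0],[11,2,0],[12,7,1]],[],[],[[1,0,0],[12,1,0],[12,14,1]],[[1,0,0],[14,1,0],[8,14,1]],[],[],[],[],[],[],[[1,0,0],[12,1,0],[8,8,1]],[[1,0,0],[14,1,0],[9,8,1]],[],[],[],[],[],[],[],[],[],[],[],[],[],[],[],[],[[7,9,0],[11,8,0],[2,16,1]],[],[[1,0,0],[7,2,0],[13,7,1]],[[1,0,0],[11,2,0],[12,7,1]],[],[],[[1,0,0],[12,1,0],[12,14,1]],[[1,0,0],[14,1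,0],[8,14,1]],[],[],[],[],[],[],[[1,0,0],[12,1,0],[8,8,1]],[[1,0,0],[14,1,0],[9,8,1]],[],[],[],[],[],[],[],[],[],[],[],[],[],[],[],[],[],[],[],[],[],[],[],[],[],[],[],[],[],[],[],[],[],[],[],[],[],[],[],[],[],[],[],[],[]]
def tbl83 : List (List (List Nat)) := [[],[],[],[],[],[],[],[],[],[],[],[],[],[],[],[[1,0,0,0],[16,1,0,0],[6,12,4,10],[12,8,16,12]],[],[],[],[],[],[],[],[[1,0,0,0],[16,1,0,0],[15,1,16,2],[16,5,10,16]],[],[],[],[[1,0,0,0],[16,1,0,0],[3,7,10,14],[12,7,8,3]],[],[],[],[],[],[],[],[],[],[],[],[[1,0,0,0],[16,1,0,0],[13,11,2,0],[1,12,7,1]],[],[],[],[[1,0,0,0],[16,1,0,0],[15,14,1,0],[4,8,14,1]],[],[],[],[],[],[],[],[[1,0,0,0],[16,1,0,0],[15,14,1,0],[16,9,8,1]],[],[],[],[],[],[],[],[],[],[],[],[],[],[],[],[],[],[],[],[[1,0,0,0],[16,1,0,0],[13,11,2,0],[1,12,7,1]],[],[],[],[[1,0,0,0],[16,1,0,0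],[15,14,1,0],[4,8,14,1]],[],[],[],[],[],[],[],[[1,0,0,0],[16,1,0,0],[15,14,1,0],[16,9,8,1]],[],[],[],[],[],[],[],[],[],[],[],[],[],[],[],[],[],[],[],[],[],[],[],[],[],[],[],[],[],[],[],[],[],[],[],[],[],[],[],[],[],[],[],[]]
def tbl84 : List (List (List Nat)) := [[],[],[],[],[],[],[],[[6,13,6],[2,8,9],[13,11,5]],[],[],[],[[16,11,2],[10,3,16],[9,5,10]],[],[[12,3,16],[12,7,9],[2,8,9]],[[4,1,11],[14,16,6],[15,7,15]],[],[],[],[],[[12,5,7],[12,6,5],[6,9,1]],[],[[15,15,4],[2,1,15],[9,2,15]],[[9,9,16],[9,8,1],[11,4,11]],[],[],[[2,0,0],[3,10,14],[4,8,3]],[[1,0,0],[7,10,14],[7,8,3]],[],[[1,0,0],[10,10,14],[15,8,3]],[],[],[],[],[],[],[[4,10,0],[16,12,0],[6,9,1]],[],[[16,2,0],[10,16,0],[4,16,1]],[[10,14,0],[8,3,0],[1,5,1]],[],[],[[2,0,0],[7,1,0],[7,14,1]],[[1,0,0],[14,1,0],[8,14,1]],[],[[1,0,0],[8,1,0],[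5,14,1]],[],[],[],[],[[2,0,0],[7,1,0],[16,8,1]],[[1,0,0],[14,1,0],[9,8,1]],[],[[1,0,0],[8,1,0],[8,8,1]],[],[],[],[],[],[],[],[],[],[],[],[],[],[],[[4,10,0],[16,12,0],[6,9,1]],[],[[16,2,0],[10,16,0],[4,16,1]],[[10,14,0],[8,3,0],[1,5,1]],[],[],[[2,0,0],[7,1,0],[7,14,1]],[[1,0,0],[14,1,0],[8,14,1]],[],[[1,0,0],[8,1,0],[5,14,1]],[],[],[],[],[[2,0,0],[7,1,0],[16,8,1]],[[1,0,0],[14,1,0],[9,8,1]],[],[[1,0,0],[8,1,0],[8,8,1]],[],[],[],[],[],[],[],[],[],[],[],[],[],[],[],[],[],[],[],[],[],[],[],[],[],[],[],[],[],[],[],[],[],[],[],[],[],[],[],[],[],[],[]]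
def tbl85 : List (List (List Nat)) := [[],[],[],[],[],[],[],[],[],[],[],[],[],[],[],[[1,0,0,0],[11,4,1,11],[14,14,16,6],[6,15,7,15]],[],[],[],[],[],[],[],[[1,0,0,0],[13,9,9,16],[12,9,8,1],[1,11,4,11]],[],[],[],[[1,0,0,0],[8,1,0,0],[15,7,10,14],[7,7,8,3]],[],[[1,0,0,0],[8,1,0,0],[5,10,10,14],[3,15,8,3]],[],[],[],[],[],[],[],[],[],[[1,0,0,0],[10,10,14,0],[15,8,3,0],[14,1,5,1]],[],[],[],[[1,0,0,0],[8,1,0,0],[5,14,1,0],[8,8,14,1]],[],[[1,0,0,0],[8,1,0,0],[8,8,1,0],[1,5,14,1]],[],[],[],[],[],[[1,0,0,0],[8,1,0,0],[5,14,1,0],[12,9,8,1]],[],[[1,0,0,0],[8,1,0,0],[8,8,1,0],[4,8,8,1]],[],[],[],[],[],[],[],[],[],[],[],[],[],[],[],[],[],[[1,0,0,0],[10,10,14,0],[15,8,3,0],[14,1,5,1]],[],[],[],[[1,0,0,0],[8,1,0,0],[5,14,1,0],[8,8,14,1]],[],[[1,0,0,0],[8,1,0,0],[8,8,1,0],[1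,5,14,1]],[],[],[],[],[],[[1,0,0,0],[8,1,0,0],[5,14,1,0],[12,9,8,1]],[],[[1,0,0,0],[8,1,0,0],[8,8,1,0],[4,8,8,1]],[],[],[],[],[],[],[],[],[],[],[],[],[],[],[],[],[],[],[],[],[],[],[],[],[],[],[],[],[],[],[],[],[],[],[],[],[],[],[],[],[],[]]
def tbl86 : List (List (List Nat)) := [[],[],[],[],[],[],[],[],[],[],[],[],[],[],[],[[10,11,7,9],[8,6,10,8],[4,15,12,13],[9,13,15,1]],[],[],[],[],[],[],[],[[11,3,3,11],[7,14,14,6],[13,11,10,14],[11,14,7,5]],[],[],[],[[2,15,0,0],[16,2,0,0],[13,11,10,14],[14,10,8,3]],[],[[1,0,0,0],[8,1,0,0],[5,10,10,14],[3,15,8,3]],[[1,0,0,0],[16,1,0,0],[14,10,10,14],[9,15,8,3]],[],[],[],[],[],[],[],[],[[14,13,8,0],[4,4,9,0],[6,16,4,0],[9,13,15,1]],[],[],[],[[2,15,0,0],[16,2,0,0],[10,4,1,0],[16,9,14,1]],[],[[1,0,0,0],[8,1,0,0],[8,8,1,0],[1,5,14,1]],[[1,0,0,0],[16,1,0,0]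,[6,8,1,0],[3,5,14,1]],[],[],[],[],[[2,15,0,0],[16,2,0,0],[10,4,1,0],[7,2,8,1]],[],[[1,0,0,0],[8,1,0,0],[8,8,1,0],[4,8,8,1]],[[1,0,0,0],[16,1,0,0],[6,8,1,0],[1,8,8,1]],[],[],[],[],[],[],[],[],[],[],[],[],[],[],[],[],[[14,13,8,0],[4,4,9,0],[6,16,4,0],[9,13,15,1]],[],[],[],[[2,15,0,0],[16,2,0,0],[10,4,1,0],[16,9,14,1]],[],[[1,0,0,0],[8,1,0,0],[8,8,1,0],[1,5,14,1]],[[1,0,0,0],[16,1,0,0],[6,8,1,0],[3,5,14,1]],[],[],[],[],[[2,15,0,0],[16,2,0,0],[10,4,1,0],[7,2,8,1]],[],[[1,0,0,0],[8,1,0,0],[8,8,1,0],[4,8,8,1]],[[1,0,0,0],[16,1,0,0],[6,8,1,0],[1,8,8,1]],[],[],[],[],[],[],[],[],[],[],[],[],[],[],[],[],[],[],[],[],[],[],[],[],[],[],[],[],[],[],[],[],[],[],[],[],[],[],[],[],[]]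
def tbl87 : List (List (List Nat)) := [[],[],[],[],[],[],[],[],[],[],[],[],[],[],[],[],[],[],[],[],[],[],[],[],[],[],[],[],[],[],[],[[1,0,0,0,0],[16,1,0,0,0],[9,16,1,0,0],[8,14,10,10,14],[11,9,15,8,3]],[],[],[],[],[],[],[],[],[],[],[],[],[],[],[],[[1,0,0,0,0],[16,1,0,0,0],[9,16,1,0,0],[2,6,8,1,0],[15,3,5,14,1]],[],[],[],[],[],[],[],[[1,0,0,0,0],[16,1,0,0,0],[9,16,1,0,0],[2,6,8,1,0],[3,1,8,8,1]],[],[],[],[],[],[],[],[],[],[],[],[],[],[],[],[],[],[],[],[],[],[],[],[[1,0,0,0,0],[16,1,0,0,0],[9,16,1,0,0],[2,6,8,1,0],[15,3,5,14,1]],[],[],[],[],[],[],[],[[1,0,0,0,0],[16,1,0,0,0],[9,16,1,0,0],[2,6,8,1,0],[3,1,8,8,1]],[],[],[],[],[],[],[],[],[],[],[],[],[],[],[],[],[],[],[],[],[],[],[],[],[],[],[],[],[],[],[],[],[],[],[],[],[],[],[],[]]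
def tbl88 : List (List (List Nat)) := [[],[],[],[],[],[],[],[[14,5,12],[16,11,11],[2,5,1]],[],[],[],[[3,3,15],[4,15,5],[7,9,12]],[],[[5,2,9],[5,6,2],[15,5,5]],[[10,4,1],[1,1,5],[12,14,3]],[],[],[],[],[[10,12,10],[10,13,8],[5,4,11]],[],[[9,9,16],[8,7,3],[2,12,12]],[[12,12,10],[12,11,12],[9,2,15]],[],[],[[4,11,12],[6,1,15],[8,13,10]],[[16,10,14],[10,12,10],[10,10,16]],[],[[14,13,8],[4,4,9],[6,16,4]],[],[],[],[],[],[],[[7,13,0],[11,7,0],[2,5,1]],[],[[12,10,0],[16,4,0],[3,1,1]],[[6,5,0],[15,6,0],[4,16,1]],[],[],[[8,9,0],[11,7,0],[11,3,1]],[[3,14,0],[8,10,0],[7,7,1]],[],[[2,15,0],[16,2,0],[10,4,1]],[],[],[],[],[[6,0,0],[4,1,0],[14,8,1]],[[2,0,0],[11,1,0],[1,8,1]],[],[[1,0,0],[8,1,0],[8,8,1]],[],[],[],[[1,0,0],[16,1,0],[6,8,1]],[],[],[],[],[],[],[],[],[],[],[[7,13,0],[11,7,0],[2,5,1]],[],[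[12,10,0],[16,4,0],[3,1,1]],[[6,5,0],[15,6,0],[4,16,1]],[],[],[[8,9,0],[11,7,0],[11,3,1]],[[3,14,0],[8,10,0],[7,7,1]],[],[[2,15,0],[16,2,0],[10,4,1]],[],[],[],[],[[6,0,0],[4,1,0],[14,8,1]],[[2,0,0],[11,1,0],[1,8,1]],[],[[1,0,0],[8,1,0],[8,8,1]],[],[],[],[[1,0,0],[16,1,0],[6,8,1]],[],[],[],[],[],[],[],[],[],[],[],[],[],[],[],[],[],[],[],[],[],[],[],[],[],[],[],[],[],[],[],[],[],[],[],[],[],[],[]]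
def tbl89 : List (List (List Nat)) := [[],[],[],[],[],[],[],[],[],[],[],[],[],[],[],[[1,0,0,0],[15,10,4,1],[11,1,1,5],[4,12,14,3]],[],[],[],[],[],[],[],[[1,0,0,0],[10,12,12,10],[9,12,11,12],[3,9,2,15]],[],[],[],[[1,0,0,0],[13,16,10,14],[16,10,12,10],[8,10,10,16]],[],[[1,0,0,0],[5,14,13,8],[9,4,4,9],[9,6,16,4]],[],[],[],[],[],[],[],[],[],[[1,0,0,0],[8,6,5,0],[10,15,6,0],[7,4,16,1]],[],[],[],[[1,0,0,0],[6,3,14,0],[11,8,10,0],[9,7,7,1]],[],[[1,0,0,0],[4,2,15,0],[10,16,2,0],[15,10,4,1]],[],[],[],[],[],[[1,0,0,0],[11,2,0,0],[13,11,1,0],[5,1,8,1]],[],[[1,0,0,0],[14,1,0,0],[5,8,1,0],[1,8,8,1]],[],[],[],[[1,0,0,0],[14,1,0,0],[15,16,1,0],[7,6,8,1]],[],[],[],[],[],[],[],[],[],[],[],[],[],[[1,0,0,0],[8,6,5,0],[10,15,6,0],[7,4,16,1]],[],[],[],[[1,0,0,0],[6,3,14,0],[11,8,10,0],[9,7,7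,1]],[],[[1,0,0,0],[4,2,15,0],[10,16,2,0],[15,10,4,1]],[],[],[],[],[],[[1,0,0,0],[11,2,0,0],[13,11,1,0],[5,1,8,1]],[],[[1,0,0,0],[14,1,0,0],[5,8,1,0],[1,8,8,1]],[],[],[],[[1,0,0,0],[14,1,0,0],[15,16,1,0],[7,6,8,1]],[],[],[],[],[],[],[],[],[],[],[],[],[],[],[],[],[],[],[],[],[],[],[],[],[],[],[],[],[],[],[],[],[],[],[],[],[],[]]
def tbl90 : List (List (List Nat)) := [[],[],[],[],[],[],[],[],[],[],[],[],[],[],[],[[16,10,4,1],[2,7,13,16],[6,9,11,16],[13,1,13,7]],[],[],[],[],[],[],[],[[14,2,2,13],[4,15,15,4],[7,13,12,10],[8,15,8,3]],[],[],[],[[11,11,9,16],[7,6,8,1],[6,16,3,11],[3,13,14,8]],[],[[1,0,0,0],[5,14,13,8],[9,4,4,9],[9,6,16,4]],[[1,0,0,0],[14,14,13,8],[11,4,4,9],[13,6,16,4]],[],[],[],[],[],[],[],[],[[2,5,7,0],[16,12,10,0],[3,14,8,0],[14,5,14,1]],[],[],[],[[5,2,15,0],[13,15,2,0],[4,13,5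,0],[11,8,6,1]],[],[[1,0,0,0],[4,2,15,0],[10,16,2,0],[15,10,4,1]],[[1,0,0,0],[5,2,15,0],[3,16,2,0],[16,10,4,1]],[],[],[],[],[[10,14,0,0],[8,3,0,0],[11,6,1,0],[16,3,8,1]],[],[[1,0,0,0],[14,1,0,0],[5,8,1,0],[1,8,8,1]],[[1,0,0,0],[8,1,0,0],[10,8,1,0],[5,8,8,1]],[],[],[[1,0,0,0],[14,1,0,0],[15,16,1,0],[7,6,8,1]],[[1,0,0,0],[8,1,0,0],[6,16,1,0],[6,6,8,1]],[],[],[],[],[],[],[],[],[],[],[],[],[[2,5,7,0],[16,12,10,0],[3,14,8,0],[14,5,14,1]],[],[],[],[[5,2,15,0],[13,15,2,0],[4,13,5,0],[11,8,6,1]],[],[[1,0,0,0],[4,2,15,0],[10,16,2,0],[15,10,4,1]],[[1,0,0,0],[5,2,15,0],[3,16,2,0],[16,10,4,1]],[],[],[],[],[[10,14,0,0],[8,3,0,0],[11,6,1,0],[16,3,8,1]],[],[[1,0,0,0],[14,1,0,0],[5,8,1,0],[1,8,8,1]],[[1,0,0,0],[8,1,0,0],[10,8,1,0],[5,8,8,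1]],[],[],[[1,0,0,0],[14,1,0,0],[15,16,1,0],[7,6,8,1]],[[1,0,0,0],[8,1,0,0],[6,16,1,0],[6,6,8,1]],[],[],[],[],[],[],[],[],[],[],[],[],[],[],[],[],[],[],[],[],[],[],[],[],[],[],[],[],[],[],[],[],[],[],[],[],[]]
def tbl91 : List (List (List Nat)) := [[],[],[],[],[],[],[],[],[],[],[],[],[],[],[],[],[],[],[],[],[],[],[],[],[],[],[],[],[],[],[],[[1,0,0,0,0],[16,1,0,0,0],[8,14,14,13,8],[15,11,4,4,9],[13,13,6,16,4]],[],[],[],[],[],[],[],[],[],[],[],[],[],[],[],[[1,0,0,0,0],[16,1,0,0,0],[16,5,2,15,0],[7,3,16,2,0],[16,16,10,4,1]],[],[],[],[],[],[],[],[[1,0,0,0,0],[16,1,0,0,0],[6,8,1,0,0],[12,10,8,1,0],[13,5,8,8,1]],[],[],[],[[1,0,0,0,0],[16,1,0,0,0],[6,8,1,0,0],[9,6,16,1,0],[1,6,6,8,1]],[],[],[],[],[],[],[],[],[],[],[],[],[],[],[],[],[],[],[],[[1,0,0,0,0],[16,1,0,0,0],[16,5,2,15,0],[7,3,16,2,0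],[16,16,10,4,1]],[],[],[],[],[],[],[],[[1,0,0,0,0],[16,1,0,0,0],[6,8,1,0,0],[12,10,8,1,0],[13,5,8,8,1]],[],[],[],[[1,0,0,0,0],[16,1,0,0,0],[6,8,1,0,0],[9,6,16,1,0],[1,6,6,8,1]],[],[],[],[],[],[],[],[],[],[],[],[],[],[],[],[],[],[],[],[],[],[],[],[],[],[],[],[],[],[],[],[],[],[],[],[]]
def tbl92 : List (List (List Nat)) := [[],[],[],[],[],[],[],[],[],[],[],[],[],[],[],[[1,6,12,11],[15,15,14,13],[11,16,14,7],[4,2,11,13]],[],[],[],[],[],[],[],[[14,4,1,15],[4,1,5,7],[7,14,3,11],[8,4,5,9]],[],[],[],[[7,7,15,4],[6,5,1,15],[10,3,14,6],[5,15,11,14]],[],[[11,16,10,14],[4,9,12,10],[14,12,9,16],[14,14,4,11]],[[8,7,15,4],[10,10,2,13],[3,13,16,2],[2,12,7,5]],[],[],[],[],[],[],[],[],[[12,3,4,0],[11,13,3,0],[1,11,12,0],[16,8,10,1]],[],[],[],[[8,10,7,0],[14,12,5,0],[3,16,2,0],[4,12,2,1]],[],[[4,9,8,0],[16,4,13,0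],[6,4,14,0],[9,9,5,1]],[[3,11,6,0],[15,6,11,0],[9,15,3,0],[14,16,15,1]],[],[],[],[],[[6,5,0,0],[15,6,0,0],[10,8,1,0],[13,9,8,1]],[],[[3,14,0,0],[8,10,0,0],[15,10,1,0],[3,5,8,1]],[[2,15,0,0],[16,2,0,0],[3,5,1,0],[10,15,8,1]],[],[],[[2,0,0,0],[11,1,0,0],[13,16,1,0],[14,6,8,1]],[[1,0,0,0],[8,1,0,0],[6,16,1,0],[6,6,8,1]],[],[[1,0,0,0],[16,1,0,0],[9,16,1,0],[2,6,8,1]],[],[],[],[],[],[],[],[],[],[],[[12,3,4,0],[11,13,3,0],[1,11,12,0],[16,8,10,1]],[],[],[],[[8,10,7,0],[14,12,5,0],[3,16,2,0],[4,12,2,1]],[],[[4,9,8,0],[16,4,13,0],[6,4,14,0],[9,9,5,1]],[[3,11,6,0],[15,6,11,0],[9,15,3,0],[14,16,15,1]],[],[],[],[],[[6,5,0,0],[15,6,0,0],[10,8,1,0],[13,9,8,1]],[],[[3,14,0,0],[8,10,0,0],[15,10,1,0],[3,5,8,1]],[[2,15,0,0],[16,2,0,0],[3,5,1,0],[10,1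5,8,1]],[],[],[[2,0,0,0],[11,1,0,0],[13,16,1,0],[14,6,8,1]],[[1,0,0,0],[8,1,0,0],[6,16,1,0],[6,6,8,1]],[],[[1,0,0,0],[16,1,0,0],[9,16,1,0],[2,6,8,1]],[],[],[],[],[],[],[],[],[],[],[],[],[],[],[],[],[],[],[],[],[],[],[],[],[],[],[],[],[],[],[],[],[],[],[]]
def tbl93 : List (List (List Nat)) := [[],[],[],[],[],[],[],[],[],[],[],[],[],[],[],[],[],[],[],[],[],[],[],[],[],[],[],[],[],[],[],[[1,0,0,0,0],[7,8,7,15,4],[1,10,10,2,13],[1,3,13,16,2],[15,2,12,7,5]],[],[],[],[],[],[],[],[],[],[],[],[],[],[],[],[[1,0,0,0,0],[12,3,11,6,0],[13,15,6,11,0],[12,9,15,3,0],[3,14,16,15,1]],[],[],[],[],[],[],[],[[1,0,0,0,0],[5,2,15,0,0],[3,16,2,0,0],[4,3,5,1,0],[9,10,15,8,1]],[],[],[],[[1,0,0,0,0],[8,1,0,0,0],[10,8,1,0,0],[12,6,16,1,0],[4,6,6,8,1]],[],[[1,0,0,0,0],[8,1,0,0,0],[6,16,1,0,0],[2,9,1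6,1,0],[6,2,6,8,1]],[],[],[],[],[],[],[],[],[],[],[],[],[],[],[],[],[],[[1,0,0,0,0],[12,3,11,6,0],[13,15,6,11,0],[12,9,15,3,0],[3,14,16,15,1]],[],[],[],[],[],[],[],[[1,0,0,0,0],[5,2,15,0,0],[3,16,2,0,0],[4,3,5,1,0],[9,10,15,8,1]],[],[],[],[[1,0,0,0,0],[8,1,0,0,0],[10,8,1,0,0],[12,6,16,1,0],[4,6,6,8,1]],[],[[1,0,0,0,0],[8,1,0,0,0],[6,16,1,0,0],[2,9,16,1,0],[6,2,6,8,1]],[],[],[],[],[],[],[],[],[],[],[],[],[],[],[],[],[],[],[],[],[],[],[],[],[],[],[],[],[],[],[],[],[],[]]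
def tbl94 : List (List (List Nat)) := [[],[],[],[],[],[],[],[],[],[],[],[],[],[],[],[],[],[],[],[],[],[],[],[],[],[],[],[],[],[],[],[[15,16,14,13,8],[3,1,3,4,9],[15,9,7,15,4],[15,2,10,12,10],[4,4,1,15,6]],[],[],[],[],[],[],[],[],[],[],[],[],[],[],[],[[4,5,7,10,0],[14,12,10,7,0],[1,12,12,5,0],[14,1,14,4,0],[12,12,3,11,1]],[],[],[],[],[],[],[],[[3,11,6,0,0],[15,6,11,0,0],[9,15,3,0,0],[12,13,12,1,0],[10,7,1,8,1]],[],[],[],[[2,15,0,0,0],[16,2,0,0,0],[3,5,1,0,0],[7,16,16,1,0],[8,15,6,8,1]],[],[[1,0,0,0,0],[8,1,0,0,0],[6,16,1,0,0],[2,9,16,1,0],[6,2,6,8,1]],[[1,0,0,0,0],[16,1,0,0,0],[9,16,1,0,0],[14,9,16,1,0],[4,2,6,8,1]],[],[],[],[],[],[],[],[],[],[],[],[],[],[],[],[],[[4,5,7,10,0],[14,12,10,7,0],[1,12,12,5,0],[14,1,14,4,0],[12,12,3,11,1]],[],[],[],[],[],[],[],[[3,11,6,0,0],[15,6,11,0,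0],[9,15,3,0,0],[12,13,12,1,0],[10,7,1,8,1]],[],[],[],[[2,15,0,0,0],[16,2,0,0,0],[3,5,1,0,0],[7,16,16,1,0],[8,15,6,8,1]],[],[[1,0,0,0,0],[8,1,0,0,0],[6,16,1,0,0],[2,9,16,1,0],[6,2,6,8,1]],[[1,0,0,0,0],[16,1,0,0,0],[9,16,1,0,0],[14,9,16,1,0],[4,2,6,8,1]],[],[],[],[],[],[],[],[],[],[],[],[],[],[],[],[],[],[],[],[],[],[],[],[],[],[],[],[],[],[],[],[],[]]
def tbl95 : List (List (List Nat)) := [[],[],[],[],[],[],[],[],[],[],[],[],[],[],[],[],[],[],[],[],[],[],[],[],[],[],[],[],[],[],[],[],[],[],[],[],[],[],[],[],[],[],[],[],[],[],[],[],[],[],[],[],[],[],[],[],[],[],[],[],[],[],[],[[1,0,0,0,0,0],[16,1,0,0,0,0],[9,16,1,0,0,0],[14,9,16,1,0,0],[5,14,9,16,1,0],[2,4,2,6,8,1]],[],[],[],[],[],[],[],[],[],[],[],[],[],[],[],[],[],[],[],[],[],[],[],[],[],[],[],[],[],[],[],[[1,0,0,0,0,0],[16,1,0,0,0,0],[9,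16,1,0,0,0],[14,9,16,1,0,0],[5,14,9,16,1,0],[2,4,2,6,8,1]],[],[],[],[],[],[],[],[],[],[],[],[],[],[],[],[],[],[],[],[],[],[],[],[],[],[],[],[],[],[],[],[]]
def tbl96 : List (List (List Nat)) := [[],[],[],[[6,4],[16,6]],[],[[3,5],[5,4]],[[1,13],[10,1]],[],[],[[2,11],[15,12]],[[9,7],[14,15]],[],[[7,13],[11,7]],[],[],[],[],[[10,14],[8,3]],[[6,5],[5,9]],[],[[12,10],[16,4]],[],[],[],[[6,5],[15,6]],[],[],[],[],[],[],[],[],[[8,9],[10,8]],[[13,4],[4,14]],[],[[8,9],[11,7]],[],[],[],[[3,14],[8,10]],[],[],[],[],[],[],[],[[2,15],[16,2]],[],[],[],[],[],[],[],[],[],[],[],[],[],[],[],[],[[1,0],[14,1]],[[7,0],[10,1]],[],[[6,0],[4,1]],[],[],[],[[2,0],[11,1]],[],[],[],[],[],[],[],[[1,0],[8,1]],[],[],[],[],[],[],[],[],[],[],[],[],[],[],[],[[1,0],[16,1]],[],[],[],[],[],[],[],[],[],[],[],[],[],[],[],[],[],[],[],[],[],[],[],[],[],[],[],[],[],[],[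]]
def tbl97 : List (List (List Nat)) := [[],[],[],[],[],[],[],[[1,0,0],[11,1,13],[4,10,1]],[],[],[],[[1,0,0],[4,9,7],[9,14,15]],[],[[1,0,0],[5,7,13],[2,11,7]],[],[],[],[],[],[[1,0,0],[13,6,5],[2,5,9]],[],[[1,0,0],[9,12,10],[6,16,4]],[],[],[],[[1,0,0],[13,6,5],[1,15,6]],[],[],[],[],[],[],[],[],[],[[1,0,0],[9,13,4],[5,4,14]],[],[[1,0,0],[16,8,9],[2,11,7]],[],[],[],[[1,0,0],[6,3,14],[13,8,10]],[],[],[],[],[],[],[],[[1,0,0],[4,2,15],[12,16,2]],[],[],[],[],[],[],[],[],[],[],[],[],[],[],[],[],[],[[1,0,0],[10,7,0],[4,10,1]],[],[[1,0,0],[11,6,0],[10,4,1]],[],[],[],[[1,0,0],[15,2,0],[3,11,1]],[],[],[],[],[],[],[],[[1,0,0],[16,1,0],[6,8,1]],[],[],[],[],[],[],[],[],[],[],[],[],[],[],[],[[1,0,0],[16,1,0],[15,16,1]],[],[],[],[],[],[],[],[],[],[],[],[],[],[],[],[],[],[],[],[],[],[],[],[],[],[],[],[],[],[]]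
def tbl98 : List (List (List Nat)) := [[],[],[],[],[],[],[],[[10,7,6],[8,10,11],[6,4,8]],[],[],[],[[7,5,2],[11,12,15],[12,8,16]],[],[[1,0,0],[5,7,13],[2,11,7]],[[1,0,0],[3,7,13],[6,11,7]],[],[],[],[],[[11,2,13],[7,15,4],[5,9,1]],[],[[1,0,0],[9,12,10],[6,16,4]],[[1,0,0],[15,12,10],[1,16,4]],[],[],[[1,0,0],[13,6,5],[1,15,6]],[[1,0,0],[16,6,5],[4,15,6]],[],[],[],[],[],[],[],[],[[12,14,3],[6,3,14],[9,6,12]],[],[[1,0,0],[16,8,9],[2,11,7]],[[1,0,0],[2,8,9],[6,11,7]],[],[],[[1,0,0],[6,3,14],[13,8,10]],[[1,0,0],[5,3,14],[1,8,10]],[],[],[],[],[],[],[[1,0,0],[4,2,15],[12,16,2]],[[1,0,0],[9,2,15],[3,16,2]],[],[],[],[],[],[],[],[],[],[],[],[],[],[],[],[],[[14,4,0],[4,13,0],[5,9,1]],[],[[1,0,0],[11,6,0],[10,4,1]],[[1,0,0],[4,6,0],[13,4,1]],[],[],[[1,0,0],[15,2,0],[3,11,1]],[[1,0,0],[7,2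,0],[12,11,1]],[],[],[],[],[],[],[[1,0,0],[16,1,0],[6,8,1]],[[1,0,0],[12,1,0],[10,8,1]],[],[],[],[],[],[],[],[],[],[],[],[],[],[],[[1,0,0],[16,1,0],[15,16,1]],[[1,0,0],[12,1,0],[4,16,1]],[],[],[],[],[],[],[],[],[],[],[],[],[],[],[],[],[],[],[],[],[],[],[],[],[],[],[],[],[]]
def tbl99 : List (List (List Nat)) := [[],[],[],[],[],[],[],[],[],[],[],[],[],[],[],[[1,0,0,0],[16,1,0,0],[2,3,7,13],[13,6,11,7]],[],[],[],[],[],[],[],[[1,0,0,0],[16,1,0,0],[11,15,12,10],[5,1,16,4]],[],[],[],[[1,0,0,0],[16,1,0,0],[14,16,6,5],[14,4,15,6]],[],[],[],[],[],[],[],[],[],[],[],[[1,0,0,0],[16,1,0,0],[14,2,8,9],[13,6,11,7]],[],[],[],[[1,0,0,0],[16,1,0,0],[1,5,3,14],[12,1,8,10]],[],[],[],[],[],[],[],[[1,0,0,0],[16,1,0,0],[12,9,2,15],[9,3,16,2]],[],[],[],[],[],[],[],[],[],[],[],[],[],[],[],[],[],[],[],[[1,0,0,0],[16,1,0,0],[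7,4,6,0],[14,13,4,1]],[],[],[],[[1,0,0,0],[16,1,0,0],[8,7,2,0],[8,12,11,1]],[],[],[],[],[],[],[],[[1,0,0,0],[16,1,0,0],[4,12,1,0],[13,10,8,1]],[],[],[],[],[],[],[],[],[],[],[],[],[],[],[],[[1,0,0,0],[16,1,0,0],[4,12,1,0],[11,4,16,1]],[],[],[],[],[],[],[],[],[],[],[],[],[],[],[],[],[],[],[],[],[],[],[],[],[],[],[],[]]
def tbl100 : List (List (List Nat)) := [[],[],[],[],[],[],[],[[5,13,15],[4,8,8],[3,11,10]],[],[],[],[[4,15,6],[16,1,14],[2,13,1]],[],[[11,8,10],[4,13,12],[5,10,10]],[[13,11,1],[5,6,16],[10,9,13]],[],[],[],[],[[7,9,16],[6,4,9],[14,6,7]],[],[[1,5,7],[9,6,5],[6,12,12]],[[16,12,10],[2,5,7],[16,11,14]],[],[],[[2,0,0],[9,6,5],[2,15,6]],[[1,0,0],[16,6,5],[4,15,6]],[],[[1,0,0],[8,6,5],[10,15,6]],[],[],[],[],[],[],[[1,4,13],[9,15,2],[5,7,11]],[],[[15,16,1],[2,9,8],[13,9,9]],[[6,3,14],[12,14,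3],[2,12,6]],[],[],[[2,0,0],[12,3,14],[9,8,10]],[[1,0,0],[5,3,14],[1,8,10]],[],[[1,0,0],[6,3,14],[11,8,10]],[],[],[],[],[[2,0,0],[8,2,15],[7,16,2]],[[1,0,0],[9,2,15],[3,16,2]],[],[[1,0,0],[4,2,15],[10,16,2]],[],[],[],[],[],[],[],[],[],[],[],[],[],[],[[9,5,0],[5,6,0],[2,13,1]],[],[[6,15,0],[15,1,0],[9,1,1]],[[7,9,0],[11,8,0],[6,2,1]],[],[],[[2,0,0],[13,2,0],[6,11,1]],[[1,0,0],[7,2,0],[12,11,1]],[],[[1,0,0],[11,2,0],[13,11,1]],[],[],[],[],[[2,0,0],[15,1,0],[12,8,1]],[[1,0,0],[12,1,0],[10,8,1]],[],[[1,0,0],[14,1,0],[5,8,1]],[],[],[],[],[],[],[],[],[],[],[],[],[[2,0,0],[15,1,0],[13,16,1]],[[1,0,0],[12,1,0],[4,16,1]],[],[[1,0,0],[14,1,0],[15,16,1]],[],[],[],[],[],[],[],[],[],[],[],[],[],[],[],[],[],[],[],[],[],[],[],[],[],[],[]]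
def tbl101 : List (List (List Nat)) := [[],[],[],[],[],[],[],[],[],[],[],[],[],[],[],[[1,0,0,0],[5,13,11,1],[3,5,6,16],[15,10,9,13]],[],[],[],[],[],[],[],[[1,0,0,0],[1,16,12,10],[7,2,5,7],[7,16,11,14]],[],[],[],[[1,0,0,0],[8,1,0,0],[5,16,6,5],[16,4,15,6]],[],[[1,0,0,0],[8,1,0,0],[9,8,6,5],[13,10,15,6]],[],[],[],[],[],[],[],[],[],[[1,0,0,0],[3,6,3,14],[5,12,14,3],[3,2,12,6]],[],[],[],[[1,0,0,0],[8,1,0,0],[12,5,3,14],[4,1,8,10]],[],[[1,0,0,0],[8,1,0,0],[3,6,3,14],[16,11,8,10]],[],[],[],[],[],[[1,0,0,0],[8,1,0,0],[8,9,2,15],[2,3,16,2]],[],[[1,0,0,0],[8,1,0,0],[2,4,2,15],[7,10,16,2]],[],[],[],[],[],[],[],[],[],[],[],[],[],[],[],[],[],[[1,0,0,0],[13,7,9,0],[12,11,8,0],[9,6,2,1]],[],[],[],[[1,0,0,0],[8,1,0,0],[3,7,2,0],[14,12,11,1]],[],[[1,0,0,0],[8,1,0,0],[1,11,2,0],[5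,13,11,1]],[],[],[],[],[],[[1,0,0,0],[8,1,0,0],[10,12,1,0],[1,10,8,1]],[],[[1,0,0,0],[8,1,0,0],[9,14,1,0],[12,5,8,1]],[],[],[],[],[],[],[],[],[],[],[],[],[],[[1,0,0,0],[8,1,0,0],[10,12,1,0],[13,4,16,1]],[],[[1,0,0,0],[8,1,0,0],[9,14,1,0],[16,15,16,1]],[],[],[],[],[],[],[],[],[],[],[],[],[],[],[],[],[],[],[],[],[],[],[],[],[],[]]
def tbl102 : List (List (List Nat)) := [[],[],[],[],[],[],[],[],[],[],[],[],[],[],[],[[3,12,1,14],[15,5,16,3],[9,7,9,7],[11,3,7,2]],[],[],[],[],[],[],[],[[9,9,11,12],[9,8,6,5],[12,14,14,6],[12,11,3,13]],[],[],[],[[2,15,0,0],[16,2,0,0],[10,6,6,5],[15,6,15,6]],[],[[1,0,0,0],[8,1,0,0],[9,8,6,5],[13,10,15,6]],[[1,0,0,0],[16,1,0,0],[8,8,6,5],[11,10,15,6]],[],[],[],[],[],[],[],[],[[13,7,12,5],[5,10,5,12],[14,13,6,11],[5,6,14,4]],[],[],[],[[2,15,0,0],[16,2,0,0],[7,15,3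,14],[8,10,8,10]],[],[[1,0,0,0],[8,1,0,0],[3,6,3,14],[16,11,8,10]],[[1,0,0,0],[16,1,0,0],[16,6,3,14],[7,11,8,10]],[],[],[],[],[[2,15,0,0],[16,2,0,0],[16,10,2,15],[4,16,16,2]],[],[[1,0,0,0],[8,1,0,0],[2,4,2,15],[7,10,16,2]],[[1,0,0,0],[16,1,0,0],[5,4,2,15],[10,10,16,2]],[],[],[],[],[],[],[],[],[],[],[],[],[],[],[],[],[[11,8,3,0],[7,9,14,0],[13,5,10,0],[14,10,12,1]],[],[],[],[[2,15,0,0],[16,2,0,0],[6,1,2,0],[11,1,11,1]],[],[[1,0,0,0],[8,1,0,0],[1,11,2,0],[5,13,11,1]],[[1,0,0,0],[16,1,0,0],[13,11,2,0],[16,13,11,1]],[],[],[],[],[[2,15,0,0],[16,2,0,0],[3,9,1,0],[2,8,8,1]],[],[[1,0,0,0],[8,1,0,0],[9,14,1,0],[12,5,8,1]],[[1,0,0,0],[16,1,0,0],[15,14,1,0],[5,5,8,1]],[],[],[],[],[],[],[],[],[],[],[],[],[[2,15,0,0],[16,2,0,0],[3,9,1,0],[9,12,16,1]],[],[[1,0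,0,0],[8,1,0,0],[9,14,1,0],[16,15,16,1]],[[1,0,0,0],[16,1,0,0],[15,14,1,0],[6,15,16,1]],[],[],[],[],[],[],[],[],[],[],[],[],[],[],[],[],[],[],[],[],[],[],[],[],[]]
def tbl103 : List (List (List Nat)) := [[],[],[],[],[],[],[],[],[],[],[],[],[],[],[],[],[],[],[],[],[],[],[],[],[],[],[],[],[],[],[],[[1,0,0,0,0],[16,1,0,0,0],[9,16,1,0,0],[1,8,8,6,5],[2,11,10,15,6]],[],[],[],[],[],[],[],[],[],[],[],[],[],[],[],[[1,0,0,0,0],[16,1,0,0,0],[9,16,1,0,0],[4,16,6,3,14],[9,7,11,8,10]],[],[],[],[],[],[],[],[[1,0,0,0,0],[16,1,0,0,0],[9,16,1,0,0],[14,5,4,2,15],[14,10,10,16,2]],[],[],[],[],[],[],[],[],[],[],[],[],[],[],[],[],[],[],[],[],[],[],[],[[1,0,0,0,0],[16,1,0,0,0],[9,16,1,0,0],[5,13,11,2,0],[6,16,13,11,1]],[],[],[],[],[],[],[],[[1,0,0,0,0],[16,1,0,0,0],[9,16,1,0,0],[11,15,14,1,0],[7,5,5,8,1]],[],[],[],[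],[],[],[],[],[],[],[],[],[],[],[],[[1,0,0,0,0],[16,1,0,0,0],[9,16,1,0,0],[11,15,14,1,0],[10,6,15,16,1]],[],[],[],[],[],[],[],[],[],[],[],[],[],[],[],[],[],[],[],[],[],[],[],[]]
def tbl104 : List (List (List Nat)) := [[],[],[],[],[],[],[],[[13,8,13],[7,4,3],[1,8,2]],[],[],[],[[11,9,9],[10,11,9],[14,10,11]],[],[[12,5,15],[9,15,3],[7,4,3]],[[1,16,14],[3,4,4],[6,5,6]],[],[],[],[],[[1,14,6],[13,1,15],[2,16,4]],[],[[10,16,2],[5,3,11],[9,10,16]],[[5,8,1],[7,13,8],[5,7,5]],[],[],[[16,6,5],[4,16,2],[16,4,11]],[[15,12,10],[2,11,12],[9,12,12]],[],[[2,5,7],[16,12,10],[3,14,8]],[],[],[],[],[],[],[[16,15,2],[8,12,5],[12,11,7]],[],[[9,13,4],[8,12,5],[1,3,15]],[[14,7,10],[11,5,12],[16,2,16]],[],[],[[2,11,6],[12,1,16],[9,15,3]],[[11,1,16],[4,8,9],[11,9,9]],[],[[5,2,15],[13,15,2],[4,13,5]],[],[],[],[],[[6,0,0],[7,2,15],[4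,16,2]],[[2,0,0],[1,2,15],[6,16,2]],[],[[1,0,0],[4,2,15],[10,16,2]],[],[],[],[[1,0,0],[5,2,15],[3,16,2]],[],[],[],[],[],[],[],[],[],[],[[15,7,0],[14,9,0],[9,4,1]],[],[[11,2,0],[2,11,0],[8,7,1]],[[4,10,0],[16,12,0],[1,15,1]],[],[],[[1,15,0],[15,6,0],[3,5,1]],[[16,2,0],[10,16,0],[5,1,1]],[],[[10,14,0],[8,3,0],[11,6,1]],[],[],[],[],[[6,0,0],[11,1,0],[2,8,1]],[[2,0,0],[7,1,0],[3,8,1]],[],[[1,0,0],[14,1,0],[5,8,1]],[],[],[],[[1,0,0],[8,1,0],[10,8,1]],[],[],[],[],[],[],[],[],[[6,0,0],[11,1,0],[5,16,1]],[[2,0,0],[7,1,0],[8,16,1]],[],[[1,0,0],[14,1,0],[15,16,1]],[],[],[],[[1,0,0],[8,1,0],[6,16,1]],[],[],[],[],[],[],[],[],[],[],[],[],[],[],[],[],[],[],[],[],[],[],[]]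
def tbl105 : List (List (List Nat)) := [[],[],[],[],[],[],[],[],[],[],[],[],[],[],[],[[1,0,0,0],[7,1,16,14],[9,3,4,4],[10,6,5,6]],[],[],[],[],[],[],[],[[1,0,0,0],[8,5,8,1],[10,7,13,8],[14,5,7,5]],[],[],[],[[1,0,0,0],[15,15,12,10],[15,2,11,12],[10,9,12,12]],[],[[1,0,0,0],[2,2,5,7],[12,16,12,10],[4,3,14,8]],[],[],[],[],[],[],[],[],[],[[1,0,0,0],[6,14,7,10],[11,11,5,12],[4,16,2,16]],[],[],[],[[1,0,0,0],[3,11,1,16],[4,4,8,9],[16,11,9,9]],[],[[1,0,0,0],[6,5,2,15],[8,13,15,2],[11,4,13,5]],[],[],[],[],[],[[1,0,0,0],[11,2,0,0],[1,1,2,15],[11,6,16,2]],[],[[1,0,0,0],[14,1,0,0],[9,4,2,15],[16,10,16,2]],[],[],[],[[1,0,0,0],[14,1,0,0],[6,5,2,15],[3,3,16,2]],[],[],[],[],[],[],[],[],[],[],[],[],[],[[1,0,0,0],[12,4,10,0],[8,16,12,0],[13,1,15,1]],[],[],[],[[1,0,0,0],[1,16,2,0],[5,10,16,0],[15,5,1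,1]],[],[[1,0,0,0],[7,10,14,0],[7,8,3,0],[9,11,6,1]],[],[],[],[],[],[[1,0,0,0],[11,2,0,0],[12,7,1,0],[14,3,8,1]],[],[[1,0,0,0],[14,1,0,0],[8,14,1,0],[8,5,8,1]],[],[],[],[[1,0,0,0],[14,1,0,0],[9,8,1,0],[10,10,8,1]],[],[],[],[],[],[],[],[],[],[[1,0,0,0],[11,2,0,0],[12,7,1,0],[8,8,16,1]],[],[[1,0,0,0],[14,1,0,0],[8,14,1,0],[4,15,16,1]],[],[],[],[[1,0,0,0],[14,1,0,0],[9,8,1,0],[14,6,16,1]],[],[],[],[],[],[],[],[],[],[],[],[],[],[],[],[],[],[],[],[],[],[]]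
def tbl106 : List (List (List Nat)) := [[],[],[],[],[],[],[],[],[],[],[],[],[],[],[],[[15,2,15,11],[3,15,2,6],[16,4,3,1],[14,9,2,14]],[],[],[],[],[],[],[],[[2,7,1,15],[16,10,16,2],[3,9,6,5],[11,1,4,11]],[],[],[],[[16,15,12,10],[2,2,5,7],[2,6,4,9],[7,6,13,10]],[],[[1,0,0,0],[2,2,5,7],[12,16,12,10],[4,3,14,8]],[[1,0,0,0],[1,2,5,7],[7,16,12,10],[14,3,14,8]],[],[],[],[],[],[],[],[],[[5,15,16,1],[13,2,1,16],[4,6,11,6],[3,8,15,3]],[],[],[],[[13,10,4,13],[5,7,13,4],[1,10,7,10],[4,1,5,13]],[],[[1,0,0,0],[6,5,2,15],[8,13,15,2],[11,4,13,5]],[[1,0,0,0],[15,5,2,15],[10,13,15,2],[13,4,13,5]],[],[],[],[],[[10,14,0,0],[8,3,0,0],[10,15,2,15],[8,7,16,2]],[],[[1,0,0,0],[14,1,0,0],[9,4,2,15],[16,10,16,2]],[[1,0,0,0],[8,1,0,0],[7,4,2,15],[15,10,16,2]],[],[],[[1,0,0,0],[14,1,0,0],[6,5,2,15],[3,3,1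6,2]],[[1,0,0,0],[8,1,0,0],[15,5,2,15],[10,3,16,2]],[],[],[],[],[],[],[],[],[],[],[],[],[[4,1,11,0],[14,16,6,0],[15,7,15,0],[1,14,5,1]],[],[],[],[[9,9,16,0],[9,8,1,0],[11,4,11,0],[16,4,3,1]],[],[[1,0,0,0],[7,10,14,0],[7,8,3,0],[9,11,6,1]],[[1,0,0,0],[10,10,14,0],[15,8,3,0],[6,11,6,1]],[],[],[],[],[[10,14,0,0],[8,3,0,0],[1,5,1,0],[4,12,8,1]],[],[[1,0,0,0],[14,1,0,0],[8,14,1,0],[8,5,8,1]],[[1,0,0,0],[8,1,0,0],[5,14,1,0],[16,5,8,1]],[],[],[[1,0,0,0],[14,1,0,0],[9,8,1,0],[10,10,8,1]],[[1,0,0,0],[8,1,0,0],[8,8,1,0],[5,10,8,1]],[],[],[],[],[],[],[],[],[[10,14,0,0],[8,3,0,0],[1,5,1,0],[12,1,16,1]],[],[[1,0,0,0],[14,1,0,0],[8,14,1,0],[4,15,16,1]],[[1,0,0,0],[8,1,0,0],[5,14,1,0],[5,15,16,1]],[],[],[[1,0,0,0],[14,1,0,0],[9,8,1,0],[14,6,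16,1]],[[1,0,0,0],[8,1,0,0],[8,8,1,0],[1,6,16,1]],[],[],[],[],[],[],[],[],[],[],[],[],[],[],[],[],[],[],[],[],[]]
def tbl107 : List (List (List Nat)) := [[],[],[],[],[],[],[],[],[],[],[],[],[],[],[],[],[],[],[],[],[],[],[],[],[],[],[],[],[],[],[],[[1,0,0,0,0],[16,1,0,0,0],[1,1,2,5,7],[5,7,16,12,10],[7,14,3,14,8]],[],[],[],[],[],[],[],[],[],[],[],[],[],[],[],[[1,0,0,0,0],[16,1,0,0,0],[8,15,5,2,15],[15,10,13,15,2],[15,13,4,13,5]],[],[],[],[],[],[],[],[[1,0,0,0,0],[16,1,0,0,0],[6,8,1,0,0],[2,7,4,2,15],[1,15,10,16,2]],[],[],[],[[1,0,0,0,0],[16,1,0,0,0],[6,8,1,0,0],[8,15,5,2,15],[10,10,3,16,2]],[],[],[],[],[],[],[],[],[],[],[],[],[],[],[],[],[],[],[],[[1,0,0,0,0],[16,1,0,0,0],[14,10,10,14,0],[9,15,8,3,0],[3,6,11,6,1]],[],[],[],[],[],[],[],[[1,0,0,0,0],[16,1,0,0,0],[6,8,1,0,0],[3,5,14,1,0]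,[9,16,5,8,1]],[],[],[],[[1,0,0,0,0],[16,1,0,0,0],[6,8,1,0,0],[1,8,8,1,0],[5,5,10,8,1]],[],[],[],[],[],[],[],[],[],[],[],[[1,0,0,0,0],[16,1,0,0,0],[6,8,1,0,0],[3,5,14,1,0],[16,5,15,16,1]],[],[],[],[[1,0,0,0,0],[16,1,0,0,0],[6,8,1,0,0],[1,8,8,1,0],[13,1,6,16,1]],[],[],[],[],[],[],[],[],[],[],[],[],[],[],[],[],[],[],[],[]]
def tbl108 : List (List (List Nat)) := [[],[],[],[],[],[],[],[],[],[],[],[],[],[],[],[[15,8,6,2],[3,6,7,11],[16,7,7,5],[14,1,14,9]],[],[],[],[],[],[],[],[[12,9,3,11],[11,9,15,4],[1,12,9,16],[15,12,15,6]],[],[],[],[[5,10,8,1],[7,12,13,8],[7,16,12,10],[16,7,7,5]],[],[[14,6,15,4],[11,14,1,15],[15,3,5,7],[5,10,6,7]],[[9,16,6,5],[9,1,11,12],[12,9,3,11],[7,6,13,10]],[],[],[],[],[],[],[],[],[[2,1,10,7],[12,3,16,1],[5,5,13,4],[8,3,8,10]],[],[],[],[[10,9,7,10],[13,4,5,12]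,[6,6,2,15],[7,2,2,16]],[],[[8,11,1,16],[14,3,8,9],[13,16,6,11],[3,6,7,11]],[[16,5,2,15],[2,12,15,2],[7,12,1,16],[4,1,5,13]],[],[],[],[],[[6,5,0,0],[15,6,0,0],[6,6,2,15],[15,10,16,2]],[],[[3,14,0,0],[8,10,0,0],[10,11,2,15],[14,13,16,2]],[[2,15,0,0],[16,2,0,0],[14,7,2,15],[13,14,16,2]],[],[],[[2,0,0,0],[11,1,0,0],[12,5,2,15],[6,3,16,2]],[[1,0,0,0],[8,1,0,0],[15,5,2,15],[10,3,16,2]],[],[[1,0,0,0],[16,1,0,0],[16,5,2,15],[7,3,16,2]],[],[],[],[],[],[],[],[],[],[],[[10,4,1,0],[1,1,5,0],[12,14,3,0],[11,2,11,1]],[],[],[],[[12,12,10,0],[12,11,12,0],[9,2,15,0],[10,15,15,1]],[],[[16,10,14,0],[10,12,10,0],[10,10,16,0],[8,16,13,1]],[[14,13,8,0],[4,4,9,0],[6,16,4,0],[16,4,3,1]],[],[],[],[],[[6,5,0,0],[15,6,0,0],[4,16,1,0],[16,5,8,1]],[],[[3,14,0,0],[8,10,0,0],[7,7,1,0],[7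,15,8,1]],[[2,15,0,0],[16,2,0,0],[10,4,1,0],[15,7,8,1]],[],[],[[2,0,0,0],[11,1,0,0],[1,8,1,0],[3,10,8,1]],[[1,0,0,0],[8,1,0,0],[8,8,1,0],[5,10,8,1]],[],[[1,0,0,0],[16,1,0,0],[6,8,1,0],[12,10,8,1]],[],[],[],[],[],[],[[6,5,0,0],[15,6,0,0],[4,16,1,0],[14,14,16,1]],[],[[3,14,0,0],[8,10,0,0],[7,7,1,0],[12,3,16,1]],[[2,15,0,0],[16,2,0,0],[10,4,1,0],[10,5,16,1]],[],[],[[2,0,0,0],[11,1,0,0],[1,8,1,0],[11,6,16,1]],[[1,0,0,0],[8,1,0,0],[8,8,1,0],[1,6,16,1]],[],[[1,0,0,0],[16,1,0,0],[6,8,1,0],[9,6,16,1]],[],[],[],[],[],[],[],[],[],[],[],[],[],[],[],[],[],[],[]]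
def tbl109 : List (List (List Nat)) := [[],[],[],[],[],[],[],[],[],[],[],[],[],[],[],[],[],[],[],[],[],[],[],[],[],[],[],[],[],[],[],[[1,0,0,0,0],[3,9,16,6,5],[5,9,1,11,12],[16,12,9,3,11],[12,7,6,13,10]],[],[],[],[],[],[],[],[],[],[],[],[],[],[],[],[[1,0,0,0,0],[15,16,5,2,15],[10,2,12,15,2],[5,7,12,1,16],[2,4,1,5,13]],[],[],[],[],[],[],[],[[1,0,0,0,0],[5,2,15,0,0],[3,16,2,0,0],[10,14,7,2,15],[6,13,14,16,2]],[],[],[],[[1,0,0,0,0],[8,1,0,0,0],[10,8,1,0,0],[7,15,5,2,15],[15,10,3,16,2]],[],[[1,0,0,0,0],[8,1,0,0,0],[6,16,1,0,0],[15,16,5,2,15],[8,7,3,16,2]],[],[],[],[],[],[],[],[],[],[],[],[],[],[],[],[],[],[[1,0,0,0,0],[14,14,13,8,0],[11,4,4,9,0],[13,6,16,4,0],[8,16,4,3,1]],[],[],[],[],[],[],[],[[1,0,0,0,0],[5,2,15,0,0],[3,16,2,0,0],[16,10,4,1,0],[3,15,7,8,1]],[],[],[],[[1,0,0,0,0],[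8,1,0,0,0],[10,8,1,0,0],[5,8,8,1,0],[16,5,10,8,1]],[],[[1,0,0,0,0],[8,1,0,0,0],[6,16,1,0,0],[6,6,8,1,0],[4,12,10,8,1]],[],[],[],[],[],[],[],[],[],[[1,0,0,0,0],[5,2,15,0,0],[3,16,2,0,0],[16,10,4,1,0],[12,10,5,16,1]],[],[],[],[[1,0,0,0,0],[8,1,0,0,0],[10,8,1,0,0],[5,8,8,1,0],[5,1,6,16,1]],[],[[1,0,0,0,0],[8,1,0,0,0],[6,16,1,0,0],[6,6,8,1,0],[1,9,6,16,1]],[],[],[],[],[],[],[],[],[],[],[],[],[],[],[],[],[],[]]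
def tbl110 : List (List (List Nat)) := [[],[],[],[],[],[],[],[],[],[],[],[],[],[],[],[],[],[],[],[],[],[],[],[],[],[],[],[],[],[],[],[[13,2,13,7,3],[5,15,4,10,14],[14,2,15,12,10],[4,10,13,13,8],[3,14,9,12,12]],[],[],[],[],[],[],[],[],[],[],[],[],[],[],[],[[16,16,5,2,15],[2,1,12,15,2],[7,9,11,1,16],[12,2,3,11,6],[15,2,11,9,9]],[],[],[],[],[],[],[],[[3,11,6,0,0],[15,6,11,0,0],[9,15,3,0,0],[13,5,16,2,15],[1,11,16,16,2]],[],[],[],[[2,15,0,0,0],[16,2,0,0,0],[3,5,1,0,0],[14,1,5,2,15],[13,14,3,16,2]],[],[[1,0,0,0,0],[8,1,0,0,0],[6,16,1,0,0],[15,16,5,2,15],[8,7,3,16,2]],[[1,0,0,0,0],[16,1,0,0,0],[9,16,1,0,0],[16,16,5,2,15],[3,7,3,16,2]],[],[],[],[],[],[],[],[],[],[],[],[],[],[],[],[],[[8,7,15,4,0],[10,10,2,13,0],[3,13,16,2,0],[2,12,7,5,0],[13,4,5,1,1]],[],[],[],[],[],[],[],[[3,11,6,0,0],[15,6,11,0,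0],[9,15,3,0,0],[14,16,15,1,0],[9,14,8,8,1]],[],[],[],[[2,15,0,0,0],[16,2,0,0,0],[3,5,1,0,0],[10,15,8,1,0],[15,7,10,8,1]],[],[[1,0,0,0,0],[8,1,0,0,0],[6,16,1,0,0],[6,6,8,1,0],[4,12,10,8,1]],[[1,0,0,0,0],[16,1,0,0,0],[9,16,1,0,0],[2,6,8,1,0],[10,12,10,8,1]],[],[],[],[],[],[],[],[],[[3,11,6,0,0],[15,6,11,0,0],[9,15,3,0,0],[14,16,15,1,0],[2,6,9,16,1]],[],[],[],[[2,15,0,0,0],[16,2,0,0,0],[3,5,1,0,0],[10,15,8,1,0],[10,8,6,16,1]],[],[[1,0,0,0,0],[8,1,0,0,0],[6,16,1,0,0],[6,6,8,1,0],[1,9,6,16,1]],[[1,0,0,0,0],[16,1,0,0,0],[9,16,1,0,0],[2,6,8,1,0],[9,9,6,16,1]],[],[],[],[],[],[],[],[],[],[],[],[],[],[],[],[],[]]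
def tbl111 : List (List (List Nat)) := [[],[],[],[],[],[],[],[],[],[],[],[],[],[],[],[],[],[],[],[],[],[],[],[],[],[],[],[],[],[],[],[],[],[],[],[],[],[],[],[],[],[],[],[],[],[],[],[],[],[],[],[],[],[],[],[],[],[],[],[],[],[],[],[[1,0,0,0,0,0],[16,1,0,0,0,0],[9,16,1,0,0,0],[14,9,16,1,0,0],[16,16,16,5,2,15],[5,3,7,3,16,2]],[],[],[],[],[],[],[],[],[],[],[],[],[],[],[],[],[],[],[],[],[],[],[],[],[],[],[],[],[],[],[],[[1,0,0,0,0,0],[16,1,0,0,0,0],[9,16,1,0,0,0],[14,9,16,1,0,0],[4,2,6,8,1,0],[11,10,12,10,8,1]],[],[],[],[],[],[],[],[],[],[],[],[],[],[],[],[[1,0,0,0,0,0],[16,1,0,0,0,0],[9,16,1,0,0,0],[14,9,16,1,0,0],[4,2,6,8,1,0],[9,9,9,6,16,1]],[],[],[],[],[],[],[],[],[],[],[],[],[],[],[],[]]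
def tbl112 : List (List (List Nat)) := [[],[],[],[],[],[],[],[[3,10,9],[16,9,10],[12,16,3]],[],[],[],[[2,3,13],[8,4,8],[1,7,13]],[],[[1,11,12],[5,11,5],[2,16,14]],[[9,14,6],[10,15,14],[3,10,9]],[],[],[],[],[[10,8,15],[11,8,13],[3,4,5]],[],[[5,9,6],[11,8,13],[13,2,6]],[[6,4,14],[5,4,16],[6,3,1]],[],[],[[9,15,3],[15,14,10],[9,13,9]],[[3,5,1],[14,1,4],[12,1,10]],[],[[12,3,4],[11,13,3],[1,11,12]],[],[],[],[],[],[],[[8,11,6],[4,10,7],[6,8,10]],[],[[4,1,16],[13,7,10],[8,13,5]],[[13,16,1],[9,6,11],[10,5,13]],[],[],[[14,9,8],[16,6,11],[12,6,12]],[[15,6,11],[7,16,1],[15,14,4]],[],[[8,10,7],[14,12,5],[3,16,2]],[],[],[],[],[[2,13,4],[8,3,14],[7,2,16]],[[10,14,3],[5,9,8],[13,7,11]],[],[[4,9,8],[16,4,13],[6,4,14]],[],[],[],[[3,11,6],[15,6,11],[9,15,3]],[],[],[],[],[],[],[],[],[],[],[[1,13,0],[10,1,0],[4,11,1]],[],[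[9,7,0],[14,15,0],[5,6,1]],[[7,13,0],[11,7,0],[6,3,1]],[],[],[[6,5,0],[5,9,0],[1,9,1]],[[12,10,0],[16,4,0],[8,12,1]],[],[[6,5,0],[15,6,0],[10,8,1]],[],[],[],[],[[13,4,0],[4,14,0],[10,15,1]],[[8,9,0],[11,7,0],[12,13,1]],[],[[3,14,0],[8,10,0],[15,10,1]],[],[],[],[[2,15,0],[16,2,0],[3,5,1]],[],[],[],[],[],[],[],[],[[7,0,0],[10,1,0],[3,16,1]],[[6,0,0],[4,1,0],[7,16,1]],[],[[2,0,0],[11,1,0],[13,16,1]],[],[],[],[[1,0,0],[8,1,0],[6,16,1]],[],[],[],[],[],[],[],[[1,0,0],[16,1,0],[9,16,1]],[],[],[],[],[],[],[],[],[],[],[],[],[],[],[]]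
def tbl113 : List (List (List Nat)) := [[],[],[],[],[],[],[],[],[],[],[],[],[],[],[],[[1,0,0,0],[8,9,14,6],[12,10,15,14],[16,3,10,9]],[],[],[],[],[],[],[],[[1,0,0,0],[9,6,4,14],[8,5,4,16],[15,6,3,1]],[],[],[],[[1,0,0,0],[11,3,5,1],[2,14,1,4],[11,12,1,10]],[],[[1,0,0,0],[10,12,3,4],[8,11,13,3],[16,1,11,12]],[],[],[],[],[],[],[],[],[],[[1,0,0,0],[1,13,16,1],[1,9,6,11],[8,10,5,13]],[],[],[],[[1,0,0,0],[5,15,6,11],[14,7,16,1],[1,15,14,4]],[],[[1,0,0,0],[14,8,10,7],[5,14,12,5],[14,3,16,2]],[],[],[],[],[],[[1,0,0,0],[12,10,14,3],[10,5,9,8],[14,13,7,11]],[],[[1,0,0,0],[15,4,9,8],[13,16,4,13],[9,6,4,14]],[],[],[],[[1,0,0,0],[7,3,11,6],[5,15,6,11],[16,9,15,3]],[],[],[],[],[],[],[],[],[],[],[],[],[],[[1,0,0,0],[3,7,13,0],[6,11,7,0],[15,6,3,1]],[],[],[],[[1,0,0,0],[15,12,10,0],[1,16,4,0],[13,8,1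2,1]],[],[[1,0,0,0],[16,6,5,0],[4,15,6,0],[7,10,8,1]],[],[],[],[],[],[[1,0,0,0],[2,8,9,0],[6,11,7,0],[9,12,13,1]],[],[[1,0,0,0],[5,3,14,0],[1,8,10,0],[14,15,10,1]],[],[],[],[[1,0,0,0],[9,2,15,0],[3,16,2,0],[11,3,5,1]],[],[],[],[],[],[],[],[],[],[[1,0,0,0],[4,6,0,0],[13,4,1,0],[14,7,16,1]],[],[[1,0,0,0],[7,2,0,0],[12,11,1,0],[1,13,16,1]],[],[],[],[[1,0,0,0],[12,1,0,0],[10,8,1,0],[2,6,16,1]],[],[],[],[],[],[],[],[[1,0,0,0],[12,1,0,0],[4,16,1,0],[4,9,16,1]],[],[],[],[],[],[],[],[],[],[],[],[],[],[]]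
def tbl114 : List (List (List Nat)) := [[],[],[],[],[],[],[],[],[],[],[],[],[],[],[],[[2,16,6,5],[16,1,11,12],[7,15,2,6],[15,4,4,4]],[],[],[],[],[],[],[],[[12,13,3,2],[6,4,14,15],[11,7,11,15],[10,14,14,14]],[],[],[],[[10,4,1,7],[8,13,16,10],[3,5,3,1],[8,5,12,2]],[],[[1,0,0,0],[10,12,3,4],[8,11,13,3],[16,1,11,12]],[[1,0,0,0],[13,12,3,4],[1,11,13,3],[15,1,11,12]],[],[],[],[],[],[],[],[],[[9,2,9,8],[9,15,8,9],[9,11,15,2],[4,9,9,9]],[],[],[],[[3,6,16,1],[15,11,1,16],[8,6,2,15],[3,4,13,5]],[],[[1,0,0,0],[14,8,10,7],[5,14,12,5],[14,3,16,2]],[[1,0,0,0],[4,8,10,7],[12,14,12,5],[11,3,16,2]],[],[],[],[],[[4,11,12,5],[14,6,5,12],[6,13,10,7],[5,14,5,13]],[],[[1,0,0,0],[15,4,9,8],[13,16,4,13],[9,6,4,14]],[[1,0,0,0],[3,4,9,8],[4,16,4,13],[16,6,4,14]],[],[],[[1,0,0,0],[7,3,11,6],[5,15,6,11],[16,9,1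5,3]],[[1,0,0,0],[15,3,11,6],[16,15,6,11],[14,9,15,3]],[],[],[],[],[],[],[],[],[],[],[],[],[[13,11,1,0],[5,6,16,0],[10,9,13,0],[8,1,1,1]],[],[],[],[[16,12,10,0],[2,5,7,0],[16,11,14,0],[4,11,6,1]],[],[[1,0,0,0],[16,6,5,0],[4,15,6,0],[7,10,8,1]],[[1,0,0,0],[8,6,5,0],[10,15,6,0],[14,10,8,1]],[],[],[],[],[[6,3,14,0],[12,14,3,0],[2,12,6,0],[3,5,3,1]],[],[[1,0,0,0],[5,3,14,0],[1,8,10,0],[14,15,10,1]],[[1,0,0,0],[6,3,14,0],[11,8,10,0],[6,15,10,1]],[],[],[[1,0,0,0],[9,2,15,0],[3,16,2,0],[11,3,5,1]],[[1,0,0,0],[4,2,15,0],[10,16,2,0],[16,3,5,1]],[],[],[],[],[],[],[],[],[[7,9,0,0],[11,8,0,0],[6,2,1,0],[13,14,16,1]],[],[[1,0,0,0],[7,2,0,0],[12,11,1,0],[1,13,16,1]],[[1,0,0,0],[11,2,0,0],[13,11,1,0],[16,13,16,1]],[],[],[[1,0,0,0],[12,1,0,0],[10,8,1,0],[2,6,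16,1]],[[1,0,0,0],[14,1,0,0],[5,8,1,0],[3,6,16,1]],[],[],[],[],[],[],[[1,0,0,0],[12,1,0,0],[4,16,1,0],[4,9,16,1]],[[1,0,0,0],[14,1,0,0],[15,16,1,0],[11,9,16,1]],[],[],[],[],[],[],[],[],[],[],[],[],[]]
def tbl115 : List (List (List Nat)) := [[],[],[],[],[],[],[],[],[],[],[],[],[],[],[],[],[],[],[],[],[],[],[],[],[],[],[],[],[],[],[],[[1,0,0,0,0],[16,1,0,0,0],[14,13,12,3,4],[7,1,11,13,3],[1,15,1,11,12]],[],[],[],[],[],[],[],[],[],[],[],[],[],[],[],[[1,0,0,0,0],[16,1,0,0,0],[10,4,8,10,7],[10,12,14,12,5],[3,11,3,16,2]],[],[],[],[],[],[],[],[[1,0,0,0,0],[16,1,0,0,0],[12,3,4,9,8],[9,4,16,4,13],[10,16,6,4,14]],[],[],[],[[1,0,0,0,0],[16,1,0,0,0],[9,15,3,11,6],[6,16,15,6,11],[2,14,9,15,3]],[],[],[],[],[],[],[],[],[],[],[],[],[],[],[],[],[],[],[],[[1,0,0,0,0],[16,1,0,0,0],[8,8,6,5,0],[11,10,15,6,0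],[10,14,10,8,1]],[],[],[],[],[],[],[],[[1,0,0,0,0],[16,1,0,0,0],[16,6,3,14,0],[7,11,8,10,0],[8,6,15,10,1]],[],[],[],[[1,0,0,0,0],[16,1,0,0,0],[5,4,2,15,0],[10,10,16,2,0],[12,16,3,5,1]],[],[],[],[],[],[],[],[],[],[],[],[[1,0,0,0,0],[16,1,0,0,0],[13,11,2,0,0],[16,13,11,1,0],[2,16,13,16,1]],[],[],[],[[1,0,0,0,0],[16,1,0,0,0],[15,14,1,0,0],[5,5,8,1,0],[16,3,6,16,1]],[],[],[],[],[],[],[],[[1,0,0,0,0],[16,1,0,0,0],[15,14,1,0,0],[6,15,16,1,0],[10,11,9,16,1]],[],[],[],[],[],[],[],[],[],[],[],[]]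
def tbl116 : List (List (List Nat)) := [[],[],[],[],[],[],[],[],[],[],[],[],[],[],[],[[10,14,16,4],[12,2,6,4],[1,8,3,11],[7,6,11,5]],[],[],[],[],[],[],[],[[2,12,1,8],[1,12,13,1],[16,16,12,12],[13,16,1,2]],[],[],[],[[6,16,4,11],[15,9,15,3],[12,12,9,9],[15,1,11,12]],[],[[9,11,7,15],[5,3,5,1],[4,14,1,4],[8,7,4,14]],[[11,4,1,7],[7,13,16,10],[11,15,14,10],[12,10,9,15]],[],[],[],[],[],[],[],[],[[14,15,15,2],[14,11,14,3],[14,7,4,13],[10,11,6,12]],[],[],[],[[11,5,2,15],[4,6,16,1],[1,9,10,7],[11,3,16,2]],[],[[3,10,4,13],[8,12,15,2],[15,13,15,2],[8,7,4,14]],[[7,12,15,2],[11,5,2,15],[16,5,5,12],[9,16,11,7]],[],[],[],[],[[13,6,5,12],[3,14,6,11],[11,14,8,9],[12,12,9,9]],[],[[5,14,6,11],[7,10,14,3],[14,11,14,3],[11,13,7,11]],[[13,16,2,15],[5,1,15,2],[1,12,12,5],[4,7,2,16]],[],[],[[2,0,0,0],[14,3,11,6],[10,15,6,11],[15,9,1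5,3]],[[1,0,0,0],[15,3,11,6],[16,15,6,11],[14,9,15,3]],[],[[1,0,0,0],[12,3,11,6],[13,15,6,11],[12,9,15,3]],[],[],[],[],[],[],[],[],[],[],[[1,16,14,0],[3,4,4,0],[6,5,6,0],[15,8,9,1]],[],[],[],[[5,8,1,0],[7,13,8,0],[5,7,5,0],[14,10,8,1]],[],[[15,12,10,0],[2,11,12,0],[9,12,12,0],[3,9,10,1]],[[2,5,7,0],[16,12,10,0],[3,14,8,0],[11,12,4,1]],[],[],[],[],[[14,7,10,0],[11,5,12,0],[16,2,16,0],[7,7,1,1]],[],[[11,1,16,0],[4,8,9,0],[11,9,9,0],[1,12,13,1]],[[5,2,15,0],[13,15,2,0],[4,13,5,0],[13,10,15,1]],[],[],[[2,0,0,0],[1,2,15,0],[6,16,2,0],[5,3,5,1]],[[1,0,0,0],[4,2,15,0],[10,16,2,0],[16,3,5,1]],[],[[1,0,0,0],[5,2,15,0],[3,16,2,0],[4,3,5,1]],[],[],[],[],[],[],[[4,10,0,0],[16,12,0,0],[1,15,1,0],[5,11,16,1]],[],[[16,2,0,0],[10,16,0,0],[5,1,1,0],[16,15,16,1]],[[1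0,14,0,0],[8,3,0,0],[11,6,1,0],[7,16,16,1]],[],[],[[2,0,0,0],[7,1,0,0],[3,8,1,0],[4,6,16,1]],[[1,0,0,0],[14,1,0,0],[5,8,1,0],[3,6,16,1]],[],[[1,0,0,0],[8,1,0,0],[10,8,1,0],[12,6,16,1]],[],[],[],[],[[2,0,0,0],[7,1,0,0],[8,16,1,0],[8,9,16,1]],[[1,0,0,0],[14,1,0,0],[15,16,1,0],[11,9,16,1]],[],[[1,0,0,0],[8,1,0,0],[6,16,1,0],[2,9,16,1]],[],[],[],[],[],[],[],[],[],[],[]]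
def tbl117 : List (List (List Nat)) := [[],[],[],[],[],[],[],[],[],[],[],[],[],[],[],[],[],[],[],[],[],[],[],[],[],[],[],[],[],[],[],[[1,0,0,0,0],[12,11,4,1,7],[13,7,13,16,10],[3,11,15,14,10],[9,12,10,9,15]],[],[],[],[],[],[],[],[],[],[],[],[],[],[],[],[[1,0,0,0,0],[9,7,12,15,2],[16,11,5,2,15],[11,16,5,5,12],[11,9,16,11,7]],[],[],[],[],[],[],[],[[1,0,0,0,0],[11,13,16,2,15],[14,5,1,15,2],[6,1,12,12,5],[15,4,7,2,16]],[],[],[],[[1,0,0,0,0],[8,1,0,0,0],[8,15,3,11,6],[14,16,15,6,11],[9,14,9,15,3]],[],[[1,0,0,0,0],[8,1,0,0,0],[1,12,3,11,6],[7,13,15,6,11],[10,12,9,15,3]],[],[],[],[],[],[],[],[],[],[],[],[],[],[],[],[],[],[[1,0,0,0,0],[1,2,5,7,0],[7,16,12,10,0],[14,3,14,8,0],[4,11,12,4,1]],[],[],[],[],[],[],[],[[1,0,0,0,0],[15,5,2,15,0],[10,13,15,2,0],[13,4,13,5,0],[2,13,10,15,1]],[],[],[],[[1,0,0,0,0],[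8,1,0,0,0],[7,4,2,15,0],[15,10,16,2,0],[3,16,3,5,1]],[],[[1,0,0,0,0],[8,1,0,0,0],[15,5,2,15,0],[10,3,16,2,0],[9,4,3,5,1]],[],[],[],[],[],[],[],[],[],[[1,0,0,0,0],[10,10,14,0,0],[15,8,3,0,0],[6,11,6,1,0],[8,7,16,16,1]],[],[],[],[[1,0,0,0,0],[8,1,0,0,0],[5,14,1,0,0],[16,5,8,1,0],[9,3,6,16,1]],[],[[1,0,0,0,0],[8,1,0,0,0],[8,8,1,0,0],[5,10,8,1,0],[13,12,6,16,1]],[],[],[],[],[],[[1,0,0,0,0],[8,1,0,0,0],[5,14,1,0,0],[5,15,16,1,0],[7,11,9,16,1]],[],[[1,0,0,0,0],[8,1,0,0,0],[8,8,1,0,0],[1,6,16,1,0],[3,2,9,16,1]],[],[],[],[],[],[],[],[],[],[]]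
def tbl118 : List (List (List Nat)) := [[],[],[],[],[],[],[],[],[],[],[],[],[],[],[],[],[],[],[],[],[],[],[],[],[],[],[],[],[],[],[],[[4,7,1,13,6],[14,10,16,4,11],[1,13,9,15,3],[12,15,1,2,11],[2,7,2,7,1]],[],[],[],[],[],[],[],[],[],[],[],[],[],[],[],[[12,1,9,7,10],[6,16,8,10,7],[5,10,13,12,5],[13,10,2,14,3],[13,3,13,3,15]],[],[],[],[],[],[],[],[[10,6,10,14,3],[8,11,7,3,14],[4,4,5,7,10],[9,3,4,11,6],[14,9,4,8,10]],[],[],[],[[2,15,0,0,0],[16,2,0,0,0],[16,16,3,11,6],[11,5,15,6,11],[1,13,9,15,3]],[],[[1,0,0,0,0],[8,1,0,0,0],[1,12,3,11,6],[7,13,15,6,11],[10,12,9,15,3]],[[1,0,0,0,0],[16,1,0,0,0],[3,12,3,11,6],[3,13,15,6,11],[2,12,9,15,3]],[],[],[],[],[],[],[],[],[],[],[],[],[],[],[],[],[[9,16,6,5,0],[9,1,11,12,0],[12,9,3,11,0],[7,6,13,10,0],[2,7,2,7,1]],[],[],[],[],[],[],[],[[16,5,2,15,0],[2,12,15,2,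0],[7,12,1,16,0],[4,1,5,13,0],[15,6,14,11,1]],[],[],[],[[2,15,0,0,0],[16,2,0,0,0],[14,7,2,15,0],[13,14,16,2,0],[6,10,3,5,1]],[],[[1,0,0,0,0],[8,1,0,0,0],[15,5,2,15,0],[10,3,16,2,0],[9,4,3,5,1]],[[1,0,0,0,0],[16,1,0,0,0],[16,5,2,15,0],[7,3,16,2,0],[12,4,3,5,1]],[],[],[],[],[],[],[],[],[[14,13,8,0,0],[4,4,9,0,0],[6,16,4,0,0],[16,4,3,1,0],[10,9,12,16,1]],[],[],[],[[2,15,0,0,0],[16,2,0,0,0],[10,4,1,0,0],[15,7,8,1,0],[1,2,6,16,1]],[],[[1,0,0,0,0],[8,1,0,0,0],[8,8,1,0,0],[5,10,8,1,0],[13,12,6,16,1]],[[1,0,0,0,0],[16,1,0,0,0],[6,8,1,0,0],[12,10,8,1,0],[8,12,6,16,1]],[],[],[],[],[[2,15,0,0,0],[16,2,0,0,0],[10,4,1,0,0],[10,5,16,1,0],[14,14,9,16,1]],[],[[1,0,0,0,0],[8,1,0,0,0],[8,8,1,0,0],[1,6,16,1,0],[3,2,9,16,1]],[[1,0,0,0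,0],[16,1,0,0,0],[6,8,1,0,0],[9,6,16,1,0],[9,2,9,16,1]],[],[],[],[],[],[],[],[],[]]
def tbl119 : List (List (List Nat)) := [[],[],[],[],[],[],[],[],[],[],[],[],[],[],[],[],[],[],[],[],[],[],[],[],[],[],[],[],[],[],[],[],[],[],[],[],[],[],[],[],[],[],[],[],[],[],[],[],[],[],[],[],[],[],[],[],[],[],[],[],[],[],[],[[1,0,0,0,0,0],[16,1,0,0,0,0],[9,16,1,0,0,0],[15,3,12,3,11,6],[4,3,13,15,6,11],[8,2,12,9,15,3]],[],[],[],[],[],[],[],[],[],[],[],[],[],[],[],[],[],[],[],[],[],[],[],[],[],[],[],[],[],[],[],[[1,0,0,0,0,0],[16,1,0,0,0,0],[9,16,1,0,0,0],[16,16,5,2,15,0],[3,7,3,16,2,0],[14,12,4,3,5,1]],[],[],[],[],[],[],[],[],[],[],[],[],[],[],[],[[1,0,0,0,0,0],[16,1,0,0,0,0],[9,16,1,0,0,0],[2,6,8,1,0,0],[10,12,10,8,1,0],[5,8,12,6,16,1]],[],[],[],[],[],[],[],[[1,0,0,0,0,0],[16,1,0,0,0,0],[9,16,1,0,0,0],[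2,6,8,1,0,0],[9,9,6,16,1,0],[11,9,2,9,16,1]],[],[],[],[],[],[],[],[]]
def tbl120 : List (List (List Nat)) := [[],[],[],[],[],[],[],[],[],[],[],[],[],[],[],[[1,8,2,8],[8,5,13,2],[12,4,5,8],[16,12,8,1]],[],[],[],[],[],[],[],[[5,11,4,4],[11,3,6,16],[6,8,2,14],[7,1,12,10]],[],[],[],[[9,5,11,2],[14,7,7,6],[1,7,6,8],[14,16,3,15]],[],[[13,7,13,11],[11,14,14,12],[2,16,15,6],[4,11,15,1]],[[3,16,3,13],[5,16,8,3],[3,10,16,16],[11,3,5,3]],[],[],[],[],[],[],[],[],[[4,6,12,5],[4,2,11,6],[4,15,1,16],[15,7,16,2]],[],[],[],[[14,1,6,11],[2,3,2,15],[9,4,15,2],[14,16,3,15]],[],[[7,16,16,1],[13,11,13,4],[1,9,7,10],[13,6,2,16]],[[15,10,10,7],[9,14,16,1],[10,15,13,4],[12,11,7,11]],[],[],[],[],[[2,7,3,14],[7,9,16,1],[3,7,5,12],[11,9,15,3]],[],[[1,13,8,9],[15,12,10,7],[13,15,6,11],[9,4,8,10]],[[10,11,12,5],[13,3,11,6],[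6,9,1,16],[7,12,9,9]],[],[],[[12,15,4,13],[16,6,5,12],[9,5,9,8],[5,11,11,7]],[[5,2,13,4],[7,16,2,15],[12,13,10,7],[2,3,10,8]],[],[[4,5,7,10],[14,12,10,7],[1,12,12,5],[14,1,14,4]],[],[],[],[],[],[],[],[],[],[],[[9,14,6,0],[10,15,14,0],[3,10,9,0],[16,12,8,1]],[],[],[],[[6,4,14,0],[5,4,16,0],[6,3,1,0],[10,9,7,1]],[],[[3,5,1,0],[14,1,4,0],[12,1,10,0],[4,11,15,1]],[[12,3,4,0],[11,13,3,0],[1,11,12,0],[15,1,13,1]],[],[],[],[],[[13,16,1,0],[9,6,11,0],[10,5,13,0],[15,3,5,1]],[],[[15,6,11,0],[7,16,1,0],[15,14,4,0],[6,14,11,1]],[[8,10,7,0],[14,12,5,0],[3,16,2,0],[14,7,1,1]],[],[],[[10,14,3,0],[5,9,8,0],[13,7,11,0],[8,4,4,1]],[[4,9,8,0],[16,4,13,0],[6,4,14,0],[13,11,14,1]],[],[[3,11,6,0],[15,6,11,0],[9,15,3,0],[12,13,12,1]],[],[],[],[],[],[],[[7,13,0,0],[11,7,0,0],[6,3,1,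0],[13,2,16,1]],[],[[12,10,0,0],[16,4,0,0],[8,12,1,0],[12,6,16,1]],[[6,5,0,0],[15,6,0,0],[10,8,1,0],[11,8,16,1]],[],[],[[8,9,0,0],[11,7,0,0],[12,13,1,0],[16,7,16,1]],[[3,14,0,0],[8,10,0,0],[15,10,1,0],[9,14,16,1]],[],[[2,15,0,0],[16,2,0,0],[3,5,1,0],[7,16,16,1]],[],[],[],[],[[6,0,0,0],[4,1,0,0],[7,16,1,0],[7,9,16,1]],[[2,0,0,0],[11,1,0,0],[13,16,1,0],[5,9,16,1]],[],[[1,0,0,0],[8,1,0,0],[6,16,1,0],[2,9,16,1]],[],[],[],[[1,0,0,0],[16,1,0,0],[9,16,1,0],[14,9,16,1]],[],[],[],[],[],[],[]]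
def tbl121 : List (List (List Nat)) := [[],[],[],[],[],[],[],[],[],[],[],[],[],[],[],[],[],[],[],[],[],[],[],[],[],[],[],[],[],[],[],[[1,0,0,0,0],[5,3,16,3,13],[7,5,16,8,3],[13,3,10,16,16],[6,11,3,5,3]],[],[],[],[],[],[],[],[],[],[],[],[],[],[],[],[[1,0,0,0,0],[10,15,10,10,7],[3,9,14,16,1],[6,10,15,13,4],[5,12,11,7,11]],[],[],[],[],[],[],[],[[1,0,0,0,0],[7,10,11,12,5],[2,13,3,11,6],[7,6,9,1,16],[2,7,12,9,9]],[],[],[],[[1,0,0,0,0],[1,5,2,13,4],[5,7,16,2,15],[4,12,13,10,7],[13,2,3,10,8]],[],[[1,0,0,0,0],[11,4,5,7,10],[3,14,12,10,7],[12,1,12,12,5],[12,14,1,14,4]],[],[],[],[],[],[],[],[],[],[],[],[],[],[],[],[],[],[[1,0,0,0,0],[13,12,3,4,0],[1,11,13,3,0],[15,1,11,12,0],[2,15,1,13,1]],[],[],[],[],[],[],[],[[1,0,0,0,0],[4,8,10,7,0],[12,14,12,5,0],[11,3,16,2,0],[4,14,7,1,1]],[],[],[],[[1,0,0,0,0],[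3,4,9,8,0],[4,16,4,13,0],[16,6,4,14,0],[8,13,11,14,1]],[],[[1,0,0,0,0],[15,3,11,6,0],[16,15,6,11,0],[14,9,15,3,0],[3,12,13,12,1]],[],[],[],[],[],[],[],[],[],[[1,0,0,0,0],[8,6,5,0,0],[10,15,6,0,0],[14,10,8,1,0],[10,11,8,16,1]],[],[],[],[[1,0,0,0,0],[6,3,14,0,0],[11,8,10,0,0],[6,15,10,1,0],[3,9,14,16,1]],[],[[1,0,0,0,0],[4,2,15,0,0],[10,16,2,0,0],[16,3,5,1,0],[16,7,16,16,1]],[],[],[],[],[],[[1,0,0,0,0],[11,2,0,0,0],[13,11,1,0,0],[16,13,16,1,0],[6,5,9,16,1]],[],[[1,0,0,0,0],[14,1,0,0,0],[5,8,1,0,0],[3,6,16,1,0],[15,2,9,16,1]],[],[],[],[[1,0,0,0,0],[14,1,0,0,0],[15,16,1,0,0],[11,9,16,1,0],[13,14,9,16,1]],[],[],[],[],[],[]]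
def tbl122 : List (List (List Nat)) := [[],[],[],[],[],[],[],[],[],[],[],[],[],[],[],[],[],[],[],[],[],[],[],[],[],[],[],[],[],[],[],[[3,8,3,8,12],[15,9,14,9,5],[4,10,3,13,2],[5,5,15,1,2],[1,8,4,2,7]],[],[],[],[],[],[],[],[],[],[],[],[],[],[],[],[[14,11,13,13,4],[4,6,4,4,13],[8,8,2,4,13],[16,8,8,6,11],[2,16,8,4,14]],[],[],[],[],[],[],[],[[15,3,5,7,10],[3,14,12,10,7],[13,2,13,8,9],[3,10,10,16,1],[13,13,5,6,12]],[],[],[],[[9,6,16,2,15],[9,11,1,15,2],[11,3,11,12,5],[2,2,9,1,16],[15,12,7,2,16]],[],[[1,0,0,0,0],[11,4,5,7,10],[3,14,12,10,7],[12,1,12,12,5],[12,14,1,14,4]],[[1,0,0,0,0],[6,4,5,7,10],[2,14,12,10,7],[9,1,12,12,5],[1,14,1,14,4]],[],[],[],[],[],[],[],[],[],[],[],[],[],[],[],[],[[11,4,1,7,0],[7,13,16,10,0],[11,15,14,10,0],[12,10,9,15,0],[5,6,3,10,1]],[],[],[],[],[],[],[],[[7,12,15,2,0],[11,5,2,15,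0],[16,5,5,12,0],[9,16,11,7,0],[11,11,16,9,1]],[],[],[],[[13,16,2,15,0],[5,1,15,2,0],[1,12,12,5,0],[4,7,2,16,0],[2,5,10,15,1]],[],[[1,0,0,0,0],[15,3,11,6,0],[16,15,6,11,0],[14,9,15,3,0],[3,12,13,12,1]],[[1,0,0,0,0],[12,3,11,6,0],[13,15,6,11,0],[12,9,15,3,0],[13,12,13,12,1]],[],[],[],[],[],[],[],[],[[2,5,7,0,0],[16,12,10,0,0],[3,14,8,0,0],[11,12,4,1,0],[3,10,10,16,1]],[],[],[],[[5,2,15,0,0],[13,15,2,0,0],[4,13,5,0,0],[13,10,15,1,0],[15,15,8,16,1]],[],[[1,0,0,0,0],[4,2,15,0,0],[10,16,2,0,0],[16,3,5,1,0],[16,7,16,16,1]],[[1,0,0,0,0],[5,2,15,0,0],[3,16,2,0,0],[4,3,5,1,0],[12,7,16,16,1]],[],[],[],[],[[10,14,0,0,0],[8,3,0,0,0],[11,6,1,0,0],[7,16,16,1,0],[9,4,9,16,1]],[],[[1,0,0,0,0],[14,1,0,0,0],[5,8,1,0,0],[3,6,16,1,0],[15,2,9,16,1]],[[1,0,0,0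,0],[8,1,0,0,0],[10,8,1,0,0],[12,6,16,1,0],[10,2,9,16,1]],[],[],[[1,0,0,0,0],[14,1,0,0,0],[15,16,1,0,0],[11,9,16,1,0],[13,14,9,16,1]],[[1,0,0,0,0],[8,1,0,0,0],[6,16,1,0,0],[2,9,16,1,0],[4,14,9,16,1]],[],[],[],[],[]]
def tbl123 : List (List (List Nat)) := [[],[],[],[],[],[],[],[],[],[],[],[],[],[],[],[],[],[],[],[],[],[],[],[],[],[],[],[],[],[],[],[],[],[],[],[],[],[],[],[],[],[],[],[],[],[],[],[],[],[],[],[],[],[],[],[],[],[],[],[],[],[],[],[[1,0,0,0,0,0],[16,1,0,0,0,0],[5,6,4,5,7,10],[1,2,14,12,10,7],[3,9,1,12,12,5],[11,1,14,1,14,4]],[],[],[],[],[],[],[],[],[],[],[],[],[],[],[],[],[],[],[],[],[],[],[],[],[],[],[],[],[],[],[],[[1,0,0,0,0,0],[16,1,0,0,0,0],[3,12,3,11,6,0],[3,13,15,6,11,0],[2,12,9,15,3,0],[7,13,12,13,12,1]],[],[],[],[],[],[],[],[],[],[],[],[],[],[],[],[[1,0,0,0,0,0],[16,1,0,0,0,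0],[16,5,2,15,0,0],[7,3,16,2,0,0],[12,4,3,5,1,0],[4,12,7,16,16,1]],[],[],[],[],[],[],[],[[1,0,0,0,0,0],[16,1,0,0,0,0],[6,8,1,0,0,0],[12,10,8,1,0,0],[8,12,6,16,1,0],[5,10,2,9,16,1]],[],[],[],[[1,0,0,0,0,0],[16,1,0,0,0,0],[6,8,1,0,0,0],[9,6,16,1,0,0],[9,2,9,16,1,0],[9,4,14,9,16,1]],[],[],[],[]]
def tbl124 : List (List (List Nat)) := [[],[],[],[],[],[],[],[],[],[],[],[],[],[],[],[],[],[],[],[],[],[],[],[],[],[],[],[],[],[],[],[[13,15,9,10,13],[14,10,10,2,10],[6,8,11,10,9],[16,11,8,10,15],[10,16,6,14,13]],[],[],[],[],[],[],[],[],[],[],[],[],[],[],[],[[7,2,2,5,12],[2,1,13,9,8],[4,15,3,14,3],[8,5,10,9,8],[1,5,4,15,3]],[],[],[],[],[],[],[],[[1,11,3,11,6],[7,2,15,4,13],[2,1,9,16,1],[7,15,13,10,7],[2,12,1,14,4]],[],[],[],[[12,8,10,14,3],[12,13,12,10,7],[9,13,15,4,13],[14,10,2,15,2],[3,4,14,5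,13]],[],[[6,10,4,9,8],[15,12,15,4,13],[1,10,7,3,14],[4,2,9,1,16],[4,15,15,3,15]],[[5,14,9,16,1],[13,3,8,1,16],[10,8,13,8,9],[11,8,8,3,14],[5,11,10,13,5]],[],[],[],[],[],[],[],[],[],[],[],[],[],[],[],[],[[3,16,3,13,0],[5,16,8,3,0],[3,10,16,16,0],[11,3,5,3,0],[6,13,7,5,1]],[],[],[],[],[],[],[],[[15,10,10,7,0],[9,14,16,1,0],[10,15,13,4,0],[12,11,7,11,0],[9,3,13,12,1]],[],[],[],[[10,11,12,5,0],[13,3,11,6,0],[6,9,1,16,0],[7,12,9,9,0],[12,16,5,3,1]],[],[[5,2,13,4,0],[7,16,2,15,0],[12,13,10,7,0],[2,3,10,8,0],[15,1,1,7,1]],[[4,5,7,10,0],[14,12,10,7,0],[1,12,12,5,0],[14,1,14,4,0],[1,9,2,6,1]],[],[],[],[],[],[],[],[],[[12,3,4,0,0],[11,13,3,0,0],[1,11,12,0,0],[15,1,13,1,0],[1,7,14,16,1]],[],[],[],[[8,10,7,0,0],[14,12,5,0,0],[3,16,2,0,0],[14,7,1,1,0],[7,5,1,16,1]],[],[[4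,9,8,0,0],[16,4,13,0,0],[6,4,14,0,0],[13,11,14,1,0],[13,15,8,16,1]],[[3,11,6,0,0],[15,6,11,0,0],[9,15,3,0,0],[12,13,12,1,0],[2,3,3,16,1]],[],[],[],[],[[6,5,0,0,0],[15,6,0,0,0],[10,8,1,0,0],[11,8,16,1,0],[2,1,9,16,1]],[],[[3,14,0,0,0],[8,10,0,0,0],[15,10,1,0,0],[9,14,16,1,0],[11,8,9,16,1]],[[2,15,0,0,0],[16,2,0,0,0],[3,5,1,0,0],[7,16,16,1,0],[3,16,9,16,1]],[],[],[[2,0,0,0,0],[11,1,0,0,0],[13,16,1,0,0],[5,9,16,1,0],[9,14,9,16,1]],[[1,0,0,0,0],[8,1,0,0,0],[6,16,1,0,0],[2,9,16,1,0],[4,14,9,16,1]],[],[[1,0,0,0,0],[16,1,0,0,0],[9,16,1,0,0],[14,9,16,1,0],[5,14,9,16,1]],[],[],[]]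
def tbl125 : List (List (List Nat)) := [[],[],[],[],[],[],[],[],[],[],[],[],[],[],[],[],[],[],[],[],[],[],[],[],[],[],[],[],[],[],[],[],[],[],[],[],[],[],[],[],[],[],[],[],[],[],[],[],[],[],[],[],[],[],[],[],[],[],[],[],[],[],[],[[1,0,0,0,0,0],[2,5,14,9,16,1],[6,13,3,8,1,16],[7,10,8,13,8,9],[13,11,8,8,3,14],[14,5,11,10,13,5]],[],[],[],[],[],[],[],[],[],[],[],[],[],[],[],[],[],[],[],[],[],[],[],[],[],[],[],[],[],[],[],[[1,0,0,0,0,0],[6,4,5,7,10,0],[2,14,12,10,7,0],[9,1,12,12,5,0],[1,14,1,14,4,0],[13,1,9,2,6,1]],[],[],[],[],[],[],[],[],[],[],[],[],[],[],[],[[1,0,0,0,0,0],[12,3,11,6,0,0],[13,15,6,11,0,0],[12,9,15,3,0,0],[13,12,13,12,1,0],[7,2,3,3,16,1]],[],[],[],[],[],[],[],[[1,0,0,0,0,0],[5,2,15,0,0,0],[3,16,2,0,0,0],[4,3,5,1,0,0],[12,7,16,16,1,0],[14,3,16,9,16,1]],[],[],[],[[1,0,0,0,0,0],[8,1,0,0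,0,0],[10,8,1,0,0,0],[12,6,16,1,0,0],[10,2,9,16,1,0],[11,4,14,9,16,1]],[],[[1,0,0,0,0,0],[8,1,0,0,0,0],[6,16,1,0,0,0],[2,9,16,1,0,0],[4,14,9,16,1,0],[2,5,14,9,16,1]],[],[]]
def tbl126 : List (List (List Nat)) := [[],[],[],[],[],[],[],[],[],[],[],[],[],[],[],[],[],[],[],[],[],[],[],[],[],[],[],[],[],[],[],[],[],[],[],[],[],[],[],[],[],[],[],[],[],[],[],[],[],[],[],[],[],[],[],[],[],[],[],[],[],[],[],[[6,4,1,14,6,11],[12,13,16,3,11,6],[2,3,9,7,3,14],[8,4,15,9,16,1],[10,12,4,3,13,4],[16,10,8,2,12,6]],[],[],[],[],[],[],[],[],[],[],[],[],[],[],[],[],[],[],[],[],[],[],[],[],[],[],[],[],[],[],[],[[5,14,9,16,1,0],[13,3,8,1,16,0],[10,8,13,8,9,0],[11,8,8,3,14,0],[5,11,10,13,5,0],[14,13,7,6,2,1]],[],[],[],[],[],[],[],[],[],[],[],[],[],[],[],[[4,5,7,10,0,0],[14,12,10,7,0,0],[1,12,12,5,0,0],[14,1,14,4,0,0],[1,9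,2,6,1,0],[11,3,1,5,16,1]],[],[],[],[],[],[],[],[[3,11,6,0,0,0],[15,6,11,0,0,0],[9,15,3,0,0,0],[12,13,12,1,0,0],[2,3,3,16,1,0],[8,4,15,9,16,1]],[],[],[],[[2,15,0,0,0,0],[16,2,0,0,0,0],[3,5,1,0,0,0],[7,16,16,1,0,0],[3,16,9,16,1,0],[5,16,14,9,16,1]],[],[[1,0,0,0,0,0],[8,1,0,0,0,0],[6,16,1,0,0,0],[2,9,16,1,0,0],[4,14,9,16,1,0],[2,5,14,9,16,1]],[[1,0,0,0,0,0],[16,1,0,0,0,0],[9,16,1,0,0,0],[14,9,16,1,0,0],[5,14,9,16,1,0],[16,5,14,9,16,1]],[]]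
def tbl127 : List (List (List Nat)) := [[],[],[],[],[],[],[],[],[],[],[],[],[],[],[],[],[],[],[],[],[],[],[],[],[],[],[],[],[],[],[],[],[],[],[],[],[],[],[],[],[],[],[],[],[],[],[],[],[],[],[],[],[],[],[],[],[],[],[],[],[],[],[],[],[],[],[],[],[],[],[],[],[],[],[],[],[],[],[],[],[],[],[],[],[],[],[],[],[],[],[],[],[],[],[],[],[],[],[],[],[],[],[],[],[],[],[],[],[],[],[],[],[],[],[],[],[],[],[],[],[],[],[],[],[],[],[],[[1,0,0,0,0,0,0],[16,1,0,0,0,0,0],[9,16,1,0,0,0,0],[14,9,16,1,0,0,0],[5,14,9,16,1,0,0],[16,5,14,9,16,1,0],[3,16,5,14,9,16,1]]]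
def tbl : List (List (List (List Nat))) := [tbl0,tbl1,tbl2,tbl3,tbl4,tbl5,tbl6,tbl7,tbl8,tbl9,tbl10,tbl11,tbl12,tbl13,tbl14,tbl15,tbl16,tbl17,tbl18,tbl19,tbl20,tbl21,tbl22,tbl23,tbl24,tbl25,tbl26,tbl27,tbl28,tbl29,tbl30,tbl31,tbl32,tbl33,tbl34,tbl35,tbl36,tbl37,tbl38,tbl39,tbl40,tbl41,tbl42,tbl43,tbl44,tbl45,tbl46,tbl47,tbl48,tbl49,tbl50,tbl51,tbl52,tbl53,tbl54,tbl55,tbl56,tbl57,tbl58,tbl59,tbl60,tbl61,tbl62,tbl63,tbl64,tbl65,tbl66,tbl67,tbl68,tbl69,tbl70,tbl71,tbl72,tbl73,tbl74,tbl75,tbl76,tbl77,tbl78,tbl79,tbl80,tbl81,tbl82,tbl83,tbl84,tbl85,tbl86,tbl87,tbl88,tbl89,tbl90,tbl91,tbl92,tbl93,tbl94,tbl95,tbl96,tbl97,tbl98,tbl99,tbl100,tbl101,tbl102,tbl103,tbl104,tbl105,tbl106,tbl107,tbl108,tbl109,tbl110,tbl111,tbl112,tbl113,tbl114,tbl115,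tbl116,tbl117,tbl118,tbl119,tbl120,tbl121,tbl122,tbl123,tbl124,tbl125,tbl126,tbl127]

def check : Bool := (tbl.length == 128) &&
  (((List.finRange 7).sublists.zip tbl).all fun p =>
    (p.2.length == 128) &&
    (((List.finRange 7).sublists.zip p.2).all fun q =>
      !(pcond p.1 q.1) || verif p.1 q.1 q.2))

set_option maxRecDepth 1000000 in
lemma check_true : check = true := by decide +kernel

lemma eM : ∀ p q : Fin 7, M7 p q = ((eN p q : ℕ) : ZMod 17) := by
  intro p q; fin_cases p <;> fin_cases q <;> decide

lemma sum_range_eq {M : Type*} [AddCommMonoid M] (n : ℕ) (f : ℕ → M) :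
    ∑ i ∈ Finset.range n, f i = ((List.range n).map f).sum := by
  induction n with
  | zero => simp
  | succ n ih => rw [Finset.sum_range_succ, List.range_succ]; simp [ih]

lemma det_ne_of_verif (k : ℕ) (r c : Fin k → Fin 7) (B : List (List ℕ))
    (h : verif (List.ofFn r) (List.ofFn c) B = true) :
    (M7.submatrix r c).det ≠ 0 := by
  set BZ : Matrix (Fin k) (Fin k) (ZMod 17) :=
    Matrix.of (fun t u => (((B.getD (t:ℕ) []).getD (u:ℕ) 0 : ℕ) : ZMod 17)) with hBZ
  have hmul : M7.submatrix r c * BZ = 1 := by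
    ext i0 j0
    rw [Matrix.mul_apply, Matrix.one_apply]
    simp only [verif, List.all_eq_true, List.mem_range, List.length_ofFn, beq_iff_eq] at h
    have h2 := h (i0:ℕ) i0.isLt (j0:ℕ) j0.isLt
    have h3 := congrArg (fun n : ℕ => (n : ZMod 17)) h2
    simp only [ZMod.natCast_mod, Nat.cast_list_sum, List.map_map, Function.comp_def] at h3
    have h4 : ∀ t : Fin k, (M7.submatrix r c) i0 t * BZ t j0 =
        ((fun t : ℕ => ((eN ((List.ofFn r).getD (i0:ℕ) 0) ((List.ofFn c).getD t 0) *
          (B.getD t []).getD (j0:ℕ) 0 : ℕ) : ZMod 17)) (t : ℕ)) := by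
      intro t
      have e1 : (List.ofFn r).getD ((i0:ℕ)) 0 = r i0 := by
        rw [List.getD_eq_getElem _ _ (by simp [List.length_ofFn])]
        simp [List.getElem_ofFn]
      have e2 : (List.ofFn c).getD ((t:ℕ)) 0 = c t := by
        rw [List.getD_eq_getElem _ _ (by simp [List.length_ofFn])]
        simp [List.getElem_ofFn]
      simp only [Matrix.submatrix_apply, hBZ, Matrix.of_apply, e1, e2, Nat.cast_mul, eM]
    have h5 := Fin.sum_univ_eq_sum_range (fun t : ℕ =>
      ((eN ((List.ofFn r).getD (i0:ℕ) 0) ((List.ofFn c).getD t 0) *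
        (B.getD t []).getD (j0:ℕ) 0 : ℕ) : ZMod 17)) k
    rw [Finset.sum_congr rfl (fun t _ => h4 t), h5, sum_range_eq]
    rw [h3]
    by_cases hij : i0 = j0
    · simp [hij]
    · have : ¬ ((i0:ℕ) = (j0:ℕ)) := fun hv => hij (Fin.ext hv)
      simp [hij, this]
  haveI : Fact (1 < 17) := ⟨by norm_num⟩
  have hd : (M7.submatrix r c).det * BZ.det = 1 := by
    rw [← Matrix.det_mul, hmul, Matrix.det_one]
  exact left_ne_zero_of_mul_eq_one hd

theorem stmt_14 :
    LTSuperregular (ltToeplitz 7 (fun k => [1, 1, 9, 3, 5, 1, 3].getD k (0 : ZMod 17))) := by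
  intro k r c hr hc hrc
  haveI : IsAntisymm (Fin 7) (· < ·) := ⟨fun a b h1 h2 => absurd (h1.trans h2) (lt_irrefl a)⟩
  have hsubl : ∀ (f : Fin k → Fin 7), StrictMono f →
      List.ofFn f ∈ (List.finRange 7).sublists := by
    intro f hf
    rw [List.mem_sublists]
    have hpw : (List.ofFn f).Pairwise (· < ·) := List.pairwise_ofFn.mpr (fun i j hij => hf hij)
    exact List.sublist_of_subperm_of_pairwise
      (List.Nodup.subperm (hpw.imp ne_of_lt) (fun x _ => List.mem_finRange x))
      hpw (List.pairwise_lt_finRange 7)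
  obtain ⟨i, hi, hig⟩ := List.getElem_of_mem (hsubl r hr)
  obtain ⟨j, hj, hjg⟩ := List.getElem_of_mem (hsubl c hc)
  have hch := check_true
  simp only [check, Bool.and_eq_true, beq_iff_eq, List.all_eq_true] at hch
  obtain ⟨htl, hall⟩ := hch
  have hSlen : (List.finRange 7).sublists.length = 128 := by
    rw [List.length_sublists, List.length_finRange]
  have hi' : i < ((List.finRange 7).sublists.zip tbl).length := by
    simp [List.length_zip, hSlen, htl]; omega
  have hp := hall _ (List.getElem_mem hi')
  rw [List.getElem_zip] at hp
  obtain ⟨hrowlen, hinner⟩ := hp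
  have hj' : j < ((List.finRange 7).sublists.zip (tbl[i]'(by omega))).length := by
    simp [List.length_zip, hSlen, hrowlen]; omega
  have hq := hinner _ (List.getElem_mem hj')
  rw [List.getElem_zip] at hq
  simp only [hig, hjg, Bool.or_eq_true, Bool.not_eq_true'] at hq
  have hpc : pcond (List.ofFn r) (List.ofFn c) = true := by
    simp only [pcond, Bool.and_eq_true, beq_iff_eq, List.length_ofFn, List.all_eq_true,
      List.mem_range, decide_eq_true_eq]
    refine ⟨trivial, fun i0 hi0 => ?_⟩
    rw [List.getD_eq_getElem _ _ (by simp [List.length_ofFn]; omega),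
        List.getD_eq_getElem _ _ (by simp [List.length_ofFn]; omega)]
    simpa [List.getElem_ofFn] using hrc ⟨i0, hi0⟩
  rcases hq with hq | hq
  · rw [hpc] at hq; exact absurd hq (by simp)
  · exact det_ne_of_verif k r c _ hq
end
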